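/- arXiv:math/0610193 — 6 statements merged into one kernel-verified Lean document; each statement's English description precedes it below -/
import Mathlib

section
/- Let n and k be positive integers with k + m ≤ n, let (k_1, k_2, ..., k_m) be a partition of k into m positive parts, and let p_1, p_2, ..., p_m be pairwise vertex-disjoint paths in the complete graph K_n having k_1, ..., k_m edges respectively. Then the number of Hamiltonian cycles of K_n that contain all of the paths p_1, ..., p_m equals 2^{m-1} · (n - k - 1)!. -/
open Finset
noncomputable section
open scoped Classical
set_option maxHeartbeats 1000000

abbrev EdgeIdx (n : ℕ) := {e : Sym2 (Fin n) // ¬ e.IsDiag}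

def cycleVec (n : ℕ) (σ : Equiv.Perm (Fin n)) : EdgeIdx n → ℝ :=
  fun e => if ∃ i : Fin n, (e : Sym2 (Fin n)) = s(σ i, σ (finRotate n i)) then 1 else 0

def hamX (n : ℕ) : Finset (EdgeIdx n → ℝ) := Finset.image (cycleVec n) Finset.univ

def xval {n : ℕ} (x : EdgeIdx n → ℝ) (i j : Fin n) : ℝ :=
  if h : i = j then 0 else x ⟨s(i, j), by simpa [Sym2.isDiag_iff_proj_eq] using h⟩

open scoped Fin.NatCast Fin.IntCast Fin.CommRing

namespace HamCount

variable {n : ℕ}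

lemma finRotate_apply [NeZero n] (i : Fin n) : finRotate n i = i + 1 := by
  cases n with
  | zero => exact i.elim0
  | succ m => exact finRotate_succ_apply i

/-- edge membership predicate -/
def InE [NeZero n] (σ : Equiv.Perm (Fin n)) (e : Sym2 (Fin n)) : Prop :=
  ∃ i : Fin n, e = s(σ i, σ (i + 1))

lemma cycleVec_apply [NeZero n] (σ : Equiv.Perm (Fin n)) (e : EdgeIdx n) :
    cycleVec n σ e = if InE σ (e : Sym2 (Fin n)) then 1 else 0 := by
  simp only [cycleVec, InE, finRotate_apply]
  by_cases h : ∃ i : Fin n, (e : Sym2 (Fin n)) = s(σ i, σ (i + 1))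
  · rw [if_pos h]; exact (if_pos (show InE σ (e : Sym2 (Fin n)) from h)).symm
  · rw [if_neg h]; exact (if_neg (show ¬ InE σ (e : Sym2 (Fin n)) from h)).symm


lemma cycleVec_eq_one_iff [NeZero n] (σ : Equiv.Perm (Fin n)) (e : EdgeIdx n) :
    cycleVec n σ e = 1 ↔ InE σ (e : Sym2 (Fin n)) := by
  rw [cycleVec_apply]
  split <;> simp_all

lemma two_ne_zero_fin [NeZero n] (h3 : 3 ≤ n) : (2 : Fin n) ≠ 0 := by
  have h : ((2 : ℕ) : Fin n) = (2 : Fin n) := by push_cast; ring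
  rw [← h]
  intro hz
  have hdvd := (Fin.natCast_eq_zero).mp hz
  have := Nat.le_of_dvd (by norm_num) hdvd
  omega

lemma one_ne_zero_fin [NeZero n] (h2 : 2 ≤ n) : (1 : Fin n) ≠ 0 := by
  have h : ((1 : ℕ) : Fin n) = (1 : Fin n) := by push_cast; ring
  rw [← h]
  intro hz
  have hdvd := (Fin.natCast_eq_zero).mp hz
  have := Nat.le_of_dvd (by norm_num) hdvd
  omega

lemma perm_step_classify [NeZero n] (h3 : 3 ≤ n) (g : Equiv.Perm (Fin n))
    (hg : ∀ i : Fin n, g (i + 1) = g i + 1 ∨ g (i + 1) = g i - 1) :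
    (∀ i, g i = g 0 + i) ∨ (∀ i, g i = g 0 - i) := by
  have h2 : (2 : Fin n) ≠ 0 := two_ne_zero_fin h3
  have key : ∀ i : Fin n, g (i + 1 + 1) = g i → False := by
    intro i hi
    have e : i + 1 + 1 = i := g.injective hi
    apply h2
    have e2 : i + 2 = i + 0 := by
      rw [add_zero]
      calc i + 2 = i + 1 + 1 := by ring
      _ = i := e
    exact add_left_cancel e2
  have stepP : ∀ i : Fin n, g (i + 1) = g i + 1 → g (i + 1 + 1) = g (i + 1) + 1 := by
    intro i h
    rcases hg (i + 1) with h' | h'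
    · exact h'
    · exfalso; exact key i (by rw [h', h]; ring)
  have stepM : ∀ i : Fin n, g (i + 1) = g i - 1 → g (i + 1 + 1) = g (i + 1) - 1 := by
    intro i h
    rcases hg (i + 1) with h' | h'
    · exfalso; exact key i (by rw [h', h]; ring)
    · exact h'
  rcases hg 0 with h0 | h0
  · left
    have key1 : ∀ j : ℕ, g ((j : Fin n) + 1) = g (j : Fin n) + 1 := by
      intro j
      induction j with
      | zero => simpa using h0
      | succ j ih =>
          have e1 : ((j + 1 : ℕ) : Fin n) = (j : Fin n) + 1 := by push_cast; ring
          rw [e1]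
          exact stepP _ ih
    have key2 : ∀ j : ℕ, g (j : Fin n) = g 0 + (j : Fin n) := by
      intro j
      induction j with
      | zero => simp
      | succ j ih =>
          have e1 : ((j + 1 : ℕ) : Fin n) = (j : Fin n) + 1 := by push_cast; ring
          rw [e1, key1 j, ih]; ring
    intro i
    have := key2 i.val
    rwa [Fin.cast_val_eq_self] at this
  · right
    have key1 : ∀ j : ℕ, g ((j : Fin n) + 1) = g (j : Fin n) - 1 := by
      intro j
      induction j with
      | zero => simpa using h0
      | succ j ih =>
          have e1 : ((j + 1 : ℕ) : Fin n) = (j : Fin n) + 1 := by push_cast; ring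
          rw [e1]
          exact stepM _ ih
    have key2 : ∀ j : ℕ, g (j : Fin n) = g 0 - (j : Fin n) := by
      intro j
      induction j with
      | zero => simp
      | succ j ih =>
          have e1 : ((j + 1 : ℕ) : Fin n) = (j : Fin n) + 1 := by push_cast; ring
          rw [e1, key1 j, ih]; ring
    intro i
    have := key2 i.val
    rwa [Fin.cast_val_eq_self] at this

lemma cycleVec_trans_addLeft [NeZero n] (σ : Equiv.Perm (Fin n)) (a : Fin n) :
    cycleVec n ((Equiv.addLeft a).trans σ) = cycleVec n σ := by
  funext e
  simp only [cycleVec, finRotate_apply, Equiv.trans_apply, Equiv.coe_addLeft]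
  congr 1
  apply propext
  constructor
  · rintro ⟨i, hi⟩
    exact ⟨a + i, by rw [hi]; congr 2 <;> ring⟩
  · rintro ⟨j, hj⟩
    exact ⟨-a + j, by rw [hj]; congr 2 <;> ring⟩

lemma cycleVec_trans_subLeft [NeZero n] (σ : Equiv.Perm (Fin n)) (a : Fin n) :
    cycleVec n ((Equiv.subLeft a).trans σ) = cycleVec n σ := by
  funext e
  simp only [cycleVec, finRotate_apply, Equiv.trans_apply, Equiv.subLeft_apply]
  congr 1
  apply propext
  constructor
  · rintro ⟨i, hi⟩
    refine ⟨a - (i + 1), ?_⟩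
    rw [hi, Sym2.eq_swap]
    congr 2 <;> ring
  · rintro ⟨j, hj⟩
    refine ⟨a - (j + 1), ?_⟩
    rw [hj, Sym2.eq_swap]
    congr 2 <;> ring

lemma InE_iff_of_cycleVec_eq [NeZero n] {σ τ : Equiv.Perm (Fin n)}
    (h : cycleVec n σ = cycleVec n τ) {e : Sym2 (Fin n)} (he : ¬ e.IsDiag) :
    InE σ e ↔ InE τ e := by
  have := congrFun h ⟨e, he⟩
  rw [cycleVec_apply, cycleVec_apply] at this
  by_cases h1 : InE σ e <;> by_cases h2 : InE τ e <;> simp_all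

lemma succ_ne_self_fin [NeZero n] (h2 : 2 ≤ n) (i : Fin n) : i + 1 ≠ i := by
  intro h
  apply one_ne_zero_fin h2
  have : i + 1 = i + 0 := by rw [add_zero]; exact h
  exact add_left_cancel this

lemma not_isDiag_edge [NeZero n] (h2 : 2 ≤ n) (σ : Equiv.Perm (Fin n)) (i : Fin n) :
    ¬ (s(σ i, σ (i + 1)) : Sym2 (Fin n)).IsDiag := by
  rw [Sym2.isDiag_iff_proj_eq]
  intro h
  exact succ_ne_self_fin h2 i (σ.injective h.symm)

lemma exists_dihedral_of_cycleVec_eq [NeZero n] (h3 : 3 ≤ n) {σ τ : Equiv.Perm (Fin n)}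
    (h : cycleVec n σ = cycleVec n τ) :
    (∃ a, τ = (Equiv.addLeft a).trans σ) ∨ (∃ a, τ = (Equiv.subLeft a).trans σ) := by
  have h2 : 2 ≤ n := le_trans (by norm_num) h3
  set g : Equiv.Perm (Fin n) := τ.trans σ.symm with hgdef
  have hgi : ∀ i, σ (g i) = τ i := by intro i; simp [hgdef]
  have hg : ∀ i : Fin n, g (i + 1) = g i + 1 ∨ g (i + 1) = g i - 1 := by
    intro i
    have hmem : InE τ s(τ i, τ (i + 1)) := ⟨i, rfl⟩
    have hnd : ¬ (s(τ i, τ (i+1)) : Sym2 (Fin n)).IsDiag := not_isDiag_edge h2 τ i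
    have hin : InE σ s(τ i, τ (i + 1)) := (InE_iff_of_cycleVec_eq h hnd).mpr hmem
    obtain ⟨j, hj⟩ := hin
    rw [Sym2.eq_iff] at hj
    rcases hj with ⟨ha, hb⟩ | ⟨ha, hb⟩
    · left
      have e1 : g i = j := σ.injective (by rw [hgi]; exact ha)
      have e2 : g (i + 1) = j + 1 := σ.injective (by rw [hgi]; exact hb)
      rw [e1, e2]
    · right
      have e1 : g i = j + 1 := σ.injective (by rw [hgi]; exact ha)
      have e2 : g (i + 1) = j := σ.injective (by rw [hgi]; exact hb)
      rw [e1, e2]; ring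
  rcases perm_step_classify h3 g hg with hc | hc
  · left
    refine ⟨g 0, ?_⟩
    ext i
    simp only [Equiv.trans_apply, Equiv.coe_addLeft]
    rw [← hgi i, hc i]
  · right
    refine ⟨g 0, ?_⟩
    ext i
    simp only [Equiv.trans_apply, Equiv.subLeft_apply]
    rw [← hgi i, hc i]

lemma perm_eq_of_cycleVec_eq [NeZero n] (h3 : 3 ≤ n) {σ τ : Equiv.Perm (Fin n)}
    (h : cycleVec n σ = cycleVec n τ) (h0 : σ 0 = τ 0) (h1 : σ 1 = τ 1) : σ = τ := by
  rcases exists_dihedral_of_cycleVec_eq h3 h with ⟨a, rfl⟩ | ⟨a, rfl⟩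
  · have e0 : σ 0 = σ (a + 0) := h0
    have ha : a = 0 := by
      have := σ.injective e0
      simpa using this.symm
    subst ha
    ext i
    simp
  · have e0 : σ 0 = σ (a - 0) := h0
    have ha : a = 0 := by
      have := σ.injective e0
      simpa using this.symm
    subst ha
    have e1 : σ 1 = σ (0 - 1) := h1
    have h21 : (1 : Fin n) = 0 - 1 := σ.injective e1
    exfalso
    apply two_ne_zero_fin h3
    calc (2 : Fin n) = 1 + 1 := by ring
      _ = (0 - 1) + 1 := by rw [← h21]
      _ = 0 := by ring

section Perm

variable {n : ℕ} {α : Type*}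

lemma pair_infix (M : List α) (p : ℕ) (hp : p + 1 < M.length) :
    [M[p]'(by omega), M[p+1]'hp] <:+: M := by
  refine ⟨M.take p, M.drop (p+2), ?_⟩
  have h1 : M.drop p = M[p]'(by omega) :: M.drop (p+1) :=
    List.drop_eq_getElem_cons (by omega)
  have h2 : M.drop (p+1) = M[p+1]'hp :: M.drop (p+2) :=
    List.drop_eq_getElem_cons (by omega)
  calc M.take p ++ [M[p]'(by omega), M[p+1]'hp] ++ M.drop (p+2)
      = M.take p ++ ([M[p]'(by omega), M[p+1]'hp] ++ M.drop (p+2)) := by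
        rw [List.append_assoc]
    _ = M.take p ++ M.drop p := by rw [h1, h2]; rfl
    _ = M := List.take_append_drop p M

lemma infix_pair_getElem {a b : α} {M : List α} (h : [a, b] <:+: M) :
    ∃ p, ∃ hp : p + 1 < M.length, M[p]'(by omega) = a ∧ M[p+1]'hp = b := by
  obtain ⟨s, t, hst⟩ := h
  subst hst
  rw [List.append_assoc]
  refine ⟨s.length, by simp, ?_, ?_⟩
  · rw [List.getElem_append_right (le_refl s.length)]
    simp
  · rw [List.getElem_append_right (by omega : s.length ≤ s.length + 1)]
    have h1 : s.length + 1 - s.length = 1 := by omega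
    simp [h1]

def permOfList (L : List (Fin n)) (hlen : L.length = n) (hnd : L.Nodup) : Equiv.Perm (Fin n) :=
  Equiv.ofBijective (fun j => L.get (Fin.cast hlen.symm j))
    (Finite.injective_iff_bijective.mp
      (fun a b hab => Fin.cast_injective hlen.symm
        ((List.nodup_iff_injective_get.mp hnd) hab)))

lemma permOfList_apply (L : List (Fin n)) (hlen : L.length = n) (hnd : L.Nodup) (j : Fin n) :
    permOfList L hlen hnd j = L[(j : ℕ)]'(by rw [hlen]; exact j.2) := rfl

lemma fin_mk_add_one [NeZero n] {p : ℕ} (h : p + 1 < n) :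
    (⟨p, by omega⟩ : Fin n) + 1 = ⟨p + 1, h⟩ := by
  have h2 : 2 ≤ n := by omega
  ext
  rw [Fin.val_add, Fin.val_one']
  simp only
  rw [Nat.mod_eq_of_lt (by omega : 1 < n), Nat.mod_eq_of_lt h]

lemma InE_of_consec [NeZero n] {L : List (Fin n)} {hlen : L.length = n} {hnd : L.Nodup}
    {a b : Fin n} {p : ℕ} (hp : p + 1 < L.length)
    (ha : L[p]'(by omega) = a) (hb : L[p+1]'hp = b) :
    HamCount.InE (permOfList L hlen hnd) s(a, b) := by
  have hp' : p + 1 < n := by rw [← hlen]; exact hp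
  refine ⟨⟨p, by omega⟩, ?_⟩
  rw [fin_mk_add_one hp']
  rw [permOfList_apply, permOfList_apply]
  simp only
  rw [ha, hb]

lemma InE_of_infix [NeZero n] {L : List (Fin n)} {hlen : L.length = n} {hnd : L.Nodup}
    {a b : Fin n} (h : [a, b] <:+: L) :
    HamCount.InE (permOfList L hlen hnd) s(a, b) := by
  obtain ⟨p, hp, ha, hb⟩ := infix_pair_getElem h
  exact InE_of_consec hp ha hb

end Perm

section Main

variable {n k m' : ℕ} {ks : Fin (m' + 1) → ℕ}
  {v : (i : Fin (m' + 1)) → Fin (ks i + 1) → Fin n}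

/-- Bundled hypotheses of the theorem (with `n ≥ 3`). -/
structure Ctx (n k : ℕ) {m' : ℕ} (ks : Fin (m' + 1) → ℕ)
    (v : (i : Fin (m' + 1)) → Fin (ks i + 1) → Fin n) : Prop where
  hk : 1 ≤ k
  hks : ∀ i, 1 ≤ ks i
  hsum : ∑ i, ks i = k
  hkm : k + (m' + 1) ≤ n
  hv : Function.Injective (fun p : Σ i : Fin (m' + 1), Fin (ks i + 1) => v p.1 p.2)
  h3 : 3 ≤ n

namespace Ctx

variable (C : Ctx n k ks v)
include C

lemma nz : NeZero n := ⟨by have := C.h3; omega⟩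

lemma hm_le_k : m' + 1 ≤ k := by
  have := C.hsum
  calc m' + 1 = ∑ _i : Fin (m' + 1), 1 := by simp
    _ ≤ ∑ i, ks i := Finset.sum_le_sum (fun i _ => C.hks i)
    _ = k := C.hsum

/-- injectivity of cast arguments -/
lemma vinj {i : Fin (m' + 1)} {t t' : ℕ} (ht : t ≤ ks i) (ht' : t' ≤ ks i)
    (h : v i ↑t = v i ↑t') : t = t' := by
  have h2 := C.hv (a₁ := ⟨i, ↑t⟩) (a₂ := ⟨i, ↑t'⟩) h
  have h3 : ((t : Fin (ks i + 1)) : ℕ) = ((t' : Fin (ks i + 1)) : ℕ) := by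
    injection h2 with h2a h2b
    rw [h2b]
  rwa [Fin.val_natCast, Fin.val_natCast, Nat.mod_eq_of_lt (by omega),
    Nat.mod_eq_of_lt (by omega)] at h3

lemma vne {i i' : Fin (m' + 1)} {t t' : ℕ} (hne : i ≠ i') (h : v i ↑t = v i' ↑t') : False := by
  have h2 := C.hv (a₁ := ⟨i, ↑t⟩) (a₂ := ⟨i', ↑t'⟩) h
  injection h2 with h2a h2b
  exact hne h2a

end Ctx

/-- all path vertices -/
def pverts (v : (i : Fin (m' + 1)) → Fin (ks i + 1) → Fin n) : Finset (Fin n) :=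
  Finset.univ.image (fun p : Σ i : Fin (m' + 1), Fin (ks i + 1) => v p.1 p.2)

lemma mem_pverts {x : Fin n} : x ∈ pverts v ↔ ∃ i t, v i t = x := by
  simp only [pverts, Finset.mem_image, Finset.mem_univ, true_and]
  constructor
  · rintro ⟨⟨i, t⟩, h⟩; exact ⟨i, t, h⟩
  · rintro ⟨i, t, h⟩; exact ⟨⟨i, t⟩, h⟩

lemma card_pverts (C : Ctx n k ks v) : (pverts v).card = k + (m' + 1) := by
  rw [pverts, Finset.card_image_of_injective _ C.hv, Finset.card_univ, Fintype.card_sigma]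
  simp only [Fintype.card_fin]
  rw [Finset.sum_add_distrib, C.hsum]
  simp

lemma card_pverts_compl (C : Ctx n k ks v) : (pverts v)ᶜ.card = n - k - (m' + 1) := by
  rw [Finset.card_compl, card_pverts C, Fintype.card_fin]
  omega

/-- the non-path vertices, enumerated -/
def remv (C : Ctx n k ks v) : Fin (n - k - (m' + 1)) → Fin n :=
  fun j => ((pverts v)ᶜ.orderIsoOfFin (card_pverts_compl C) j : Fin n)

lemma remv_injective (C : Ctx n k ks v) : Function.Injective (remv C) := by
  intro a b h
  have := Subtype.ext h
  exact (((pverts v)ᶜ.orderIsoOfFin (card_pverts_compl C)).injective this)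

lemma remv_not_mem (C : Ctx n k ks v) (j) : remv C j ∉ pverts v := by
  have h := ((pverts v)ᶜ.orderIsoOfFin (card_pverts_compl C) j).2
  rw [Finset.mem_compl] at h
  exact h

lemma remv_surj (C : Ctx n k ks v) {x : Fin n} (hx : x ∉ pverts v) : ∃ j, remv C j = x := by
  obtain ⟨j, hj⟩ := ((pverts v)ᶜ.orderIsoOfFin (card_pverts_compl C)).surjective
    ⟨x, Finset.mem_compl.mpr hx⟩
  exact ⟨j, by simp [remv, hj]⟩

/-- object sizes -/
def osize (ks : Fin (m' + 1) → ℕ) : Fin (m' + 1) ⊕ Fin (n - k - (m' + 1)) → ℕ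
  | Sum.inl i => ks i + 1
  | Sum.inr _ => 1

/-- the vertex list of an object, given orientations `ε` -/
def objL (C : Ctx n k ks v) (ε : Fin (m' + 1) → Bool) :
    Fin (m' + 1) ⊕ Fin (n - k - (m' + 1)) → List (Fin n)
  | Sum.inl i => if ε i then (List.ofFn (v i)).reverse else List.ofFn (v i)
  | Sum.inr j => [remv C j]

lemma objL_length (C : Ctx n k ks v) (ε) (o) :
    (objL C ε o).length = osize (k := k) (n := n) ks o := by
  rcases o with i | j
  · simp only [objL, osize]
    split <;> simp
  · simp [objL, osize]

lemma objL_ne_nil (C : Ctx n k ks v) (ε) (o) : objL C ε o ≠ [] := by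
  have := objL_length C ε o
  intro h
  rw [h] at this
  rcases o with i | j <;> simp [osize] at this

lemma mem_objL_inl {C : Ctx n k ks v} {ε} {x : Fin n} {i : Fin (m' + 1)} :
    x ∈ objL C ε (Sum.inl i) ↔ ∃ t, v i t = x := by
  simp only [objL]
  split
  · rw [List.mem_reverse, List.mem_ofFn]
  · rw [List.mem_ofFn]

lemma mem_objL_inr {C : Ctx n k ks v} {ε} {x : Fin n} {j} :
    x ∈ objL C ε (Sum.inr j) ↔ x = remv C j := by
  simp [objL]

lemma objL_nodup (C : Ctx n k ks v) (ε) (o) : (objL C ε o).Nodup := by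
  rcases o with i | j
  · have hinj : Function.Injective (v i) := by
      intro a b h
      have := C.hv (a₁ := ⟨i, a⟩) (a₂ := ⟨i, b⟩) h
      simpa using this
    simp only [objL]
    split
    · exact List.nodup_reverse.mpr (List.nodup_ofFn.mpr hinj)
    · exact List.nodup_ofFn.mpr hinj
  · simp [objL]

lemma objL_disjoint (C : Ctx n k ks v) (ε ε') {o o'} (hne : o ≠ o') :
    (objL C ε o).Disjoint (objL C ε' o') := by
  intro x hx hx'
  rcases o with i | j <;> rcases o' with i' | j'
  · rw [mem_objL_inl] at hx hx'
    obtain ⟨t, ht⟩ := hx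
    obtain ⟨t', ht'⟩ := hx'
    have : i ≠ i' := fun h => hne (by rw [h])
    apply C.vne this (t := t.val) (t' := t'.val)
    rw [Fin.cast_val_eq_self, Fin.cast_val_eq_self, ht, ht']
  · rw [mem_objL_inl] at hx
    rw [mem_objL_inr] at hx'
    obtain ⟨t, ht⟩ := hx
    exact remv_not_mem C j' (by rw [← hx']; exact mem_pverts.mpr ⟨_, _, ht⟩)
  · rw [mem_objL_inr] at hx
    rw [mem_objL_inl] at hx'
    obtain ⟨t, ht⟩ := hx'
    exact remv_not_mem C j (by rw [← hx]; exact mem_pverts.mpr ⟨_, _, ht⟩)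
  · rw [mem_objL_inr] at hx
    rw [mem_objL_inr] at hx'
    exact hne (by
      rw [hx] at hx'
      exact congrArg Sum.inr (remv_injective C hx'))

/-- laying out a list of objects as a vertex list -/
def layout (C : Ctx n k ks v) (ε : Fin (m' + 1) → Bool)
    (os : List (Fin (m' + 1) ⊕ Fin (n - k - (m' + 1)))) : List (Fin n) :=
  (os.map (objL C ε)).flatten

lemma layout_append (C : Ctx n k ks v) (ε) (os os') :
    layout C ε (os ++ os') = layout C ε os ++ layout C ε os' := by
  simp [layout]

lemma layout_length (C : Ctx n k ks v) (ε) (os) :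
    (layout C ε os).length = (os.map (osize (k := k) (n := n) ks)).sum := by
  simp only [layout, List.length_flatten, List.map_map]
  congr 1
  apply List.map_congr_left
  intro o _
  exact objL_length C ε o

lemma mem_layout {C : Ctx n k ks v} {ε} {os} {x : Fin n} :
    x ∈ layout C ε os ↔ ∃ o ∈ os, x ∈ objL C ε o := by
  simp only [layout, List.mem_flatten, List.mem_map]
  constructor
  · rintro ⟨_, ⟨o, ho, rfl⟩, hx⟩; exact ⟨o, ho, hx⟩
  · rintro ⟨o, ho, hx⟩; exact ⟨_, ⟨o, ho, rfl⟩, hx⟩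

lemma layout_nodup (C : Ctx n k ks v) (ε) {os} (hos : os.Nodup) : (layout C ε os).Nodup := by
  rw [layout, List.nodup_flatten]
  constructor
  · rintro l hl
    rw [List.mem_map] at hl
    obtain ⟨o, _, rfl⟩ := hl
    exact objL_nodup C ε o
  · rw [List.pairwise_map]
    exact hos.pairwise_of_forall_ne (fun o _ o' _ h => objL_disjoint C ε ε h)

lemma sum_osize (C : Ctx n k ks v) :
    ∑ o : Fin (m' + 1) ⊕ Fin (n - k - (m' + 1)), osize (k := k) (n := n) ks o = n := by
  rw [Fintype.sum_sum_type]
  have h1 : ∀ a : Fin (m' + 1), osize (k := k) (n := n) ks (Sum.inl a) = ks a + 1 :=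
    fun a => rfl
  have h2 : ∀ b, osize (k := k) (n := n) ks (Sum.inr b) = 1 := fun b => rfl
  simp only [h1, h2]
  rw [Finset.sum_add_distrib, C.hsum]
  simp only [Finset.sum_const, Finset.card_univ, Fintype.card_fin, smul_eq_mul, mul_one]
  have := C.hkm
  omega

lemma layout_length_complete (C : Ctx n k ks v) (ε)
    {os : List (Fin (m' + 1) ⊕ Fin (n - k - (m' + 1)))} (hnd : os.Nodup) (hc : ∀ o, o ∈ os) :
    (layout C ε os).length = n := by
  rw [layout_length, ← List.sum_toFinset _ hnd]
  have h : os.toFinset = Finset.univ :=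
    Finset.eq_univ_iff_forall.mpr (fun o => List.mem_toFinset.mpr (hc o))
  rw [h]
  exact sum_osize C

lemma card_obj' (C : Ctx n k ks v) :
    Fintype.card {o : Fin (m' + 1) ⊕ Fin (n - k - (m' + 1)) // o ≠ Sum.inl 0} = n - k - 1 := by
  have h1 : Fintype.card (Fin (m' + 1) ⊕ Fin (n - k - (m' + 1))) = n - k := by
    rw [Fintype.card_sum, Fintype.card_fin, Fintype.card_fin]
    have := C.hkm
    omega
  have h2 := Fintype.card_subtype_compl
    (fun o : Fin (m' + 1) ⊕ Fin (n - k - (m' + 1)) => o = Sum.inl 0)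
  rw [Fintype.card_subtype_eq, h1] at h2
  have h3 : k + (m' + 1) ≤ n := C.hkm
  have hk1 : 1 ≤ k := C.hk
  calc Fintype.card {o : Fin (m' + 1) ⊕ Fin (n - k - (m' + 1)) // o ≠ Sum.inl 0}
      = n - k - 1 := by rw [h2]

/-- the full arrangement of objects determined by `π` -/
def fullOs (π : Fin (n - k - 1) ≃ {o : Fin (m' + 1) ⊕ Fin (n - k - (m' + 1)) // o ≠ Sum.inl 0}) :
    List (Fin (m' + 1) ⊕ Fin (n - k - (m' + 1))) :=
  Sum.inl 0 :: List.ofFn (fun j => (π j).val)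

lemma fullOs_nodup (π : Fin (n - k - 1) ≃ {o : Fin (m' + 1) ⊕ Fin (n - k - (m' + 1)) // o ≠ Sum.inl 0}) : (fullOs (n := n) (k := k) (m' := m') π).Nodup := by
  rw [fullOs, List.nodup_cons]
  refine ⟨?_, ?_⟩
  · intro hmem
    rw [List.mem_ofFn] at hmem
    obtain ⟨j, hj⟩ := hmem
    exact (π j).2 hj
  · exact List.nodup_ofFn.mpr (fun a b hab => π.injective (Subtype.ext hab))

lemma fullOs_complete (π : Fin (n - k - 1) ≃ {o : Fin (m' + 1) ⊕ Fin (n - k - (m' + 1)) // o ≠ Sum.inl 0}) (o : Fin (m' + 1) ⊕ Fin (n - k - (m' + 1))) :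
    o ∈ fullOs (n := n) (k := k) (m' := m') π := by
  rw [fullOs]
  by_cases h : o = Sum.inl 0
  · subst h
    exact List.mem_cons_self
  · apply List.mem_cons_of_mem
    rw [List.mem_ofFn]
    exact ⟨π.symm ⟨o, h⟩, by simp⟩

/-- the full vertex list -/
def bigL (C : Ctx n k ks v) (ε : Fin (m' + 1) → Bool)
    (π : Fin (n - k - 1) ≃ {o : Fin (m' + 1) ⊕ Fin (n - k - (m' + 1)) // o ≠ Sum.inl 0}) :
    List (Fin n) :=
  layout C ε (fullOs π)

lemma bigL_length (C : Ctx n k ks v) (ε : Fin (m' + 1) → Bool) (π : Fin (n - k - 1) ≃ {o : Fin (m' + 1) ⊕ Fin (n - k - (m' + 1)) // o ≠ Sum.inl 0}) : (bigL C ε π).length = n :=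
  layout_length_complete C ε (fullOs_nodup π) (fullOs_complete π)

lemma bigL_nodup (C : Ctx n k ks v) (ε : Fin (m' + 1) → Bool) (π : Fin (n - k - 1) ≃ {o : Fin (m' + 1) ⊕ Fin (n - k - (m' + 1)) // o ≠ Sum.inl 0}) : (bigL C ε π).Nodup :=
  layout_nodup C ε (fullOs_nodup π)

/-- the Hamiltonian cycle (as a permutation) determined by the parameters -/
def bigPerm (C : Ctx n k ks v) (ε : Fin (m' + 1) → Bool) (π : Fin (n - k - 1) ≃ {o : Fin (m' + 1) ⊕ Fin (n - k - (m' + 1)) // o ≠ Sum.inl 0}) : Equiv.Perm (Fin n) :=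
  permOfList (bigL C ε π) (bigL_length C ε π) (bigL_nodup C ε π)

lemma natCast_fin_val {N t : ℕ} (h : t < N + 1) : ((t : Fin (N + 1)) : ℕ) = t := by
  rw [Fin.val_natCast]
  exact Nat.mod_eq_of_lt h

lemma v_natCast_mk (i : Fin (m' + 1)) {t : ℕ} (h : t < ks i + 1) :
    v i ⟨t, h⟩ = v i ↑t := by
  congr 1
  ext
  rw [natCast_fin_val h]

lemma infix_ofFn_pair (i : Fin (m' + 1)) {t : ℕ} (ht : t < ks i) :
    [v i ↑t, v i ↑(t + 1)] <:+: List.ofFn (v i) := by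
  have hlen : (List.ofFn (v i)).length = ks i + 1 := List.length_ofFn
  have h := pair_infix (List.ofFn (v i)) t (by rw [hlen]; omega)
  have e1 : (List.ofFn (v i))[t]'(by omega) = v i ↑t := by
    rw [List.getElem_ofFn]
    exact v_natCast_mk i (by omega)
  have e2 : (List.ofFn (v i))[t + 1]'(by rw [hlen]; omega) = v i ↑(t + 1) := by
    rw [List.getElem_ofFn]
    exact v_natCast_mk i (by omega)
  rwa [e1, e2] at h

lemma infix_ofFn_pair_rev (i : Fin (m' + 1)) {t : ℕ} (ht : t < ks i) :
    [v i ↑(t + 1), v i ↑t] <:+: (List.ofFn (v i)).reverse := by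
  have hlen : ((List.ofFn (v i)).reverse).length = ks i + 1 := by
    rw [List.length_reverse, List.length_ofFn]
  have h := pair_infix ((List.ofFn (v i)).reverse) (ks i - (t + 1)) (by rw [hlen]; omega)
  have e1 : ((List.ofFn (v i)).reverse)[ks i - (t + 1)]'(by rw [hlen]; omega) = v i ↑(t + 1) := by
    rw [List.getElem_reverse, List.getElem_ofFn]
    congr 1
    apply Fin.ext
    have hval : ((↑(t + 1) : Fin (ks i + 1)) : ℕ) = t + 1 := natCast_fin_val (by omega)
    rw [hval]
    simp only [List.length_ofFn]
    omega
  have e2 : ((List.ofFn (v i)).reverse)[ks i - (t + 1) + 1]'(by rw [hlen]; omega) = v i ↑t := by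
    rw [List.getElem_reverse, List.getElem_ofFn]
    congr 1
    apply Fin.ext
    have hval : ((↑t : Fin (ks i + 1)) : ℕ) = t := natCast_fin_val (by omega)
    rw [hval]
    simp only [List.length_ofFn]
    omega
  rwa [e1, e2] at h

lemma objL_infix_bigL (C : Ctx n k ks v) (ε : Fin (m' + 1) → Bool) (π : Fin (n - k - 1) ≃ {o : Fin (m' + 1) ⊕ Fin (n - k - (m' + 1)) // o ≠ Sum.inl 0}) (o) :
    objL C ε o <:+: bigL C ε π :=
  List.infix_of_mem_flatten (List.mem_map_of_mem (fullOs_complete π o))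

lemma InE_bigPerm_path (C : Ctx n k ks v) [NeZero n] (ε : Fin (m' + 1) → Bool) (π : Fin (n - k - 1) ≃ {o : Fin (m' + 1) ⊕ Fin (n - k - (m' + 1)) // o ≠ Sum.inl 0}) (i : Fin (m' + 1)) {t : ℕ}
    (ht : t < ks i) :
    HamCount.InE (bigPerm C ε π) s(v i ↑t, v i ↑(t + 1)) := by
  have hobj := objL_infix_bigL C ε π (Sum.inl i)
  cases hε : ε i with
  | false =>
      have h1 : [v i ↑t, v i ↑(t + 1)] <:+: objL C ε (Sum.inl i) := by
        rw [objL, hε]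
        simpa using infix_ofFn_pair i ht
      exact InE_of_infix (h1.trans hobj)
  | true =>
      have h1 : [v i ↑(t + 1), v i ↑t] <:+: objL C ε (Sum.inl i) := by
        rw [objL, hε]
        simpa using infix_ofFn_pair_rev i ht
      rw [Sym2.eq_swap]
      exact InE_of_infix (h1.trans hobj)

lemma bigL_getElem_start (C : Ctx n k ks v) (ε : Fin (m' + 1) → Bool) (π : Fin (n - k - 1) ≃ {o : Fin (m' + 1) ⊕ Fin (n - k - (m' + 1)) // o ≠ Sum.inl 0}) (hε0 : ε 0 = false) {p : ℕ}
    (hp : p ≤ ks 0) :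
    (bigL C ε π)[p]'(by
      rw [bigL_length]
      have h1 := C.hkm
      have h2 : ks 0 ≤ ∑ i, ks i := Finset.single_le_sum (f := ks) (fun i _ => Nat.zero_le _)
        (Finset.mem_univ 0)
      rw [C.hsum] at h2
      omega) = v 0 ↑p := by
  have hobj : objL C ε (Sum.inl 0) = List.ofFn (v 0) := by rw [objL, hε0]; simp
  have hsplit : bigL C ε π = List.ofFn (v 0) ++ layout C ε (List.ofFn (fun j => (π j).val)) := by
    rw [bigL, fullOs]
    rw [show (Sum.inl 0 :: List.ofFn (fun j => (π j).val) :
      List (Fin (m' + 1) ⊕ Fin (n - k - (m' + 1)))) =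
      [Sum.inl 0] ++ List.ofFn (fun j => (π j).val) from rfl]
    rw [layout_append]
    congr 1
    simp [layout, hobj]
  rw [List.getElem_of_eq hsplit]
  rw [List.getElem_append_left (by rw [List.length_ofFn]; omega)]
  rw [List.getElem_ofFn]
  exact v_natCast_mk 0 (by omega)

lemma ks0_le_k (C : Ctx n k ks v) : ks 0 ≤ k := by
  have h2 : ks 0 ≤ ∑ i, ks i :=
    Finset.single_le_sum (f := ks) (fun i _ => Nat.zero_le _) (Finset.mem_univ 0)
  rwa [C.hsum] at h2

lemma bigPerm_start (C : Ctx n k ks v) [NeZero n] (ε : Fin (m' + 1) → Bool) (π : Fin (n - k - 1) ≃ {o : Fin (m' + 1) ⊕ Fin (n - k - (m' + 1)) // o ≠ Sum.inl 0}) (hε0 : ε 0 = false) {p : ℕ}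
    (hp : p ≤ ks 0) : bigPerm C ε π ↑p = v 0 ↑p := by
  have hks0 := ks0_le_k C
  have hpn : p < n := by have := C.hkm; omega
  rw [bigPerm, permOfList_apply]
  have hval : (((p : ℕ) : Fin n) : ℕ) = p := by
    rw [Fin.val_natCast]; exact Nat.mod_eq_of_lt hpn
  simp only [hval]
  exact bigL_getElem_start C ε π hε0 hp


lemma rigid_step (C : Ctx n k ks v) [NeZero n] (σ : Equiv.Perm (Fin n)) (i : Fin (m' + 1))
    (hσ : ∀ t : ℕ, t < ks i → HamCount.InE σ s(v i ↑t, v i ↑(t + 1)))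
    {t : ℕ} (ht : t < ks i) :
    σ.symm (v i ↑(t + 1)) = σ.symm (v i ↑t) + 1 ∨
      σ.symm (v i ↑(t + 1)) = σ.symm (v i ↑t) - 1 := by
  obtain ⟨j, hj⟩ := hσ t ht
  rw [Sym2.eq_iff] at hj
  rcases hj with ⟨ha, hb⟩ | ⟨ha, hb⟩
  · left
    rw [ha, hb, Equiv.symm_apply_apply, Equiv.symm_apply_apply]
  · right
    rw [ha, hb, Equiv.symm_apply_apply, Equiv.symm_apply_apply]
    ring

lemma rigid_sign (C : Ctx n k ks v) [NeZero n] (σ : Equiv.Perm (Fin n)) (i : Fin (m' + 1))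
    (hσ : ∀ t : ℕ, t < ks i → HamCount.InE σ s(v i ↑t, v i ↑(t + 1))) :
    ∃ d : Fin n, (d = 1 ∨ d = -1) ∧ ∀ t : ℕ, t < ks i →
      σ.symm (v i ↑(t + 1)) = σ.symm (v i ↑t) + d := by
  have hcontra : ∀ t : ℕ, t + 1 < ks i →
      σ.symm (v i ↑(t + 1 + 1)) = σ.symm (v i ↑t) → False := by
    intro t ht heq
    have : v i ↑(t + 1 + 1) = v i ↑t := by
      have := congrArg σ heq
      rwa [Equiv.apply_symm_apply, Equiv.apply_symm_apply] at this
    have := C.vinj (by omega) (by omega) this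
    omega
  have hk1 : 1 ≤ ks i := C.hks i
  rcases rigid_step C σ i hσ (t := 0) (by omega) with h0 | h0
  · refine ⟨1, Or.inl rfl, ?_⟩
    intro t ht
    induction t with
    | zero => exact h0
    | succ t ih =>
        have hq := ih (by omega)
        rcases rigid_step C σ i hσ ht with h | h
        · exact h
        · exfalso
          apply hcontra t ht
          rw [h, hq]
          ring
  · refine ⟨-1, Or.inr rfl, ?_⟩
    intro t ht
    induction t with
    | zero => rw [h0]; ring
    | succ t ih =>
        have hq := ih (by omega)
        rcases rigid_step C σ i hσ ht with h | h
        · exfalso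
          apply hcontra t ht
          rw [h, hq]
          ring
        · rw [h]; ring

lemma rigid_pos (C : Ctx n k ks v) [NeZero n] (σ : Equiv.Perm (Fin n)) (i : Fin (m' + 1))
    {d : Fin n}
    (hd : ∀ t : ℕ, t < ks i → σ.symm (v i ↑(t + 1)) = σ.symm (v i ↑t) + d) :
    ∀ t : ℕ, t ≤ ks i → σ.symm (v i ↑t) = σ.symm (v i ↑(0 : ℕ)) + (t : Fin n) * d := by
  intro t
  induction t with
  | zero => intro _; simp
  | succ t ih =>
      intro ht
      have h1 := hd t (by omega)
      rw [h1, ih (by omega)]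
      have : ((t + 1 : ℕ) : Fin n) = (t : Fin n) + 1 := by push_cast; ring
      rw [this]
      ring

lemma exists_normalized (C : Ctx n k ks v) [NeZero n] (σ0 : Equiv.Perm (Fin n))
    (hσ0 : ∀ t : ℕ, t < ks 0 → HamCount.InE σ0 s(v 0 ↑t, v 0 ↑(t + 1))) :
    ∃ τ : Equiv.Perm (Fin n), cycleVec n τ = cycleVec n σ0 ∧
      ∀ t : ℕ, t ≤ ks 0 → τ ↑t = v 0 ↑t := by
  obtain ⟨d, hd1, hd⟩ := rigid_sign C σ0 0 hσ0
  have hpos := rigid_pos C σ0 0 hd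
  rcases hd1 with rfl | rfl
  · refine ⟨(Equiv.addLeft (σ0.symm (v 0 ↑(0 : ℕ)))).trans σ0,
      HamCount.cycleVec_trans_addLeft σ0 _, ?_⟩
    intro t ht
    simp only [Equiv.trans_apply, Equiv.coe_addLeft]
    have h2 := congrArg σ0 (hpos t ht)
    rw [Equiv.apply_symm_apply] at h2
    rw [h2]
    congr 1
    ring
  · refine ⟨(Equiv.subLeft (σ0.symm (v 0 ↑(0 : ℕ)))).trans σ0,
      HamCount.cycleVec_trans_subLeft σ0 _, ?_⟩
    intro t ht
    simp only [Equiv.trans_apply, Equiv.subLeft_apply]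
    have h2 := congrArg σ0 (hpos t ht)
    rw [Equiv.apply_symm_apply] at h2
    rw [h2]
    congr 1
    ring

lemma natCast_fin_val' [NeZero n] {p : ℕ} (h : p < n) : ((p : Fin n) : ℕ) = p := by
  rw [Fin.val_natCast]
  exact Nat.mod_eq_of_lt h

lemma fin_mk_eq_natCast [NeZero n] {p : ℕ} (h : p < n) : (⟨p, h⟩ : Fin n) = (p : Fin n) := by
  apply Fin.ext
  rw [natCast_fin_val' h]

lemma fin_mk_add_natCast [NeZero n] {c s : ℕ} (hc : c < n) (h : c + s < n) :
    (⟨c, hc⟩ : Fin n) + (s : Fin n) = ⟨c + s, h⟩ := by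
  apply Fin.ext
  rw [Fin.val_add, natCast_fin_val' (by omega : s < n)]
  simp only
  exact Nat.mod_eq_of_lt h

lemma objL_update (C : Ctx n k ks v) (ε : Fin (m' + 1) → Bool) (i : Fin (m' + 1)) (b : Bool)
    {o} (ho : o ≠ Sum.inl i) : objL C (Function.update ε i b) o = objL C ε o := by
  rcases o with i' | j
  · have hne : i' ≠ i := fun h => ho (by rw [h])
    simp only [objL, Function.update_of_ne hne]
  · rfl

lemma layout_congr (C : Ctx n k ks v) {ε ε' : Fin (m' + 1) → Bool}
    {os : List (Fin (m' + 1) ⊕ Fin (n - k - (m' + 1)))}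
    (h : ∀ o ∈ os, objL C ε' o = objL C ε o) :
    layout C ε' os = layout C ε os := by
  unfold layout
  congr 1
  exact List.map_congr_left h

lemma layout_cons (C : Ctx n k ks v) (ε : Fin (m' + 1) → Bool) (o) (os) :
    layout C ε (o :: os) = objL C ε o ++ layout C ε os := by
  simp [layout]

/-- A partial reconstruction of `τ` as a prefix of objects. -/
structure Cover (C : Ctx n k ks v) (τ : Equiv.Perm (Fin n))
    (os : List (Fin (m' + 1) ⊕ Fin (n - k - (m' + 1)))) (ε : Fin (m' + 1) → Bool) : Prop where
  shape : ∃ os₁, os = Sum.inl 0 :: os₁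
  eps0 : ε 0 = false
  nodup : os.Nodup
  len_le : (layout C ε os).length ≤ n
  agree : ∀ p (hp : p < (layout C ε os).length) (hpn : p < n),
    (layout C ε os)[p]'hp = τ ⟨p, hpn⟩

lemma cover_base (C : Ctx n k ks v) [NeZero n] {τ : Equiv.Perm (Fin n)}
    (hτ0 : ∀ t : ℕ, t ≤ ks 0 → τ ↑t = v 0 ↑t) :
    Cover C τ [Sum.inl 0] (fun _ => false) := by
  have hks0 := ks0_le_k C
  have hkm := C.hkm
  have hlay : layout C (fun _ => false) [Sum.inl 0] = List.ofFn (v 0) := by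
    simp [layout, objL]
  have hlen : (layout C (fun _ => false) [Sum.inl 0]).length = ks 0 + 1 := by
    rw [hlay, List.length_ofFn]
  refine ⟨⟨[], rfl⟩, rfl, List.nodup_singleton _, by omega, ?_⟩
  intro p hp hpn
  have hp' : p ≤ ks 0 := by rw [hlen] at hp; omega
  rw [List.getElem_of_eq hlay, List.getElem_ofFn, v_natCast_mk (v := v) (t := p) 0 (by omega), ← hτ0 p hp']
  congr 1
  exact (fin_mk_eq_natCast (by omega)).symm

lemma cover_snoc (C : Ctx n k ks v) [NeZero n] {τ : Equiv.Perm (Fin n)}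
    {os : List (Fin (m' + 1) ⊕ Fin (n - k - (m' + 1)))} {ε : Fin (m' + 1) → Bool}
    (hc : Cover C τ os ε) (o) (ε' : Fin (m' + 1) → Bool) (hε'0 : ε' 0 = false)
    (hood : ∀ o' ∈ os, objL C ε' o' = objL C ε o') (ho : o ∉ os)
    (hagree : ∀ p (hp : p < (objL C ε' o).length)
      (hcp : (layout C ε os).length + p < n),
      (objL C ε' o)[p]'hp = τ ⟨(layout C ε os).length + p, hcp⟩) :
    Cover C τ (os ++ [o]) ε' ∧
      (layout C ε' (os ++ [o])).length = (layout C ε os).length + (objL C ε' o).length := by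
  set c := (layout C ε os).length with hcdef
  have hlayeq : layout C ε' os = layout C ε os := layout_congr C hood
  have hsplit : layout C ε' (os ++ [o]) = layout C ε os ++ objL C ε' o := by
    rw [layout_append, hlayeq]
    congr 1
    simp [layout]
  have hnd : (os ++ [o]).Nodup := by
    rw [List.nodup_append]
    refine ⟨hc.nodup, List.nodup_singleton _, ?_⟩
    intro a ha b hb hab
    rw [List.mem_singleton] at hb
    subst hb hab
    exact ho ha
  have hndl : (layout C ε' (os ++ [o])).Nodup := layout_nodup C ε' hnd
  have hlen' : (layout C ε' (os ++ [o])).length = c + (objL C ε' o).length := by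
    rw [hsplit, List.length_append]
  have hle : c + (objL C ε' o).length ≤ n := by
    have h1 := List.Nodup.length_le_card hndl
    rw [hlen'] at h1
    simpa using h1
  refine ⟨⟨?_, hε'0, hnd, by omega, ?_⟩, hlen'⟩
  · obtain ⟨os₁, rfl⟩ := hc.shape
    exact ⟨os₁ ++ [o], rfl⟩
  · intro p hp hpn
    rw [hlen'] at hp
    rw [List.getElem_of_eq hsplit]
    by_cases hpc : p < c
    · rw [List.getElem_append_left hpc]
      exact hc.agree p hpc hpn
    · rw [List.getElem_append_right (by omega : c ≤ p)]
      have hcp : c + (p - c) < n := by omega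
      have := hagree (p - c) (by omega) hcp
      rw [this]
      congr 1
      apply Fin.ext
      simp only
      omega

lemma cover_extend (C : Ctx n k ks v) [NeZero n] {τ : Equiv.Perm (Fin n)}
    (hτpath : ∀ (i : Fin (m' + 1)) (t : ℕ), t < ks i → HamCount.InE τ s(v i ↑t, v i ↑(t + 1)))
    {os : List (Fin (m' + 1) ⊕ Fin (n - k - (m' + 1)))} {ε : Fin (m' + 1) → Bool}
    (hc : Cover C τ os ε) (hlt : (layout C ε os).length < n) :
    ∃ os' ε', Cover C τ os' ε' ∧
      (layout C ε os).length < (layout C ε' os').length := by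
  set c := (layout C ε os).length with hcdef
  set x := τ ⟨c, hlt⟩ with hxdef
  clear_value x
  clear_value c
  have hc1 : 1 ≤ c := by
    obtain ⟨os₁, hos⟩ := hc.shape
    have h1 : layout C ε os = objL C ε (Sum.inl 0) ++ layout C ε os₁ := by
      rw [hos, layout_cons]
    have h2 : (objL C ε (Sum.inl 0)).length = ks 0 + 1 := objL_length C ε _
    have : c = (objL C ε (Sum.inl 0)).length + (layout C ε os₁).length := by
      rw [hcdef, h1, List.length_append]
    omega
  have hxnot : x ∉ layout C ε os := by
    intro hx
    obtain ⟨p, hp, hpx⟩ := List.mem_iff_getElem.mp hx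
    have h2 : τ ⟨p, by omega⟩ = τ ⟨c, hlt⟩ := by
      rw [← hc.agree p hp (by omega), hpx, hxdef]
    have h3 : p = c := by
      have := τ.injective h2
      exact congrArg Fin.val this
    omega
  by_cases hxp : x ∈ pverts v
  · -- a path block starts or ends at position c
    obtain ⟨i, t0, hit⟩ := mem_pverts.mp hxp
    have hinot : Sum.inl i ∉ os := fun hmem =>
      hxnot (mem_layout.mpr ⟨_, hmem, mem_objL_inl.mpr ⟨t0, hit⟩⟩)
    have hfresh : ∀ s : ℕ, s ≤ ks i → v i ↑s ∉ layout C ε os := by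
      intro s hs hmem
      obtain ⟨o', ho', hvo'⟩ := mem_layout.mp hmem
      have ho'i : o' = Sum.inl i := by
        by_contra hne
        exact objL_disjoint C ε ε hne hvo' (mem_objL_inl.mpr ⟨↑s, rfl⟩)
      exact hinot (ho'i ▸ ho')
    obtain ⟨d, hd1, hd⟩ := rigid_sign C τ i (hτpath i)
    have hpos := rigid_pos C τ i hd
    have hki := C.hks i
    set t : ℕ := t0.val with htdef
    have ht : t ≤ ks i := by omega
    have hxt : v i ↑t = x := by
      rw [← hit]
      congr 1
      rw [htdef, Fin.cast_val_eq_self]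
    have hqt : τ.symm (v i ↑t) = ⟨c, hlt⟩ := by
      rw [hxt, hxdef, Equiv.symm_apply_apply]
    have hsub : (⟨c, hlt⟩ : Fin n) - 1 = ⟨c - 1, by omega⟩ := by
      rw [sub_eq_iff_eq_add, fin_mk_add_one (by omega : c - 1 + 1 < n)]
      congr 1
      omega
    have hprev : ∀ s : ℕ, s ≤ ks i → τ.symm (v i ↑s) = ⟨c, hlt⟩ - 1 → False := by
      intro s hs hqs
      apply hfresh s hs
      rw [hsub] at hqs
      have h5 : v i ↑s = τ ⟨c - 1, by omega⟩ := by
        conv_lhs => rw [← Equiv.apply_symm_apply τ (v i ↑s), hqs]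
      have h6 := hc.agree (c - 1) (by omega) (by omega)
      rw [h5, ← h6]
      exact List.getElem_mem _
    by_cases ht0 : t = 0
    · -- forward case; first show d = 1
      have hdd : d = 1 := by
        rcases hd1 with h | h
        · exact h
        · exfalso
          apply hprev 1 (by omega)
          have := hd 0 (by omega)
          rw [h] at this
          rw [this]
          have ht00 : τ.symm (v i ↑(0:ℕ)) = ⟨c, hlt⟩ := by rw [show ((0:ℕ) : Fin (ks i + 1)) = ((t:ℕ) : Fin (ks i + 1)) by rw [ht0]]; exact hqt
          rw [ht00]
          ring
      subst hdd
      have hq_all : ∀ p : ℕ, p ≤ ks i → τ.symm (v i ↑p) = ⟨c, hlt⟩ + (p : Fin n) := by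
        intro p hp
        have := hpos p hp
        rw [mul_one] at this
        rw [this]
        have ht00 : τ.symm (v i ↑(0:ℕ)) = ⟨c, hlt⟩ := by rw [show ((0:ℕ) : Fin (ks i + 1)) = ((t:ℕ) : Fin (ks i + 1)) by rw [ht0]]; exact hqt
        rw [ht00]
      -- extend with block i laid forward
      have hupd0 : (Function.update ε i false) 0 = false := by
        rcases eq_or_ne (0 : Fin (m' + 1)) i with h | h
        · rw [← h, Function.update_self]
        · rw [Function.update_of_ne h]
          exact hc.eps0
      have hobjL : objL C (Function.update ε i false) (Sum.inl i) = List.ofFn (v i) := by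
        simp [objL, Function.update_self]
      obtain ⟨hcov, hlen⟩ := cover_snoc C hc (Sum.inl i) (Function.update ε i false) hupd0
        (fun o' ho' => objL_update C ε i false (fun h => hinot (h ▸ ho')))
        hinot
        (by
          intro p hp hcp
          rw [List.getElem_of_eq hobjL, List.getElem_ofFn]
          rw [hobjL, List.length_ofFn] at hp
          rw [v_natCast_mk (v := v) (t := p) i (by omega)]
          have h8 := hq_all p (by omega)
          have h9 := congrArg τ h8
          rw [Equiv.apply_symm_apply, fin_mk_add_natCast hlt (by omega : c + p < n)] at h9
          rw [h9]
          congr 1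
          apply Fin.ext
          simp only
          omega)
      refine ⟨_, _, hcov, ?_⟩
      rw [hlen, hobjL, List.length_ofFn]
      omega
    · -- backward case: t = ks i and d = -1
      have htk : t = ks i := by
        by_contra htk
        have htlt : t < ks i := by omega
        have ht1 : 1 ≤ t := by omega
        rcases hd1 with h | h
        · -- d = 1 : previous vertex at c - 1
          apply hprev (t - 1) (by omega)
          have h10 := hd (t - 1) (by omega)
          rw [h] at h10
          have ht' : t - 1 + 1 = t := by omega
          rw [ht'] at h10
          rw [hqt] at h10
          exact eq_sub_of_add_eq h10.symm
        · -- d = -1 : next vertex at c - 1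
          apply hprev (t + 1) (by omega)
          have h10 := hd t htlt
          rw [h, hqt] at h10
          rw [h10]
          ring
      rw [htk] at hqt
      have hdd : d = -1 := by
        rcases hd1 with h | h
        · exfalso
          apply hprev (ks i - 1) (by omega)
          have h10 := hd (ks i - 1) (by omega)
          rw [h] at h10
          have ht' : ks i - 1 + 1 = ks i := by omega
          rw [ht', hqt] at h10
          exact eq_sub_of_add_eq h10.symm
        · exact h
      subst hdd
      have hq0 : τ.symm (v i ↑(0:ℕ)) = ⟨c, hlt⟩ + ((ks i : ℕ) : Fin n) := by
        have h11 := hpos (ks i) (le_refl _)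
        rw [hqt] at h11
        linear_combination -h11
      have hq_all' : ∀ p : ℕ, p ≤ ks i →
          τ.symm (v i ↑(ks i - p)) = ⟨c, hlt⟩ + (p : Fin n) := by
        intro p hp
        have h12 := hpos (ks i - p) (by omega)
        rw [hq0] at h12
        have hcast : ((ks i : ℕ) : Fin n) = ((ks i - p : ℕ) : Fin n) + (p : Fin n) := by
          rw [← Nat.cast_add]
          congr 1
          omega
        rw [h12, hcast]
        ring
      have hine : i ≠ 0 := by
        intro h
        apply hinot
        obtain ⟨os₁, hos⟩ := hc.shape
        rw [h, hos]
        exact List.mem_cons_self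
      have hupd0 : (Function.update ε i true) 0 = false := by
        rw [Function.update_of_ne (Ne.symm hine)]
        exact hc.eps0
      have hobjL : objL C (Function.update ε i true) (Sum.inl i) =
          (List.ofFn (v i)).reverse := by
        simp [objL, Function.update_self]
      obtain ⟨hcov, hlen⟩ := cover_snoc C hc (Sum.inl i) (Function.update ε i true) hupd0
        (fun o' ho' => objL_update C ε i true (fun h => hinot (h ▸ ho')))
        hinot
        (by
          intro p hp hcp
          rw [List.getElem_of_eq hobjL, List.getElem_reverse, List.getElem_ofFn]
          rw [hobjL] at hp
          have hplen : p < ks i + 1 := by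
            rw [List.length_reverse, List.length_ofFn] at hp
            exact hp
          have hidx : v i (⟨(List.ofFn (v i)).length - 1 - p, by
              rw [List.length_ofFn]; omega⟩ : Fin (ks i + 1)) = v i ↑(ks i - p) := by
            congr 1
            apply Fin.ext
            rw [natCast_fin_val (by omega)]
            simp only [List.length_ofFn]
            omega
          rw [hidx]
          have h8 := hq_all' p (by omega)
          have h9 := congrArg τ h8
          rw [Equiv.apply_symm_apply, fin_mk_add_natCast hlt (by omega : c + p < n)] at h9
          rw [h9]
          congr 1
          apply Fin.ext
          simp only
          omega)
      refine ⟨_, _, hcov, ?_⟩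
      rw [hlen, hobjL, List.length_reverse, List.length_ofFn]
      omega
  · -- a free vertex at position c
    obtain ⟨j, hj⟩ := remv_surj C hxp
    have hjnot : Sum.inr j ∉ os := by
      intro hmem
      apply hxnot
      exact mem_layout.mpr ⟨_, hmem, mem_objL_inr.mpr (by rw [hj])⟩
    obtain ⟨hcov, hlen⟩ := cover_snoc C hc (Sum.inr j) ε hc.eps0 (fun _ _ => rfl) hjnot
      (by
        intro p hp hcp
        have hp1 : p = 0 := by
          have : (objL C ε (Sum.inr j)).length = 1 := objL_length C ε _
          omega
        subst hp1
        show (objL C ε (Sum.inr j))[0]'hp = _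
        have : (objL C ε (Sum.inr j))[0]'hp = remv C j := by
          simp [objL]
        rw [this, hj, hxdef]
        congr 1
        apply Fin.ext
        simp only
        omega)
    refine ⟨_, _, hcov, ?_⟩
    rw [hlen]
    have : (objL C ε (Sum.inr j)).length = 1 := objL_length C ε _
    omega

lemma vinj' (C : Ctx n k ks v) (i : Fin (m' + 1)) : Function.Injective (v i) := by
  intro a b hab
  have := C.hv (a₁ := ⟨i, a⟩) (a₂ := ⟨i, b⟩) hab
  simpa using this

lemma osize_pos (o : Fin (m' + 1) ⊕ Fin (n - k - (m' + 1))) :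
    0 < osize (k := k) (n := n) ks o := by
  rcases o with i | j <;> simp [osize]

lemma cover_full (C : Ctx n k ks v) [NeZero n] {τ : Equiv.Perm (Fin n)}
    (hτpath : ∀ (i : Fin (m' + 1)) (t : ℕ), t < ks i → HamCount.InE τ s(v i ↑t, v i ↑(t + 1)))
    (hτ0 : ∀ t : ℕ, t ≤ ks 0 → τ ↑t = v 0 ↑t) :
    ∃ os ε, Cover C τ os ε ∧ (layout C ε os).length = n := by
  suffices h : ∀ N : ℕ, ∀ os ε, Cover C τ os ε → n - (layout C ε os).length ≤ N →
      ∃ os' ε', Cover C τ os' ε' ∧ (layout C ε' os').length = n by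
    exact h n [Sum.inl 0] (fun _ => false) (cover_base C hτ0) (by omega)
  intro N
  induction N with
  | zero =>
      intro os ε hc hle
      exact ⟨os, ε, hc, by have := hc.len_le; omega⟩
  | succ N ih =>
      intro os ε hc hle
      by_cases heq : (layout C ε os).length = n
      · exact ⟨os, ε, hc, heq⟩
      · obtain ⟨os', ε', hc', hlt'⟩ := cover_extend C hτpath hc (by have := hc.len_le; omega)
        exact ih os' ε' hc' (by have := hc'.len_le; omega)

lemma cover_to_params (C : Ctx n k ks v) [NeZero n] {τ : Equiv.Perm (Fin n)}
    {os : List (Fin (m' + 1) ⊕ Fin (n - k - (m' + 1)))} {ε : Fin (m' + 1) → Bool}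
    (hc : Cover C τ os ε) (hfull : (layout C ε os).length = n) :
    ∃ (π : Fin (n - k - 1) ≃ {o : Fin (m' + 1) ⊕ Fin (n - k - (m' + 1)) // o ≠ Sum.inl 0}),
      bigPerm C ε π = τ := by
  have hcomp : ∀ o, o ∈ os := by
    by_contra h
    push_neg at h
    obtain ⟨o, ho⟩ := h
    have h1 : (os.map (osize (k := k) (n := n) ks)).sum = n := by
      rw [← layout_length C ε os, hfull]
    have h2 : os.toFinset.sum (osize (k := k) (n := n) ks) =
        (os.map (osize (k := k) (n := n) ks)).sum := List.sum_toFinset _ hc.nodup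
    have h4 : Finset.univ.sum (osize (k := k) (n := n) ks) = n := sum_osize C
    have h5 : os.toFinset.sum (osize (k := k) (n := n) ks) <
        Finset.univ.sum (osize (k := k) (n := n) ks) := by
      apply Finset.sum_lt_sum_of_subset (Finset.subset_univ _) (Finset.mem_univ o)
        (by simpa using ho) (osize_pos o)
      intro j _ _
      exact Nat.zero_le _
    omega
  obtain ⟨os₁, hos⟩ := hc.shape
  have hlos : os.length = n - k := by
    have h1 : os.length = os.toFinset.card := (List.toFinset_card_of_nodup hc.nodup).symm
    have h2 : os.toFinset = Finset.univ :=
      Finset.eq_univ_iff_forall.mpr (fun o => List.mem_toFinset.mpr (hcomp o))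
    rw [h1, h2, Finset.card_univ, Fintype.card_sum, Fintype.card_fin, Fintype.card_fin]
    have := C.hkm
    omega
  have hlos₁ : os₁.length = n - k - 1 := by
    rw [hos] at hlos
    simp only [List.length_cons] at hlos
    omega
  have hnotin : Sum.inl 0 ∉ os₁ := by
    have h6 := hc.nodup
    rw [hos, List.nodup_cons] at h6
    exact h6.1
  have hnd₁ : os₁.Nodup := by
    have h6 := hc.nodup
    rw [hos, List.nodup_cons] at h6
    exact h6.2
  have hjlt : ∀ j : Fin (n - k - 1), (j : ℕ) < os₁.length := by
    intro j
    rw [hlos₁]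
    exact j.2
  set f : Fin (n - k - 1) → {o : Fin (m' + 1) ⊕ Fin (n - k - (m' + 1)) // o ≠ Sum.inl 0} :=
    fun j => ⟨os₁[(j : ℕ)]'(hjlt j), fun h => hnotin (h ▸ List.getElem_mem _)⟩ with hfdef
  have hfinj : Function.Injective f := by
    intro a b hab
    have h7 : os₁[(a : ℕ)]'(hjlt a) = os₁[(b : ℕ)]'(hjlt b) := congrArg Subtype.val hab
    have h8 := List.Nodup.getElem_inj_iff hnd₁ |>.mp h7
    exact Fin.ext h8
  have hbij : Function.Bijective f :=
    (Fintype.bijective_iff_injective_and_card f).mpr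
      ⟨hfinj, by rw [Fintype.card_fin, card_obj' C]⟩
  set π := Equiv.ofBijective f hbij with hπdef
  have hofn : List.ofFn (fun j => (π j).val) = os₁ := by
    apply List.ext_getElem
    · rw [List.length_ofFn, hlos₁]
    · intro idx h1 h2
      rw [List.getElem_ofFn]
      rfl
  have hfull2 : fullOs π = os := by rw [fullOs, hofn, hos]
  have hbig : bigL C ε π = layout C ε os := by rw [bigL, hfull2]
  refine ⟨π, ?_⟩
  apply Equiv.ext
  intro j
  rw [bigPerm, permOfList_apply]
  have hagree := hc.agree (j : ℕ) (by rw [hfull]; exact j.2) j.2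
  rw [List.getElem_of_eq hbig, hagree]

lemma ofFn_ne_reverse (C : Ctx n k ks v) (i : Fin (m' + 1)) :
    List.ofFn (v i) ≠ (List.ofFn (v i)).reverse := by
  intro h
  have h0 : (List.ofFn (v i))[0]'(by simp) = ((List.ofFn (v i)).reverse)[0]'(by simp) :=
    List.getElem_of_eq h (by simp)
  rw [List.getElem_ofFn, List.getElem_reverse, List.getElem_ofFn] at h0
  have h1 := vinj' C i h0
  have h2 := congrArg Fin.val h1
  simp only [List.length_ofFn] at h2
  have hki := C.hks i
  omega

lemma layout_inj (C : Ctx n k ks v) :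
    ∀ (os os' : List (Fin (m' + 1) ⊕ Fin (n - k - (m' + 1)))) (ε ε' : Fin (m' + 1) → Bool),
    layout C ε os = layout C ε' os' →
    os = os' ∧ ∀ i, Sum.inl i ∈ os → ε i = ε' i := by
  intro os
  induction os with
  | nil =>
      intro os' ε ε' h
      cases os' with
      | nil => exact ⟨rfl, by simp⟩
      | cons o' t' =>
          exfalso
          have h1 : (layout C ε ([] : List (Fin (m' + 1) ⊕ Fin (n - k - (m' + 1))))).length = 0 := by
            simp [layout]
          have h2 : 0 < (layout C ε' (o' :: t')).length := by
            rw [layout_cons, List.length_append]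
            have := List.length_pos_iff.mpr (objL_ne_nil C ε' o')
            omega
          rw [h] at h1
          omega
  | cons o os₁ ih =>
      intro os' ε ε' h
      cases os' with
      | nil =>
          exfalso
          have h1 : (layout C ε' ([] : List (Fin (m' + 1) ⊕ Fin (n - k - (m' + 1))))).length = 0 := by
            simp [layout]
          have h2 : 0 < (layout C ε (o :: os₁)).length := by
            rw [layout_cons, List.length_append]
            have := List.length_pos_iff.mpr (objL_ne_nil C ε o)
            omega
          rw [← h] at h1
          omega
      | cons o' os₁' =>
          rw [layout_cons, layout_cons] at h
          have hlen0 : 0 < (objL C ε o).length := List.length_pos_iff.mpr (objL_ne_nil C ε o)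
          have hlen0' : 0 < (objL C ε' o').length := List.length_pos_iff.mpr (objL_ne_nil C ε' o')
          have hy : (objL C ε o)[0]'hlen0 = (objL C ε' o')[0]'hlen0' := by
            have e1 : (objL C ε o ++ layout C ε os₁)[0]'(by rw [List.length_append]; omega) =
                (objL C ε o)[0]'hlen0 := List.getElem_append_left hlen0
            have e2 : (objL C ε' o' ++ layout C ε' os₁')[0]'(by rw [List.length_append]; omega) =
                (objL C ε' o')[0]'hlen0' := List.getElem_append_left hlen0'
            rw [← e1, ← e2]
            exact List.getElem_of_eq h (by rw [List.length_append]; omega)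
          have hoo : o = o' := by
            by_contra hne
            have hmem' : (objL C ε o)[0]'hlen0 ∈ objL C ε' o' := by
              rw [hy]
              exact List.getElem_mem _
            exact objL_disjoint C ε ε' hne (List.getElem_mem _) hmem'
          subst hoo
          have hleneq : (objL C ε o).length = (objL C ε' o).length := by
            rw [objL_length, objL_length]
          obtain ⟨h1, h2⟩ := List.append_inj h hleneq
          obtain ⟨h3, h4⟩ := ih os₁' ε ε' h2
          refine ⟨by rw [h3], ?_⟩
          intro i hi
          rcases List.mem_cons.mp hi with hi | hi
          · subst hi
            by_contra hne
            have hobj1 : objL C ε (Sum.inl i) = (if ε i then (List.ofFn (v i)).reverse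
              else List.ofFn (v i)) := rfl
            cases hεi : ε i <;> cases hε'i : ε' i
            · exact hne (by rw [hεi, hε'i])
            · apply ofFn_ne_reverse C i
              have := h1
              simp only [objL, hεi, hε'i, if_true, if_false] at this
              exact this
            · apply ofFn_ne_reverse C i
              have := h1.symm
              simp only [objL, hεi, hε'i, if_true, if_false] at this
              exact this
            · exact hne (by rw [hεi, hε'i])
          · exact h4 i hi

lemma params_inj (C : Ctx n k ks v)
    {ε ε' : Fin (m' + 1) → Bool}
    {π π' : Fin (n - k - 1) ≃ {o : Fin (m' + 1) ⊕ Fin (n - k - (m' + 1)) // o ≠ Sum.inl 0}}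
    (h : bigL C ε π = bigL C ε' π') : ε = ε' ∧ π = π' := by
  obtain ⟨h1, h2⟩ := layout_inj C (fullOs π) (fullOs π') ε ε' h
  rw [fullOs, fullOs] at h1
  have h3 : List.ofFn (fun j => (π j).val) = List.ofFn (fun j => (π' j).val) := by
    injection h1 with ha hb
  have hπ : π = π' := by
    apply Equiv.ext
    intro j
    apply Subtype.ext
    have h5 : ∀ (j : Fin (n - k - 1)), (fun j => (π j).val) j = (fun j => (π' j).val) j := by
      intro j'
      have := List.ofFn_inj.mp h3
      rw [this]
    exact h5 j
  have hε : ε = ε' := funext fun i => h2 i (fullOs_complete π (Sum.inl i))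
  exact ⟨hε, hπ⟩

lemma xval_eq' {x : EdgeIdx n → ℝ} {a b : Fin n} (h : a ≠ b)
    (hd : ¬ (s(a, b) : Sym2 (Fin n)).IsDiag) :
    xval x a b = x ⟨s(a, b), hd⟩ := by
  rw [xval, dif_neg h]

lemma mem_filter_cond (C : Ctx n k ks v) [NeZero n] (σ : Equiv.Perm (Fin n))
    (hσ : ∀ (i : Fin (m' + 1)) (t : ℕ), t < ks i → HamCount.InE σ s(v i ↑t, v i ↑(t + 1)))
    (i : Fin (m' + 1)) (t : Fin (ks i)) :
    xval (cycleVec n σ) (v i t.castSucc) (v i t.succ) = 1 := by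
  have hca : v i t.castSucc = v i ↑(t.val : ℕ) := by
    congr 1
    apply Fin.ext
    rw [natCast_fin_val (by omega)]
    simp
  have hcb : v i t.succ = v i ↑((t.val : ℕ) + 1) := by
    congr 1
    apply Fin.ext
    rw [natCast_fin_val (by omega)]
    simp
  have hne : v i ((t.val : ℕ) : Fin (ks i + 1)) ≠ v i ↑((t.val : ℕ) + 1) := by
    intro h
    have := C.vinj (by omega) (by omega) h
    omega
  have hnd : ¬ (s(v i ↑(t.val : ℕ), v i ↑((t.val : ℕ) + 1)) : Sym2 (Fin n)).IsDiag := by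
    rw [Sym2.isDiag_iff_proj_eq]
    exact hne
  rw [hca, hcb, xval_eq' hne hnd, HamCount.cycleVec_eq_one_iff]
  exact hσ i t.val t.2

lemma cond_to_path (C : Ctx n k ks v) [NeZero n] {x : EdgeIdx n → ℝ} {σ : Equiv.Perm (Fin n)}
    (hx : cycleVec n σ = x)
    (hcond : ∀ (i : Fin (m' + 1)) (t : Fin (ks i)), xval x (v i t.castSucc) (v i t.succ) = 1)
    (i : Fin (m' + 1)) (t : ℕ) (ht : t < ks i) :
    HamCount.InE σ s(v i ↑t, v i ↑(t + 1)) := by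
  have h := hcond i ⟨t, ht⟩
  have hca : v i (⟨t, ht⟩ : Fin (ks i)).castSucc = v i ↑t := by
    congr 1
    apply Fin.ext
    rw [natCast_fin_val (by omega)]
    simp
  have hcb : v i (⟨t, ht⟩ : Fin (ks i)).succ = v i ↑(t + 1) := by
    congr 1
    apply Fin.ext
    rw [natCast_fin_val (by omega)]
    simp
  have hne : v i ((t : ℕ) : Fin (ks i + 1)) ≠ v i ↑(t + 1) := by
    intro hh
    have := C.vinj (by omega) (by omega) hh
    omega
  have hnd : ¬ (s(v i ↑t, v i ↑(t + 1)) : Sym2 (Fin n)).IsDiag := by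
    rw [Sym2.isDiag_iff_proj_eq]
    exact hne
  rw [hca, hcb, xval_eq' hne hnd, ← hx, HamCount.cycleVec_eq_one_iff] at h
  exact h

lemma bigL_eq_of_bigPerm_eq (C : Ctx n k ks v)
    {ε ε' : Fin (m' + 1) → Bool}
    {π π' : Fin (n - k - 1) ≃ {o : Fin (m' + 1) ⊕ Fin (n - k - (m' + 1)) // o ≠ Sum.inl 0}}
    (h : bigPerm C ε π = bigPerm C ε' π') : bigL C ε π = bigL C ε' π' := by
  apply List.ext_getElem
  · rw [bigL_length, bigL_length]
  · intro idx h1 h2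
    have hidxn : idx < n := by rw [bigL_length] at h1; exact h1
    have h9 : bigPerm C ε π ⟨idx, hidxn⟩ = bigPerm C ε' π' ⟨idx, hidxn⟩ := by rw [h]
    rw [bigPerm, permOfList_apply, bigPerm, permOfList_apply] at h9
    exact h9

lemma card_eps (m' : ℕ) :
    Fintype.card {ε : Fin (m' + 1) → Bool // ε 0 = false} = 2 ^ m' := by
  have e : {ε : Fin (m' + 1) → Bool // ε 0 = false} ≃ (Fin m' → Bool) :=
    { toFun := fun f j => f.val j.succ
      invFun := fun g => ⟨Fin.cons false g, rfl⟩
      left_inv := by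
        intro f
        apply Subtype.ext
        funext j
        refine Fin.cases ?_ ?_ j
        · show (Fin.cons false (fun j => f.val j.succ) : Fin (m' + 1) → Bool) 0 = f.val 0
          rw [Fin.cons_zero]
          exact f.2.symm
        · intro j'
          show (Fin.cons false (fun j => f.val j.succ) : Fin (m' + 1) → Bool) j'.succ = f.val j'.succ
          rw [Fin.cons_succ]
      right_inv := by
        intro g
        funext j
        simp }
  rw [Fintype.card_congr e, Fintype.card_fun, Fintype.card_bool, Fintype.card_fin]

end Main

end HamCount

open HamCount

/-- Let `(k_1, …, k_m)` be a partition of `k` into `m` positive parts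
with `k + m ≤ n`, and let `p_1, …, p_m` be pairwise vertex-disjoint paths in `K_n`
with `k_1, …, k_m` edges respectively (path `i` visits the distinct vertices
`v i 0, v i 1, …, v i (k_i)`).  Then the number of Hamiltonian cycles of `K_n`
containing all of the paths `p_1, …, p_m` equals `2^(m-1) * (n - k - 1)!`. -/
theorem count_hamiltonian_cycles_containing_disjoint_paths
    (n k m : ℕ) (hn : 1 ≤ n) (hk : 1 ≤ k) (hm : 1 ≤ m)
    (ks : Fin m → ℕ) (hks : ∀ i, 1 ≤ ks i) (hsum : ∑ i, ks i = k)
    (hkm : k + m ≤ n)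
    (v : (i : Fin m) → Fin (ks i + 1) → Fin n)
    (hv : Function.Injective (fun p : Σ i : Fin m, Fin (ks i + 1) => v p.1 p.2)) :
    ((hamX n).filter (fun x => ∀ (i : Fin m) (t : Fin (ks i)),
        xval x (v i t.castSucc) (v i t.succ) = 1)).card
      = 2 ^ (m - 1) * Nat.factorial (n - k - 1) := by
  obtain ⟨m', rfl⟩ : ∃ m', m = m' + 1 := ⟨m - 1, by omega⟩
  by_cases h3 : 3 ≤ n
  · -- main case
    haveI : NeZero n := ⟨by omega⟩
    set C : Ctx n k ks v := ⟨hk, hks, hsum, hkm, hv, h3⟩ with hC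
    have key : (Finset.univ : Finset ({ε : Fin (m' + 1) → Bool // ε 0 = false} ×
        (Fin (n - k - 1) ≃ {o : Fin (m' + 1) ⊕ Fin (n - k - (m' + 1)) // o ≠ Sum.inl 0}))).card
        = ((hamX n).filter (fun x => ∀ (i : Fin (m' + 1)) (t : Fin (ks i)),
            xval x (v i t.castSucc) (v i t.succ) = 1)).card := by
      apply Finset.card_bij (fun p _ => cycleVec n (bigPerm C p.1.val p.2))
      · -- maps into filter
        intro p _
        rw [Finset.mem_filter]
        constructor
        · exact Finset.mem_image_of_mem _ (Finset.mem_univ _)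
        · intro i t
          exact mem_filter_cond C _ (fun i t ht => InE_bigPerm_path C p.1.val p.2 i ht) i t
      · -- injective
        rintro ⟨ε1, π1⟩ _ ⟨ε2, π2⟩ _ heq
        have hσeq : bigPerm C ε1.val π1 = bigPerm C ε2.val π2 := by
          apply perm_eq_of_cycleVec_eq h3 heq
          · have e1 := bigPerm_start C ε1.val π1 ε1.2 (p := 0) (by omega)
            have e2 := bigPerm_start C ε2.val π2 ε2.2 (p := 0) (by omega)
            rw [Nat.cast_zero] at e1 e2
            rw [e1, e2]
          · have e1 := bigPerm_start C ε1.val π1 ε1.2 (p := 1) (C.hks 0)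
            have e2 := bigPerm_start C ε2.val π2 ε2.2 (p := 1) (C.hks 0)
            rw [Nat.cast_one] at e1 e2
            rw [e1, e2]
        obtain ⟨hε, hπ⟩ := params_inj C (bigL_eq_of_bigPerm_eq C hσeq)
        rw [Prod.mk.injEq]
        exact ⟨Subtype.ext hε, hπ⟩
      · -- surjective
        intro x hx
        obtain ⟨hxham, hcond⟩ := Finset.mem_filter.mp hx
        obtain ⟨σ0, _, hσ0x⟩ := Finset.mem_image.mp hxham
        have hσ0path : ∀ (i : Fin (m' + 1)) (t : ℕ), t < ks i →
            InE σ0 s(v i ↑t, v i ↑(t + 1)) :=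
          fun i t ht => cond_to_path C hσ0x hcond i t ht
        obtain ⟨τ, hτvec, hτ0⟩ := exists_normalized C σ0 (hσ0path 0)
        have hτpath : ∀ (i : Fin (m' + 1)) (t : ℕ), t < ks i →
            InE τ s(v i ↑t, v i ↑(t + 1)) := by
          intro i t ht
          have hne : v i ((t : ℕ) : Fin (ks i + 1)) ≠ v i ↑(t + 1) := by
            intro hh
            have := C.vinj (by omega) (by omega) hh
            omega
          have hnd : ¬ (s(v i ↑t, v i ↑(t + 1)) : Sym2 (Fin n)).IsDiag := by
            rw [Sym2.isDiag_iff_proj_eq]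
            exact hne
          exact (InE_iff_of_cycleVec_eq hτvec hnd).mpr (hσ0path i t ht)
        obtain ⟨os, ε, hcov, hfull⟩ := cover_full C hτpath hτ0
        obtain ⟨π, hbp⟩ := cover_to_params C hcov hfull
        refine ⟨(⟨ε, hcov.eps0⟩, π), Finset.mem_univ _, ?_⟩
        rw [hbp, hτvec, hσ0x]
    rw [← key, Finset.card_univ, Fintype.card_prod, card_eps,
      Fintype.card_equiv ((Fintype.equivFinOfCardEq (card_obj' C)).symm), Fintype.card_fin]
    congr 1
  · -- degenerate case : n = 2, k = 1, m' = 0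
    have hn2 : n = 2 := by omega
    have hm0 : m' = 0 := by omega
    have hk1 : k = 1 := by omega
    subst hn2 hk1 hm0
    haveI : NeZero 2 := ⟨by norm_num⟩
    have hgen : ∀ (ρ : Equiv.Perm (Fin 2)) (a b : Fin 2), a ≠ b → InE ρ s(a, b) := by
      intro ρ a b hab
      refine ⟨ρ.symm a, ?_⟩
      have h1 : ρ (ρ.symm a) = a := Equiv.apply_symm_apply ρ a
      have h2 : ρ (ρ.symm a + 1) = b := by
        have hne2 : ρ.symm a + 1 ≠ ρ.symm a := succ_ne_self_fin (by norm_num) _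
        have hne3 : ρ (ρ.symm a + 1) ≠ a := by
          intro h
          exact hne2 (ρ.injective (h.trans h1.symm))
        have hval : ∀ z : Fin 2, z ≠ a → z = b := by
          intro z hz
          have ha2 := a.isLt
          have hb2 := b.isLt
          have hz2 := z.isLt
          have h5 : z.val ≠ a.val := fun hh => hz (Fin.ext hh)
          have h6 : a.val ≠ b.val := fun hh => hab (Fin.ext hh)
          apply Fin.ext
          omega
        exact hval _ hne3
      rw [h1, h2]
    have hall : ∀ σ : Equiv.Perm (Fin 2), cycleVec 2 σ = cycleVec 2 (Equiv.refl (Fin 2)) := by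
      intro σ
      funext e
      obtain ⟨e', hd⟩ := e
      induction e' using Sym2.ind with
      | _ a b =>
        have hab : a ≠ b := by rwa [Sym2.isDiag_iff_proj_eq] at hd
        rw [cycleVec_apply, cycleVec_apply]
        rw [if_pos (hgen σ a b hab), if_pos (hgen (Equiv.refl _) a b hab)]
    have hham : hamX 2 = {cycleVec 2 (Equiv.refl (Fin 2))} := by
      apply Finset.Subset.antisymm
      · intro x hx
        obtain ⟨σ, _, rfl⟩ := Finset.mem_image.mp hx
        rw [Finset.mem_singleton]
        exact hall σ
      · intro x hx
        rw [Finset.mem_singleton] at hx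
        subst hx
        exact Finset.mem_image_of_mem _ (Finset.mem_univ _)
    rw [hham, Finset.filter_singleton, if_pos ?cond]
    · simp
    case cond =>
      intro i t
      have hne : v i t.castSucc ≠ v i t.succ := by
        intro h
        have h2 := hv (a₁ := ⟨i, t.castSucc⟩) (a₂ := ⟨i, t.succ⟩) h
        injection h2 with h2a h2b
        have h3 : t.castSucc = t.succ := h2b
        have h4 := congrArg Fin.val h3
        rw [Fin.coe_castSucc, Fin.val_succ] at h4
        omega
      have hnd : ¬ (s(v i t.castSucc, v i t.succ) : Sym2 (Fin 2)).IsDiag := by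
        rw [Sym2.isDiag_iff_proj_eq]
        exact hne
      rw [xval_eq' hne hnd, cycleVec_eq_one_iff]
      exact hgen _ _ _ hne
end
end

section
/- Fix n ≥ 3, a positive integer k, y ∈ X, and f ∈ P_k. Suppose p_1, ..., p_m are polynomials of degree at most k on ℝ^{n(n-1)/2}, each taking only the values 0 or 1 on X, and suppose there exist real constants 0 < b_k < c_k such that for every unordered pair {i,j} with i ≠ j: Σ_{x∈X, x contains edge {i,j}} Σ_{ℓ=1}^{m} p_ℓ(x) equals b_k if {i,j} is not an edge of y, and equals c_k if {i,j} is an edge of y. Then f(y) ≥ -b_k(n-1)/(2(c_k - b_k)). -/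
open Finset
noncomputable section
open scoped Classical

private lemma aux_rot_ne {n : ℕ} (hn : 3 ≤ n) (i : Fin n) : finRotate n i ≠ i := by
  obtain ⟨m, rfl⟩ : ∃ m, n = m + 1 := ⟨n - 1, by omega⟩
  rw [finRotate_succ_apply]
  intro h
  have h' : ((i : Fin (m+1)) + 1).val = i.val := congrArg Fin.val h
  rw [Fin.val_add] at h'
  have h1 : (1 : Fin (m+1)).val = 1 := by rw [Fin.val_one']; exact Nat.mod_eq_of_lt (by omega)
  rw [h1] at h'
  have hi := i.isLt
  rcases Nat.lt_or_ge (i.val + 1) (m+1) with hlt | hge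
  · rw [Nat.mod_eq_of_lt hlt] at h'; omega
  · have h2 : i.val + 1 = m + 1 := by omega
    rw [h2, Nat.mod_self] at h'; omega

private lemma aux_rot_rot_ne {n : ℕ} (hn : 3 ≤ n) (i : Fin n) :
    finRotate n (finRotate n i) ≠ i := by
  obtain ⟨m, rfl⟩ : ∃ m, n = m + 1 := ⟨n - 1, by omega⟩
  rw [finRotate_succ_apply, finRotate_succ_apply]
  intro h
  have h' : ((i : Fin (m+1)) + 1 + 1).val = i.val := congrArg Fin.val h
  rw [Fin.val_add, Fin.val_add] at h'
  have h1 : (1 : Fin (m+1)).val = 1 := by rw [Fin.val_one']; exact Nat.mod_eq_of_lt (by omega)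
  rw [h1] at h'
  have hi := i.isLt
  rcases Nat.lt_or_ge (i.val + 1) (m+1) with hlt | hge
  · rw [Nat.mod_eq_of_lt hlt] at h'
    rcases Nat.lt_or_ge (i.val + 1 + 1) (m+1) with hlt2 | hge2
    · rw [Nat.mod_eq_of_lt hlt2] at h'; omega
    · have h2 : i.val + 1 + 1 = m + 1 := by omega
      rw [h2, Nat.mod_self] at h'; omega
  · have h2 : i.val + 1 = m + 1 := by omega
    rw [h2, Nat.mod_self] at h'
    have h3 : (0 + 1) % (m + 1) = 1 := by
      rw [Nat.zero_add]; exact Nat.mod_eq_of_lt (by omega)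
    rw [h3] at h'; omega

private lemma aux_map_not_diag {n : ℕ} (τ : Equiv.Perm (Fin n)) :
    ∀ z : Sym2 (Fin n), ¬ z.IsDiag → ¬ (Sym2.map τ z).IsDiag := by
  intro z
  induction z using Sym2.ind with
  | _ a b =>
    simp [Sym2.map_pair_eq, Sym2.mk_isDiag_iff, τ.injective.eq_iff]

/-- action of a permutation on edge indices -/
private def edgeMap {n : ℕ} (τ : Equiv.Perm (Fin n)) (e : EdgeIdx n) : EdgeIdx n :=
  ⟨Sym2.map τ e.1, aux_map_not_diag τ e.1 e.2⟩

private lemma edgeMap_comp {n : ℕ} (τ τ' : Equiv.Perm (Fin n)) (e : EdgeIdx n) :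
    edgeMap τ (edgeMap τ' e) = edgeMap (τ'.trans τ) e := by
  apply Subtype.ext
  show Sym2.map (⇑τ) (Sym2.map (⇑τ') e.1) = Sym2.map (⇑(τ'.trans τ)) e.1
  rw [Sym2.map_map]
  rfl

private lemma edgeMap_symm {n : ℕ} (τ : Equiv.Perm (Fin n)) (e : EdgeIdx n) :
    edgeMap τ.symm (edgeMap τ e) = e := by
  rw [edgeMap_comp]
  apply Subtype.ext
  show Sym2.map (⇑(τ.trans τ.symm)) e.1 = e.1
  have : (⇑(τ.trans τ.symm)) = id := by funext x; simp
  rw [this, Sym2.map_id, id_eq]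

private lemma edgeMap_symm' {n : ℕ} (τ : Equiv.Perm (Fin n)) (e : EdgeIdx n) :
    edgeMap τ (edgeMap τ.symm e) = e := by
  simpa using edgeMap_symm τ.symm e

private lemma cycleVec_edgeMap {n : ℕ} (σ τ : Equiv.Perm (Fin n)) (e : EdgeIdx n) :
    cycleVec n σ (edgeMap τ e) = cycleVec n (σ.trans τ.symm) e := by
  unfold cycleVec
  congr 1
  simp only [eq_iff_iff]
  constructor
  · rintro ⟨i, hi⟩
    refine ⟨i, ?_⟩
    have hi' : Sym2.map (⇑τ) e.1 = s(σ i, σ ((finRotate n) i)) := hi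
    have := congrArg (Sym2.map (⇑τ.symm)) hi'
    rw [Sym2.map_map, Sym2.map_pair_eq] at this
    have h2 : Sym2.map (⇑τ.symm ∘ ⇑τ) e.1 = e.1 := by
      have hid : (⇑τ.symm ∘ ⇑τ) = id := by funext x; simp
      rw [hid, Sym2.map_id, id_eq]
    rw [h2] at this
    exact this
  · rintro ⟨i, hi⟩
    refine ⟨i, ?_⟩
    show Sym2.map (⇑τ) e.1 = _
    rw [hi, Sym2.map_pair_eq]
    simp

private lemma aux_row_sum {n : ℕ} (hn : 3 ≤ n) (σ : Equiv.Perm (Fin n)) :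
    ∑ e : EdgeIdx n, cycleVec n σ e = (n : ℝ) := by
  have hψne : ∀ i : Fin n, ¬ (s(σ i, σ (finRotate n i)) : Sym2 (Fin n)).IsDiag := by
    intro i
    rw [Sym2.mk_isDiag_iff]
    intro h
    exact aux_rot_ne hn i (σ.injective h.symm)
  set ψ : Fin n → EdgeIdx n := fun i => ⟨s(σ i, σ (finRotate n i)), hψne i⟩ with hψ
  have hinj : Function.Injective ψ := by
    intro i j hij
    have h2 : s(σ i, σ (finRotate n i)) = s(σ j, σ (finRotate n j)) :=
      congrArg Subtype.val hij
    rw [Sym2.eq_iff] at h2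
    rcases h2 with ⟨h, -⟩ | ⟨h1, h2⟩
    · exact σ.injective h
    · exfalso
      have hji : i = finRotate n j := σ.injective h1
      have hij' : finRotate n i = j := σ.injective h2
      exact aux_rot_rot_ne hn i (by rw [← hij'] at hji; exact hji.symm)
  have hfilter : (Finset.univ.filter fun e : EdgeIdx n =>
      ∃ i, (e : Sym2 (Fin n)) = s(σ i, σ (finRotate n i))) = Finset.image ψ Finset.univ := by
    ext e
    simp only [mem_filter, mem_univ, true_and, mem_image]
    constructor
    · rintro ⟨i, hi⟩
      exact ⟨i, Subtype.ext hi.symm⟩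
    · rintro ⟨i, -, rfl⟩
      exact ⟨i, rfl⟩
  have : ∑ e : EdgeIdx n, cycleVec n σ e =
      ((Finset.univ.filter fun e : EdgeIdx n =>
        ∃ i, (e : Sym2 (Fin n)) = s(σ i, σ (finRotate n i))).card : ℝ) := by
    simp only [cycleVec]
    rw [Finset.sum_boole]
  rw [this, hfilter, Finset.card_image_of_injective _ hinj, card_univ, Fintype.card_fin]

private lemma aux_T_invariant {n : ℕ} (τ : Equiv.Perm (Fin n)) (e : EdgeIdx n) :
    ∑ x ∈ hamX n, x (edgeMap τ e) = ∑ x ∈ hamX n, x e := by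
  refine Finset.sum_bij' (fun x _ => x ∘ edgeMap τ) (fun x _ => x ∘ edgeMap τ.symm)
    ?_ ?_ ?_ ?_ ?_
  · intro x hx
    obtain ⟨σ, -, rfl⟩ := Finset.mem_image.1 hx
    refine Finset.mem_image.2 ⟨σ.trans τ.symm, mem_univ _, ?_⟩
    funext e'
    exact (cycleVec_edgeMap σ τ e').symm
  · intro x hx
    obtain ⟨σ, -, rfl⟩ := Finset.mem_image.1 hx
    refine Finset.mem_image.2 ⟨σ.trans τ.symm.symm, mem_univ _, ?_⟩
    funext e'
    exact (cycleVec_edgeMap σ τ.symm e').symm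
  · intro x hx
    funext e'
    simp only [Function.comp_apply]
    rw [edgeMap_symm']
  · intro x hx
    funext e'
    simp only [Function.comp_apply]
    rw [edgeMap_symm]
  · intro x hx
    simp only [Function.comp_apply]

private lemma aux_exists_perm {n : ℕ} (a b c d : Fin n) (hab : a ≠ b) (hcd : c ≠ d) :
    ∃ τ : Equiv.Perm (Fin n), τ a = c ∧ τ b = d := by
  refine ⟨(Equiv.swap a c).trans (Equiv.swap ((Equiv.swap a c) b) d), ?_, ?_⟩
  · simp only [Equiv.trans_apply, Equiv.swap_apply_left]
    apply Equiv.swap_apply_of_ne_of_ne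
    · intro h
      apply hab
      apply (Equiv.swap a c).injective
      rw [Equiv.swap_apply_left]
      exact h
    · exact hcd
  · simp only [Equiv.trans_apply, Equiv.swap_apply_left]

private lemma aux_edge_transitive {n : ℕ} (e e' : EdgeIdx n) :
    ∃ τ : Equiv.Perm (Fin n), edgeMap τ e = e' := by
  obtain ⟨a, b, hab⟩ : ∃ a b, e.1 = s(a, b) := by
    induction e.1 using Sym2.ind with
    | _ a b => exact ⟨a, b, rfl⟩
  obtain ⟨c, d, hcd⟩ : ∃ c d, e'.1 = s(c, d) := by
    induction e'.1 using Sym2.ind with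
    | _ c d => exact ⟨c, d, rfl⟩
  have hab' : a ≠ b := by
    intro h; exact e.2 (by rw [hab, Sym2.mk_isDiag_iff]; exact h)
  have hcd' : c ≠ d := by
    intro h; exact e'.2 (by rw [hcd, Sym2.mk_isDiag_iff]; exact h)
  obtain ⟨τ, h1, h2⟩ := aux_exists_perm a b c d hab' hcd'
  refine ⟨τ, Subtype.ext ?_⟩
  show Sym2.map (⇑τ) e.1 = e'.1
  rw [hab, hcd, Sym2.map_pair_eq, h1, h2]

/-- A function `f : X → ℝ` belongs to `P_k` iff it is the restriction to `X` of a
linear function `F` on `ℝ^{n(n-1)/2}` with average value `1` on `X` such that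
`(1/|X|) Σ_{x∈X} F(x) h(x)² ≥ 0` for every polynomial `h` of degree at most `k`. -/
def memP (n k : ℕ) (F : (EdgeIdx n → ℝ) →ₗ[ℝ] ℝ) : Prop :=
  ((hamX n).card : ℝ)⁻¹ * ∑ x ∈ hamX n, F x = 1 ∧
  ∀ h : MvPolynomial (EdgeIdx n) ℝ, h.totalDegree ≤ k →
    0 ≤ ((hamX n).card : ℝ)⁻¹ * ∑ x ∈ hamX n, F x * (MvPolynomial.eval x h) ^ 2

/-- **Lemma `bound`.** Fix `y ∈ X` and `f ∈ P_k`.  Suppose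
`p_1, …, p_m` are polynomials of degree at most `k`, each taking only the values
`0` or `1` on `X`, and there are constants `0 < b < c` such that for every
unordered pair `e = {i,j}` of distinct vertices,
`Σ_{x∈X, x contains e} Σ_ℓ p_ℓ(x)` equals `c` if `e` is an edge of `y` and `b`
otherwise.  Then `f(y) ≥ -b(n-1)/(2(c-b))`. -/
theorem lower_bound_from_indicator_polynomials
    (n k m : ℕ) (hn : 3 ≤ n) (hk : 1 ≤ k)
    (F : (EdgeIdx n → ℝ) →ₗ[ℝ] ℝ) (hF : memP n k F)
    (y : EdgeIdx n → ℝ) (hy : y ∈ hamX n)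
    (ps : Fin m → MvPolynomial (EdgeIdx n) ℝ)
    (hdeg : ∀ ℓ, (ps ℓ).totalDegree ≤ k)
    (h01 : ∀ x ∈ hamX n, ∀ ℓ,
      MvPolynomial.eval x (ps ℓ) = 0 ∨ MvPolynomial.eval x (ps ℓ) = 1)
    (b c : ℝ) (hb : 0 < b) (hbc : b < c)
    (hcount : ∀ e : EdgeIdx n,
      (∑ x ∈ (hamX n).filter (fun x => x e = 1), ∑ ℓ, MvPolynomial.eval x (ps ℓ))
        = if y e = 1 then c else b) :
    -(b * ((n : ℝ) - 1) / (2 * (c - b))) ≤ F y := by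
  classical
  obtain ⟨havg, hpos⟩ := hF
  have hXne : (hamX n).Nonempty := ⟨y, hy⟩
  have hXpos : 0 < ((hamX n).card : ℝ) := by exact_mod_cast Finset.card_pos.2 hXne
  have h01x : ∀ x ∈ hamX n, ∀ e : EdgeIdx n, x e = 0 ∨ x e = 1 := by
    intro x hx e
    obtain ⟨σ, -, rfl⟩ := Finset.mem_image.1 hx
    unfold cycleVec
    split
    · right; rfl
    · left; rfl
  set a : EdgeIdx n → ℝ := fun e => F (fun j => if e = j then 1 else 0) with ha
  have hFx : ∀ x : EdgeIdx n → ℝ, F x = ∑ e : EdgeIdx n, x e * a e := by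
    intro x
    calc F x = F (∑ e : EdgeIdx n, x e • fun j => if e = j then (1:ℝ) else 0) := by
          rw [← pi_eq_sum_univ]
      _ = ∑ e : EdgeIdx n, x e * a e := by
          rw [map_sum]
          refine Finset.sum_congr rfl fun e _ => ?_
          simp only [map_smul, smul_eq_mul, ha]
  -- an edge index exists
  obtain ⟨e₀⟩ : Nonempty (EdgeIdx n) :=
    ⟨⟨s((⟨0, by omega⟩ : Fin n), (⟨1, by omega⟩ : Fin n)), by
      simp [Sym2.mk_isDiag_iff, Fin.ext_iff]⟩⟩
  have hTconst : ∀ e : EdgeIdx n, (∑ x ∈ hamX n, x e) = ∑ x ∈ hamX n, x e₀ := by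
    intro e
    obtain ⟨τ, hτ⟩ := aux_edge_transitive e₀ e
    rw [← hτ]
    exact aux_T_invariant τ e₀
  have hcolsum : ∑ e : EdgeIdx n, ∑ x ∈ hamX n, x e = (n : ℝ) * (hamX n).card := by
    rw [Finset.sum_comm]
    have hrow : ∀ x ∈ hamX n, ∑ e : EdgeIdx n, x e = (n : ℝ) := by
      intro x hx
      obtain ⟨σ, -, rfl⟩ := Finset.mem_image.1 hx
      exact aux_row_sum hn σ
    rw [Finset.sum_congr rfl hrow, Finset.sum_const, nsmul_eq_mul, mul_comm]
  have hEcard : ((Fintype.card (EdgeIdx n)) : ℝ) = (n : ℝ) * ((n : ℝ) - 1) / 2 := by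
    rw [Sym2.card_subtype_not_diag, Fintype.card_fin, Nat.cast_choose_two]
  have hETe : ((n : ℝ) * ((n : ℝ) - 1) / 2) * (∑ x ∈ hamX n, x e₀)
      = (n : ℝ) * (hamX n).card := by
    rw [← hEcard, ← hcolsum, Finset.sum_congr rfl (fun e _ => hTconst e),
      Finset.sum_const, card_univ, nsmul_eq_mul]
  have hsumF : ∑ x ∈ hamX n, F x = ((hamX n).card : ℝ) := by
    have h2 : ((hamX n).card : ℝ) * (((hamX n).card : ℝ)⁻¹ * ∑ x ∈ hamX n, F x)
        = ((hamX n).card : ℝ) * 1 := by rw [havg]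
    rwa [← mul_assoc, mul_inv_cancel₀ (ne_of_gt hXpos), one_mul, mul_one] at h2
  have hFsum2 : ∑ x ∈ hamX n, F x
      = (∑ e : EdgeIdx n, a e) * (∑ x ∈ hamX n, x e₀) := by
    calc ∑ x ∈ hamX n, F x
        = ∑ x ∈ hamX n, ∑ e : EdgeIdx n, x e * a e :=
          Finset.sum_congr rfl fun x _ => hFx x
      _ = ∑ e : EdgeIdx n, ∑ x ∈ hamX n, x e * a e := Finset.sum_comm
      _ = ∑ e : EdgeIdx n, (∑ x ∈ hamX n, x e) * a e := by
          refine Finset.sum_congr rfl fun e _ => ?_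
          rw [Finset.sum_mul]
      _ = ∑ e : EdgeIdx n, (∑ x ∈ hamX n, x e₀) * a e := by
          refine Finset.sum_congr rfl fun e _ => ?_
          rw [hTconst e]
      _ = (∑ e : EdgeIdx n, a e) * (∑ x ∈ hamX n, x e₀) := by
          rw [← Finset.mul_sum, mul_comm]
  have hn0 : (0 : ℝ) < (n : ℝ) := by
    have : 0 < n := by omega
    exact_mod_cast this
  have hSa : (∑ e : EdgeIdx n, a e) = ((n : ℝ) - 1) / 2 := by
    have hTe2 : ((n : ℝ) - 1) * (∑ x ∈ hamX n, x e₀) = 2 * ((hamX n).card : ℝ) := by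
      apply mul_left_cancel₀ (ne_of_gt hn0)
      linear_combination 2 * hETe
    have h1 : (∑ e : EdgeIdx n, a e) * (∑ x ∈ hamX n, x e₀) = ((hamX n).card : ℝ) := by
      rw [← hFsum2, hsumF]
    have hkey : 2 * (∑ e : EdgeIdx n, a e) * ((hamX n).card : ℝ)
        = ((n : ℝ) - 1) * ((hamX n).card : ℝ) := by
      linear_combination ((n : ℝ) - 1) * h1 - (∑ e : EdgeIdx n, a e) * hTe2
    have h3 : 2 * (∑ e : EdgeIdx n, a e) = (n : ℝ) - 1 :=
      mul_right_cancel₀ (ne_of_gt hXpos) hkey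
    linarith
  -- positivity of the weighted sum
  have hsq : ∀ ℓ : Fin m, 0 ≤ ∑ x ∈ hamX n, F x * MvPolynomial.eval x (ps ℓ) := by
    intro ℓ
    have h := hpos (ps ℓ) (hdeg ℓ)
    have h2 : ∑ x ∈ hamX n, F x * (MvPolynomial.eval x (ps ℓ)) ^ 2
        = ∑ x ∈ hamX n, F x * MvPolynomial.eval x (ps ℓ) := by
      refine Finset.sum_congr rfl fun x hx => ?_
      rcases h01 x hx ℓ with h0 | h0 <;> rw [h0] <;> ring
    rw [h2] at h
    have h3 := mul_nonneg (le_of_lt hXpos) h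
    rwa [← mul_assoc, mul_inv_cancel₀ (ne_of_gt hXpos), one_mul] at h3
  have hA : 0 ≤ ∑ x ∈ hamX n, F x * ∑ ℓ, MvPolynomial.eval x (ps ℓ) := by
    have hswap : ∑ x ∈ hamX n, F x * ∑ ℓ, MvPolynomial.eval x (ps ℓ)
        = ∑ ℓ, ∑ x ∈ hamX n, F x * MvPolynomial.eval x (ps ℓ) := by
      calc ∑ x ∈ hamX n, F x * ∑ ℓ, MvPolynomial.eval x (ps ℓ)
          = ∑ x ∈ hamX n, ∑ ℓ, F x * MvPolynomial.eval x (ps ℓ) :=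
            Finset.sum_congr rfl fun x _ => by rw [Finset.mul_sum]
        _ = ∑ ℓ, ∑ x ∈ hamX n, F x * MvPolynomial.eval x (ps ℓ) := Finset.sum_comm
    rw [hswap]
    exact Finset.sum_nonneg fun ℓ _ => hsq ℓ
  have hfilt : ∀ e : EdgeIdx n,
      ∑ x ∈ hamX n, (x e) * (∑ ℓ, MvPolynomial.eval x (ps ℓ))
        = if y e = 1 then c else b := by
    intro e
    rw [← hcount e, Finset.sum_filter]
    refine Finset.sum_congr rfl fun x hx => ?_
    rcases h01x x hx e with h0 | h0
    · rw [h0, if_neg (by norm_num : ¬ (0 : ℝ) = 1), zero_mul]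
    · rw [h0, if_pos rfl, one_mul]
  have hAeq : ∑ x ∈ hamX n, F x * (∑ ℓ, MvPolynomial.eval x (ps ℓ))
      = b * (∑ e : EdgeIdx n, a e) + (c - b) * F y := by
    calc ∑ x ∈ hamX n, F x * (∑ ℓ, MvPolynomial.eval x (ps ℓ))
        = ∑ x ∈ hamX n, (∑ e : EdgeIdx n, x e * a e) * (∑ ℓ, MvPolynomial.eval x (ps ℓ)) :=
          Finset.sum_congr rfl fun x _ => by rw [← hFx x]
      _ = ∑ x ∈ hamX n, ∑ e : EdgeIdx n, (x e * a e) * (∑ ℓ, MvPolynomial.eval x (ps ℓ)) :=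
          Finset.sum_congr rfl fun x _ => by rw [Finset.sum_mul]
      _ = ∑ e : EdgeIdx n, ∑ x ∈ hamX n, (x e * a e) * (∑ ℓ, MvPolynomial.eval x (ps ℓ)) :=
          Finset.sum_comm
      _ = ∑ e : EdgeIdx n, a e * ∑ x ∈ hamX n, (x e) * (∑ ℓ, MvPolynomial.eval x (ps ℓ)) := by
          refine Finset.sum_congr rfl fun e _ => ?_
          rw [Finset.mul_sum]
          refine Finset.sum_congr rfl fun x _ => by ring
      _ = ∑ e : EdgeIdx n, a e * (if y e = 1 then c else b) := by
          refine Finset.sum_congr rfl fun e _ => by rw [hfilt e]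
      _ = ∑ e : EdgeIdx n, (b * a e + (c - b) * (y e * a e)) := by
          refine Finset.sum_congr rfl fun e _ => ?_
          rcases h01x y hy e with h0 | h0
          · rw [h0, if_neg (by norm_num : ¬ (0 : ℝ) = 1)]; ring
          · rw [h0, if_pos rfl]; ring
      _ = b * (∑ e : EdgeIdx n, a e) + (c - b) * (∑ e : EdgeIdx n, y e * a e) := by
          rw [Finset.sum_add_distrib, ← Finset.mul_sum, ← Finset.mul_sum]
      _ = b * (∑ e : EdgeIdx n, a e) + (c - b) * F y := by rw [← hFx y]
  have h0 : (0 : ℝ) ≤ b * (((n : ℝ) - 1) / 2) + (c - b) * F y := by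
    rw [← hSa, ← hAeq]
    exact hA
  have h2d : (0 : ℝ) < 2 * (c - b) := by linarith
  rw [← neg_div, div_le_iff₀ h2d]
  nlinarith [h0]
end
end

section
/- Let X ⊂ {0,1}^n ⊂ ℝ^n be a nonempty finite set of 0-1 vectors, and let f : X → ℝ be the restriction to X of an affine function on ℝ^n with (1/|X|) Σ_{x∈X} f(x) = 1. If (1/|X|) Σ_{x∈X} f(x) h(x)² ≥ 0 for every polynomial h on ℝ^n of degree at most n, then f(x) ≥ 0 for every x ∈ X. (In other words, for a set of 0-1 vectors in ℝ^n, the n-th relaxation P_n equals Q.) -/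
open Finset
noncomputable section
open scoped Classical

/-- **the case of a 0-1 polytope: `P_n = Q`.**
Let `X ⊂ {0,1}^n ⊂ ℝ^n` be a nonempty finite set of 0-1 vectors and let `f` be the
restriction to `X` of an affine function `F` on `ℝ^n` with average value `1` on `X`.
If `(1/|X|) Σ_{x∈X} F(x) h(x)² ≥ 0` for every polynomial `h` of degree at most `n`,
then `F(x) ≥ 0` for every `x ∈ X`. -/
theorem zero_one_polytope_Pn_eq_Q
    (n : ℕ) (X : Finset (Fin n → ℝ)) (hX : X.Nonempty)
    (h01 : ∀ x ∈ X, ∀ i, x i = 0 ∨ x i = 1)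
    (F : (Fin n → ℝ) →ᵃ[ℝ] ℝ)
    (havg : (X.card : ℝ)⁻¹ * ∑ x ∈ X, F x = 1)
    (hpsd : ∀ h : MvPolynomial (Fin n) ℝ, h.totalDegree ≤ n →
      0 ≤ (X.card : ℝ)⁻¹ * ∑ x ∈ X, F x * (MvPolynomial.eval x h) ^ 2) :
    ∀ x ∈ X, 0 ≤ F x := by
  intro x₀ hx₀
  -- indicator polynomial of x₀ on {0,1}^n
  set h : MvPolynomial (Fin n) ℝ :=
    ∏ i : Fin n, (if x₀ i = 1 then MvPolynomial.X i else 1 - MvPolynomial.X i) with hh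
  have hdeg : h.totalDegree ≤ n := by
    calc h.totalDegree ≤ ∑ i : Fin n,
        (if x₀ i = 1 then MvPolynomial.X i else
          (1 - MvPolynomial.X i : MvPolynomial (Fin n) ℝ)).totalDegree :=
        MvPolynomial.totalDegree_finset_prod _ _
      _ ≤ ∑ _i : Fin n, 1 := by
        refine Finset.sum_le_sum fun i _ => ?_
        split_ifs
        · simp [MvPolynomial.totalDegree_X]
        · rw [sub_eq_add_neg]
          refine (MvPolynomial.totalDegree_add _ _).trans ?_
          simp [MvPolynomial.totalDegree_neg, MvPolynomial.totalDegree_X,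
            MvPolynomial.totalDegree_one]
      _ = n := by simp
  have heval : ∀ x ∈ X, MvPolynomial.eval x h = if x = x₀ then 1 else 0 := by
    intro x hx
    rw [hh, map_prod]
    by_cases hxx : x = x₀
    · subst hxx
      rw [if_pos rfl]
      refine Finset.prod_eq_one fun i _ => ?_
      rcases h01 x hx i with h0 | h1
      · rw [if_neg (by rw [h0]; norm_num)]; simp [h0]
      · rw [if_pos h1]; simp [h1]
    · rw [if_neg hxx]
      obtain ⟨i, hi⟩ : ∃ i, x i ≠ x₀ i := by
        by_contra hc
        push_neg at hc
        exact hxx (funext hc)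
      refine Finset.prod_eq_zero (Finset.mem_univ i) ?_
      rcases h01 x hx i with h0 | h1
      · have : x₀ i = 1 := by
          rcases h01 x₀ hx₀ i with h0' | h1'
          · exact absurd (h0.trans h0'.symm) hi
          · exact h1'
        rw [if_pos this]; simp [h0]
      · have : x₀ i ≠ 1 := by
          rcases h01 x₀ hx₀ i with h0' | h1'
          · rw [h0']; norm_num
          · exact absurd (h1.trans h1'.symm) hi
        rw [if_neg this]; simp [h1]
  have hsum : ∑ x ∈ X, F x * (MvPolynomial.eval x h) ^ 2 = F x₀ := by
    rw [Finset.sum_eq_single x₀]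
    · rw [heval x₀ hx₀, if_pos rfl]; ring
    · intro x hx hne
      rw [heval x hx, if_neg hne]; ring
    · intro hc; exact absurd hx₀ hc
  have := hpsd h hdeg
  rw [hsum] at this
  have hcard : (0 : ℝ) < (X.card : ℝ)⁻¹ := by
    have : 0 < X.card := Finset.card_pos.mpr hX
    positivity
  nlinarith
end
end

section
/- Let U = {ℓ_1, ℓ_2, ..., ℓ_m} ⊂ {1, ..., n} with 2 ≤ m < n, where ℓ_1, ..., ℓ_m are distinct. Then every incidence vector x ∈ X of a Hamiltonian cycle containing all the edges {ℓ_1,ℓ_2}, {ℓ_2,ℓ_3}, ..., {ℓ_{m-1},ℓ_m} satisfies Σ_{u∈U, v∉U} x_{uv} = 2. Consequently, for the polynomial p_U(x) = x_{ℓ_1ℓ_2} x_{ℓ_2ℓ_3} ⋯ x_{ℓ_{m-1}ℓ_m} of degree m-1, one has (1/|X|) Σ_{x∈X} h_U(x) p_U(x)² = 0, so that h_U lies on the boundary of P_k for every k ≥ m-1. -/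
open Finset
noncomputable section
open scoped Classical
open scoped Fin.NatCast Fin.CommRing

lemma finRotate_apply_nz {n : ℕ} [NeZero n] (i : Fin n) : finRotate n i = i + 1 := by
  rcases n with _ | n
  · exact i.elim0
  · exact finRotate_succ_apply i

lemma crossing_count {n m : ℕ} [NeZero n] (hm : 0 < m) (hmn : m < n) (a : Fin n) :
    (Finset.univ.filter (fun i : Fin n =>
      ¬(((i - a).val < m) ↔ ((i + 1 - a).val < m)))).card = 2 := by
  have hn : 0 < n := lt_trans hm hmn
  have hn2 : 2 ≤ n := by omega
  have hkey : ∀ i : Fin n, (¬(((i - a).val < m) ↔ ((i + 1 - a).val < m))) ↔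
      (i = a + ⟨m-1, by omega⟩ ∨ i = a + ⟨n-1, by omega⟩) := by
    intro i
    set k := (i - a).val with hk
    have hklt : k < n := (i - a).isLt
    have h1 : (i + 1 - a).val = (k + 1) % n := by
      have e : i + 1 - a = (i - a) + 1 := by ring
      rw [e, Fin.val_add, Fin.val_one', Nat.mod_eq_of_lt (show 1 < n by omega)]
    have heq1 : i = a + (⟨m-1, by omega⟩ : Fin n) ↔ k = m - 1 := by
      rw [← sub_eq_iff_eq_add']
      exact ⟨fun h => by rw [hk, h], fun h => Fin.ext h⟩
    have heq2 : i = a + (⟨n-1, by omega⟩ : Fin n) ↔ k = n - 1 := by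
      rw [← sub_eq_iff_eq_add']
      exact ⟨fun h => by rw [hk, h], fun h => Fin.ext h⟩
    rw [h1, heq1, heq2]
    constructor
    · intro h
      rcases eq_or_ne k (n-1) with hk1 | hk1
      · exact Or.inr hk1
      · have : (k+1) % n = k+1 := Nat.mod_eq_of_lt (by omega)
        left; omega
    · rintro (h | h)
      · have : (k+1) % n = k+1 := Nat.mod_eq_of_lt (by omega)
        omega
      · have : (k+1) % n = 0 := by
          rw [h, Nat.sub_add_cancel hn, Nat.mod_self]
        omega
  rw [Finset.filter_congr (fun i _ => by rw [hkey i])]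
  rw [Finset.filter_or]
  have c1 : Finset.univ.filter (fun i : Fin n => i = a + (⟨m-1, by omega⟩ : Fin n)) = {a + ⟨m-1, by omega⟩} := by
    ext i; simp
  have c2 : Finset.univ.filter (fun i : Fin n => i = a + (⟨n-1, by omega⟩ : Fin n)) = {a + ⟨n-1, by omega⟩} := by
    ext i; simp
  rw [c1, c2]
  have hne : a + (⟨m-1, by omega⟩ : Fin n) ≠ a + (⟨n-1, by omega⟩ : Fin n) := by
    intro h
    have h2 := congrArg Fin.val (add_left_cancel h)
    simp at h2
    omega
  rw [Finset.card_union_of_disjoint (by simp; omega)]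
  simp

lemma finRotate_apply' {n : ℕ} [NeZero n] (i : Fin n) : finRotate n i = i + 1 := by
  rcases n with _ | n
  · exact i.elim0
  · exact finRotate_succ_apply i

lemma xval_cycleVec {n : ℕ} [NeZero n] (σ : Equiv.Perm (Fin n)) {u v : Fin n} (huv : u ≠ v) :
    xval (cycleVec n σ) u v
      = if (∃ i : Fin n, s(u, v) = s(σ i, σ (i + 1))) then (1:ℝ) else 0 := by
  simp only [xval, cycleVec, dif_neg huv]
  congr 1
  simp only [finRotate_apply']

lemma xval01 {n : ℕ} {x : EdgeIdx n → ℝ} (hx : x ∈ hamX n) (u v : Fin n) :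
    xval x u v = 0 ∨ xval x u v = 1 := by
  simp only [hamX, Finset.mem_image] at hx
  obtain ⟨σ, -, rfl⟩ := hx
  unfold xval cycleVec
  split_ifs <;> simp

lemma key_aux (n m : ℕ) [NeZero n] (hm2 : 2 ≤ m) (hmn : m < n)
    (ℓ : Fin m → Fin n) (hℓ : Function.Injective ℓ) (σ : Equiv.Perm (Fin n))
    (hpath : ∀ t : ℕ, (ht : t + 1 < m) → ∃ i : Fin n,
      s(ℓ ⟨t, by omega⟩, ℓ ⟨t+1, ht⟩) = s(σ i, σ (i + 1))) :
    ∑ u ∈ Finset.image ℓ Finset.univ, ∑ v ∈ (Finset.image ℓ Finset.univ)ᶜ,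
      xval (cycleVec n σ) u v = 2 := by
  have hn3 : 3 ≤ n := by omega
  set U := Finset.image ℓ Finset.univ with hU
  -- positions of the path vertices along the cycle
  set J : ℕ → Fin n := fun t => if h : t < m then σ.symm (ℓ ⟨t, h⟩) else 0 with hJdef
  have hJ : ∀ (t : ℕ) (ht : t < m), J t = σ.symm (ℓ ⟨t, ht⟩) := fun t ht => dif_pos ht
  have hJinj : ∀ s t, s < m → t < m → J s = J t → s = t := by
    intro s t hs ht h
    rw [hJ s hs, hJ t ht] at h
    exact congrArg Fin.val (hℓ (σ.symm.injective h))
  have step : ∀ t, t + 1 < m → J (t+1) = J t + 1 ∨ J t = J (t+1) + 1 := by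
    intro t ht
    obtain ⟨i, hi⟩ := hpath t ht
    rw [Sym2.eq_iff] at hi
    rw [hJ t (by omega), hJ (t+1) ht]
    rcases hi with ⟨h1, h2⟩ | ⟨h1, h2⟩
    · left; rw [h1, h2]; simp
    · right; rw [h1, h2]; simp
  have hcases : (∀ t, t + 1 < m → J (t+1) = J t + 1) ∨
      (∀ t, t + 1 < m → J t = J (t+1) + 1) := by
    rcases step 0 (by omega) with h0 | h0
    · left
      intro t ht
      induction t with
      | zero => exact h0
      | succ s ih =>
        have ihs := ih (by omega)
        rcases step (s+1) ht with h | h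
        · exact h
        · exfalso
          have h2 : J (s+1+1) + 1 = J s + 1 := h.symm.trans ihs
          exact absurd (hJinj _ _ (by omega) (by omega) (add_right_cancel h2))
            (by omega)
    · right
      intro t ht
      induction t with
      | zero => exact h0
      | succ s ih =>
        have ihs := ih (by omega)
        rcases step (s+1) ht with h | h
        · exact absurd (hJinj _ _ (by omega) (by omega) (h.trans ihs.symm)) (by omega)
        · exact h
  -- the positions of U form a block {a, a+1, ..., a+m-1}
  have hmem : ∀ i : Fin n, σ i ∈ U ↔ ∃ t, t < m ∧ i = J t := by
    intro i
    rw [hU]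
    simp only [Finset.mem_image, Finset.mem_univ, true_and]
    constructor
    · rintro ⟨t, htv⟩
      refine ⟨t.val, t.isLt, ?_⟩
      rw [hJ t.val t.isLt]
      rw [show (⟨t.val, t.isLt⟩ : Fin m) = t from rfl, htv]
      simp
    · rintro ⟨t, ht, rfl⟩
      exact ⟨⟨t, ht⟩, by rw [hJ t ht]; simp⟩
  obtain ⟨a, ha⟩ : ∃ a : Fin n, ∀ i : Fin n, (σ i ∈ U ↔ (i - a).val < m) := by
    rcases hcases with hdir | hdir
    · have hform : ∀ t, t < m → J t = J 0 + (t : Fin n) := by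
        intro t ht
        induction t with
        | zero => simp
        | succ s ih =>
          rw [hdir s ht, ih (by omega)]
          push_cast
          ring
      refine ⟨J 0, fun i => ?_⟩
      rw [hmem i]
      constructor
      · rintro ⟨t, ht, rfl⟩
        rw [hform t ht, add_sub_cancel_left, Fin.val_natCast]
        have := Nat.mod_eq_of_lt (show t < n by omega)
        omega
      · intro h
        refine ⟨(i - J 0).val, h, ?_⟩
        rw [hform _ h, Fin.cast_val_eq_self]
        ring
    · have hform : ∀ t, t < m → J t = J 0 - (t : Fin n) := by
        intro t ht
        induction t with
        | zero => simp
        | succ s ih =>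
          have h1 : J (s+1) = J s - 1 := eq_sub_of_add_eq (hdir s ht).symm
          rw [h1, ih (by omega)]
          push_cast
          ring
      refine ⟨J 0 - ((m - 1 : ℕ) : Fin n), fun i => ?_⟩
      rw [hmem i]
      constructor
      · rintro ⟨t, ht, rfl⟩
        have h1 : J t - (J 0 - ((m - 1 : ℕ) : Fin n)) = ((m - 1 - t : ℕ) : Fin n) := by
          rw [hform t ht, Nat.cast_sub (by omega : t ≤ m - 1)]
          ring
        rw [h1, Fin.val_natCast]
        have := Nat.mod_eq_of_lt (show m - 1 - t < n by omega)
        omega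
      · intro h
        refine ⟨m - 1 - (i - (J 0 - ((m - 1 : ℕ) : Fin n))).val, by omega, ?_⟩
        rw [hform _ (by omega), Nat.cast_sub (by omega : (i - (J 0 - ((m - 1 : ℕ) : Fin n))).val ≤ m - 1)]
        rw [Fin.cast_val_eq_self]
        ring
  -- the sum counts cut edges of the cycle
  have two_ne : ∀ i : Fin n, i + 1 + 1 ≠ i := by
    intro i h
    rw [add_assoc] at h
    have h2 : (1 + 1 : Fin n) = 0 := add_eq_left.mp h
    have h3 := congrArg Fin.val h2
    have e1 : (1:ℕ) % n = 1 := Nat.mod_eq_of_lt (by omega)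
    rw [Fin.val_add, Fin.val_one', Fin.val_zero, e1, Nat.mod_eq_of_lt (by omega : 1+1 < n)] at h3
    exact absurd h3 (by omega)
  have hsum1 : ∑ u ∈ U, ∑ v ∈ Uᶜ, xval (cycleVec n σ) u v
      = (((U ×ˢ Uᶜ).filter
          (fun p => ∃ i : Fin n, s(p.1, p.2) = s(σ i, σ (i + 1)))).card : ℝ) := by
    have hxv : ∀ p ∈ U ×ˢ Uᶜ, xval (cycleVec n σ) p.1 p.2
        = if (∃ i : Fin n, s(p.1, p.2) = s(σ i, σ (i + 1))) then (1:ℝ) else 0 := by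
      rintro ⟨u, v⟩ hp
      rw [Finset.mem_product] at hp
      have huv : u ≠ v := by rintro rfl; exact (Finset.mem_compl.mp hp.2) hp.1
      exact xval_cycleVec σ huv
    rw [← Finset.sum_product', Finset.sum_congr rfl hxv, Finset.sum_boole]
  have hcard : (Finset.univ.filter (fun i : Fin n => ¬(σ i ∈ U ↔ σ (i+1) ∈ U))).card
      = ((U ×ˢ Uᶜ).filter
          (fun p => ∃ i : Fin n, s(p.1, p.2) = s(σ i, σ (i + 1)))).card := by
    refine Finset.card_bij
      (fun i _ => if σ i ∈ U then (σ i, σ (i+1)) else (σ (i+1), σ i)) ?_ ?_ ?_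
    · intro i hi
      rw [Finset.mem_filter] at hi
      by_cases c : σ i ∈ U
      · have hc2 : σ (i+1) ∉ U := by tauto
        rw [if_pos c, Finset.mem_filter, Finset.mem_product]
        exact ⟨⟨c, Finset.mem_compl.mpr hc2⟩, ⟨i, rfl⟩⟩
      · have hc2 : σ (i+1) ∈ U := by tauto
        rw [if_neg c, Finset.mem_filter, Finset.mem_product]
        exact ⟨⟨hc2, Finset.mem_compl.mpr c⟩, ⟨i, Sym2.eq_swap⟩⟩
    · intro i₁ h₁ i₂ h₂ heq
      by_cases c1 : σ i₁ ∈ U <;> by_cases c2 : σ i₂ ∈ U <;>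
        simp only [if_pos, if_neg, c1, c2, if_true, if_false, Prod.mk.injEq] at heq
      · exact σ.injective heq.1
      · exfalso
        have e1 : i₁ = i₂ + 1 := σ.injective heq.1
        have e2 : i₁ + 1 = i₂ := σ.injective heq.2
        exact two_ne i₂ (by rw [← e1]; exact e2)
      · exfalso
        have e1 : i₁ + 1 = i₂ := σ.injective heq.1
        have e2 : i₁ = i₂ + 1 := σ.injective heq.2
        exact two_ne i₂ (by rw [← e2]; exact e1)
      · exact σ.injective heq.2
    · rintro ⟨u, v⟩ hp
      rw [Finset.mem_filter, Finset.mem_product] at hp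
      obtain ⟨⟨hu, hv⟩, i, hi⟩ := hp
      have hv' : v ∉ U := Finset.mem_compl.mp hv
      rw [Sym2.eq_iff] at hi
      rcases hi with ⟨h1, h2⟩ | ⟨h1, h2⟩
      · refine ⟨i, ?_, ?_⟩
        · rw [Finset.mem_filter]
          refine ⟨Finset.mem_univ _, ?_⟩
          rw [← h1, ← h2]
          tauto
        · rw [if_pos (h1 ▸ hu), ← h1, ← h2]
      · refine ⟨i, ?_, ?_⟩
        · rw [Finset.mem_filter]
          refine ⟨Finset.mem_univ _, ?_⟩
          rw [← h1, ← h2]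
          tauto
        · rw [if_neg (show σ i ∉ U from h2 ▸ hv'), ← h1, ← h2]
  have hfilter : Finset.univ.filter (fun i : Fin n => ¬(σ i ∈ U ↔ σ (i+1) ∈ U))
      = Finset.univ.filter (fun i : Fin n =>
          ¬(((i - a).val < m) ↔ ((i + 1 - a).val < m))) := by
    apply Finset.filter_congr
    intro i _
    rw [ha i, ha (i+1)]
  rw [hsum1, ← hcard, hfilter, crossing_count (by omega) hmn a]
  norm_num

/-- **subtour elimination facets on the boundary.**
Let `U = {ℓ_0, …, ℓ_{m-1}}` with the `ℓ_t` distinct, `2 ≤ m < n`.  Then: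
(a) every incidence vector `x ∈ X` of a Hamiltonian cycle containing all the edges
`{ℓ_t, ℓ_{t+1}}` (`0 ≤ t ≤ m-2`) satisfies `Σ_{u∈U, v∉U} x_{uv} = 2`; and
(b) for the degree-`(m-1)` polynomial `p_U(x) = Π_t x_{ℓ_t ℓ_{t+1}}` and the subtour
elimination function `h_U(x) = c (Σ_{u∈U, v∉U} x_{uv} - 2)`,
`c = (n-1)/(2(m(n-m)+1-n))`, one has `(1/|X|) Σ_{x∈X} h_U(x) p_U(x)² = 0`
(so that `h_U` lies on the boundary of `P_k` for every `k ≥ m-1`). -/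
theorem subtour_elimination_on_boundary
    (n m : ℕ) (hm2 : 2 ≤ m) (hmn : m < n)
    (ℓ : Fin m → Fin n) (hℓ : Function.Injective ℓ) :
    (∀ x ∈ hamX n,
      (∀ i : Fin (m - 1),
          xval x (ℓ ⟨i.1, lt_of_lt_of_le i.2 (Nat.sub_le m 1)⟩)
                 (ℓ ⟨i.1 + 1, by have := i.2; omega⟩) = 1) →
      (∑ u ∈ Finset.image ℓ Finset.univ,
        ∑ v ∈ (Finset.image ℓ Finset.univ)ᶜ, xval x u v) = 2) ∧
    ((hamX n).card : ℝ)⁻¹ * ∑ x ∈ hamX n,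
        (((n : ℝ) - 1) / (2 * ((m : ℝ) * ((n : ℝ) - (m : ℝ)) + 1 - (n : ℝ))) *
          ((∑ u ∈ Finset.image ℓ Finset.univ,
             ∑ v ∈ (Finset.image ℓ Finset.univ)ᶜ, xval x u v) - 2)) *
        (∏ i : Fin (m - 1),
          xval x (ℓ ⟨i.1, lt_of_lt_of_le i.2 (Nat.sub_le m 1)⟩)
                 (ℓ ⟨i.1 + 1, by have := i.2; omega⟩)) ^ 2 = 0 := by
  haveI : NeZero n := ⟨by omega⟩
  have parta : ∀ x ∈ hamX n,
      (∀ i : Fin (m - 1),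
          xval x (ℓ ⟨i.1, lt_of_lt_of_le i.2 (Nat.sub_le m 1)⟩)
                 (ℓ ⟨i.1 + 1, by have := i.2; omega⟩) = 1) →
      (∑ u ∈ Finset.image ℓ Finset.univ,
        ∑ v ∈ (Finset.image ℓ Finset.univ)ᶜ, xval x u v) = 2 := by
    intro x hx hp
    simp only [hamX, Finset.mem_image] at hx
    obtain ⟨σ, -, rfl⟩ := hx
    apply key_aux n m hm2 hmn ℓ hℓ σ
    intro t ht
    have h1 := hp ⟨t, by omega⟩
    have hne : (⟨t, by omega⟩ : Fin m) ≠ ⟨t+1, by omega⟩ := by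
      intro h
      exact absurd (congrArg Fin.val h) (by simp)
    have huv : ℓ ⟨t, by omega⟩ ≠ ℓ ⟨t+1, by omega⟩ := fun h => hne (hℓ h)
    rw [xval_cycleVec σ huv] at h1
    split_ifs at h1 with hc
    · exact hc
    · exact absurd h1 (by norm_num)
  refine ⟨parta, ?_⟩
  have hz : ∑ x ∈ hamX n,
        (((n : ℝ) - 1) / (2 * ((m : ℝ) * ((n : ℝ) - (m : ℝ)) + 1 - (n : ℝ))) *
          ((∑ u ∈ Finset.image ℓ Finset.univ,
             ∑ v ∈ (Finset.image ℓ Finset.univ)ᶜ, xval x u v) - 2)) *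
        (∏ i : Fin (m - 1),
          xval x (ℓ ⟨i.1, lt_of_lt_of_le i.2 (Nat.sub_le m 1)⟩)
                 (ℓ ⟨i.1 + 1, by have := i.2; omega⟩)) ^ 2 = 0 := by
    apply Finset.sum_eq_zero
    intro x hx
    by_cases hp : ∀ i : Fin (m - 1),
        xval x (ℓ ⟨i.1, lt_of_lt_of_le i.2 (Nat.sub_le m 1)⟩)
               (ℓ ⟨i.1 + 1, by have := i.2; omega⟩) = 1
    · rw [parta x hx hp]
      norm_num
    · push_neg at hp
      obtain ⟨i, hi⟩ := hp
      rcases xval01 hx (ℓ ⟨i.1, lt_of_lt_of_le i.2 (Nat.sub_le m 1)⟩)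
          (ℓ ⟨i.1 + 1, by have := i.2; omega⟩) with h | h
      · rw [Finset.prod_eq_zero (Finset.mem_univ i) h]
        ring
      · exact absurd h hi
  rw [hz, mul_zero]
end
end

section
/- Let U = {ℓ_1, ..., ℓ_m} ⊂ V = {1, ..., n}, let s ≥ 1 with 2s+1 ≤ m, and let n_1, ..., n_{2s+1} ∈ V \ U be distinct vertices, so that F = {{ℓ_1,n_1}, ..., {ℓ_{2s+1},n_{2s+1}}} is a matching each of whose edges has exactly one endpoint in U. Suppose the incidence vector x ∈ X of a Hamiltonian cycle satisfies p_{U,F}(x) ≠ 0, where p_{U,F}(x) = Π_{i=1}^{2s+1} x_{ℓ_i n_i} · Π_{j=1}^{s} x_{ℓ_{2j-1} ℓ_{2j}} · Π_{t=2s+1}^{m-1} x_{ℓ_t ℓ_{t+1}}. Then Σ_{j∈U, i∈V\U, {i,j}∉F} x_{ij} = 1 and Σ_{{k,ℓ}∈F} x_{kℓ} = 2s+1 = |F|; in particular, x lies on the facet of the symmetric traveling salesman polytope defined by the 2-matching constraint Σ_{j∈U, i∈V\U, {i,j}∉F} x_{ij} - Σ_{{k,ℓ}∈F} x_{kℓ}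 ≥ 1 - |F|. -/
open Finset
noncomputable section
open scoped Classical

lemma rot_val (n : ℕ) (i : Fin n) (hn : 1 ≤ n) : (finRotate n i).val = (i.val + 1) % n := by
  obtain ⟨k, rfl⟩ : ∃ k, n = k + 1 := ⟨n - 1, by omega⟩
  rw [finRotate_succ_apply]
  simp [Fin.add_def, Nat.add_mod]

lemma rot_ne_self (n : ℕ) (hn : 2 ≤ n) (i : Fin n) : finRotate n i ≠ i := by
  intro h
  have hv := congrArg Fin.val h
  rw [rot_val n i (by omega)] at hv
  rcases Nat.lt_or_ge (i.val + 1) n with h1 | h1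
  · rw [Nat.mod_eq_of_lt h1] at hv; omega
  · have hi := i.isLt
    have : i.val = n - 1 := by omega
    rw [this] at hv
    have : (n - 1 + 1) % n = 0 := by
      have : n - 1 + 1 = n := by omega
      rw [this, Nat.mod_self]
    omega

lemma rot_rot_ne_self (n : ℕ) (hn : 3 ≤ n) (i : Fin n) : finRotate n (finRotate n i) ≠ i := by
  intro h
  have hv := congrArg Fin.val h
  rw [rot_val n _ (by omega), rot_val n i (by omega), Nat.mod_add_mod] at hv
  have hi := i.isLt
  rcases Nat.lt_or_ge (i.val + 2) n with h1 | h1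
  · rw [Nat.mod_eq_of_lt h1] at hv; omega
  · have h2 : i.val + 1 + 1 = (i.val + 2 - n) + n := by omega
    rw [h2, Nat.add_mod_right, Nat.mod_eq_of_lt (by omega)] at hv
    omega


section adj
variable {n : ℕ} (σ : Equiv.Perm (Fin n))

def Adj (a b : Fin n) : Prop :=
  b = σ (finRotate n (σ.symm a)) ∨ b = σ ((finRotate n).symm (σ.symm a))

lemma adj_symm {a b : Fin n} (h : Adj σ a b) : Adj σ b a := by
  rcases h with h | h
  · right
    subst h
    simp [-finRotate_apply, -finRotate_symm_apply]
  · left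
    subst h
    simp [-finRotate_apply, -finRotate_symm_apply]

lemma not_adj_self (hn : 2 ≤ n) (a : Fin n) : ¬ Adj σ a a := by
  intro h
  rcases h with h | h
  · exact rot_ne_self n hn (σ.symm a) (by
      have := congrArg σ.symm h; simpa using this.symm)
  · have := congrArg σ.symm h
    simp [-finRotate_apply, -finRotate_symm_apply] at this
    have := congrArg (finRotate n) this
    simp [-finRotate_apply, -finRotate_symm_apply] at this
    exact rot_ne_self n hn (σ.symm a) this

lemma nbr_ne_nbl (hn : 3 ≤ n) (a : Fin n) :
    σ (finRotate n (σ.symm a)) ≠ σ ((finRotate n).symm (σ.symm a)) := by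
  intro h
  have h1 := σ.injective h
  have := congrArg (finRotate n) h1
  simp [-finRotate_apply, -finRotate_symm_apply] at this
  exact rot_rot_ne_self n hn (σ.symm a) this

lemma adj_eq_of (hn : 3 ≤ n) {a b c d : Fin n} (hb : Adj σ a b) (hc : Adj σ a c)
    (hbc : b ≠ c) (hd : Adj σ a d) : d = b ∨ d = c := by
  rcases hb with hb | hb <;> rcases hc with hc | hc <;> rcases hd with hd | hd <;>
    subst hb <;> subst hc <;> simp_all

lemma exists_iff_adj (a b : Fin n) :
    (∃ i, s(a, b) = s(σ i, σ (finRotate n i))) ↔ Adj σ a b := by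
  constructor
  · rintro ⟨i, hi⟩
    rw [Sym2.eq_iff] at hi
    rcases hi with ⟨ha, hb⟩ | ⟨ha, hb⟩
    · left
      subst ha hb
      simp
    · right
      subst hb
      rw [ha]
      simp [-finRotate_apply, -finRotate_symm_apply]
  · rintro (h | h)
    · exact ⟨σ.symm a, by rw [Sym2.eq_iff]; left; exact ⟨by simp, h⟩⟩
    · refine ⟨(finRotate n).symm (σ.symm a), ?_⟩
      rw [Sym2.eq_iff]
      right
      exact ⟨by simp [-finRotate_apply, -finRotate_symm_apply], h⟩

lemma xval_cycleVec_s9 (a b : Fin n) (hab : a ≠ b) :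
    xval (cycleVec n σ) a b = if Adj σ a b then 1 else 0 := by
  rw [xval, dif_neg hab, cycleVec]
  simp only [exists_iff_adj]

end adj

/-- **2-matching constraints.**
Let `U = {ℓ_0, …, ℓ_{m-1}} ⊂ V`, let `s ≥ 1` with `2s+1 ≤ m`, and let
`n_0, …, n_{2s} ∈ V \ U`, all of the vertices `ℓ_0, …, ℓ_{m-1}, n_0, …, n_{2s}`
being distinct, so that `F = {{ℓ_i, n_i} : 0 ≤ i ≤ 2s}` is a matching each of whose
edges has exactly one endpoint in `U`.  If the incidence vector `x ∈ X` of a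
Hamiltonian cycle satisfies `p_{U,F}(x) ≠ 0`, where
`p_{U,F}(x) = Π_{i=0}^{2s} x_{ℓ_i n_i} · Π_{j=0}^{s-1} x_{ℓ_{2j} ℓ_{2j+1}} ·
Π_{t=2s}^{m-2} x_{ℓ_t ℓ_{t+1}}`, then
`Σ_{u∈U, v∉U, {u,v}∉F} x_{uv} = 1` and `Σ_{{k,l}∈F} x_{kl} = 2s+1 = |F|`;
in particular `x` lies on the facet where the 2-matching constraint
`Σ_{u∈U, v∉U, {u,v}∉F} x_{uv} - Σ_{{k,l}∈F} x_{kl} ≥ 1 - |F|` is tight. -/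
theorem two_matching_constraint_tight
    (n m s : ℕ) (hs : 1 ≤ s) (hsm : 2 * s + 1 ≤ m)
    (ℓ : Fin m → Fin n) (ns : Fin (2 * s + 1) → Fin n)
    (hinj : Function.Injective
      (Sum.elim ℓ ns : Fin m ⊕ Fin (2 * s + 1) → Fin n))
    (x : EdgeIdx n → ℝ) (hx : x ∈ hamX n)
    (hp : (∏ i : Fin (2 * s + 1),
            xval x (ℓ ⟨i.1, by have := i.2; omega⟩) (ns i)) *
          (∏ j : Fin s,
            xval x (ℓ ⟨2 * j.1, by have := j.2; omega⟩)
                   (ℓ ⟨2 * j.1 + 1, by have := j.2; omega⟩)) *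
          (∏ t ∈ (Finset.Ico (2 * s) (m - 1)).attach,
            xval x (ℓ ⟨t.1, by have := Finset.mem_Ico.mp t.2; omega⟩)
                   (ℓ ⟨t.1 + 1, by have := Finset.mem_Ico.mp t.2; omega⟩)) ≠ 0) :
    (∑ u ∈ Finset.image ℓ Finset.univ,
       ∑ v ∈ (Finset.image ℓ Finset.univ)ᶜ,
         if ∃ i : Fin (2 * s + 1),
             u = ℓ ⟨i.1, by have := i.2; omega⟩ ∧ v = ns i then 0
         else xval x u v) = 1 ∧
    (∑ i : Fin (2 * s + 1),
       xval x (ℓ ⟨i.1, by have := i.2; omega⟩) (ns i)) = 2 * s + 1 ∧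
    (∑ u ∈ Finset.image ℓ Finset.univ,
       ∑ v ∈ (Finset.image ℓ Finset.univ)ᶜ,
         if ∃ i : Fin (2 * s + 1),
             u = ℓ ⟨i.1, by have := i.2; omega⟩ ∧ v = ns i then 0
         else xval x u v)
      - (∑ i : Fin (2 * s + 1),
          xval x (ℓ ⟨i.1, by have := i.2; omega⟩) (ns i))
      = 1 - (2 * (s : ℝ) + 1) := by
  -- basic numerology
  have hm3 : 3 ≤ m := by omega
  have hcard : m + (2 * s + 1) ≤ n := by
    have := Fintype.card_le_of_injective _ hinj
    simpa using this
  have hn3 : 3 ≤ n := by omega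
  -- distinctness
  have hLN : ∀ (j : Fin m) (i : Fin (2 * s + 1)), ℓ j ≠ ns i := by
    intro j i h
    have : (Sum.inl j : Fin m ⊕ Fin (2 * s + 1)) = Sum.inr i := hinj h
    simp at this
  have hLinj : Function.Injective ℓ := by
    intro j j' h
    have : (Sum.inl j : Fin m ⊕ Fin (2 * s + 1)) = Sum.inl j' := hinj h
    simpa using this
  -- the permutation
  obtain ⟨σ, -, hσ⟩ := Finset.mem_image.mp hx
  subst hσ
  -- extract the three families of adjacencies from hp
  obtain ⟨h12, hP3⟩ := mul_ne_zero_iff.mp hp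
  obtain ⟨hP1, hP2⟩ := mul_ne_zero_iff.mp h12
  rw [Finset.prod_ne_zero_iff] at hP1 hP2 hP3
  have h1' : ∀ (i : ℕ) (h : i < 2 * s + 1) (hi' : i < m),
      Adj σ (ℓ ⟨i, hi'⟩) (ns ⟨i, h⟩) := by
    intro i h hi'
    have := hP1 ⟨i, h⟩ (Finset.mem_univ _)
    rw [xval_cycleVec_s9 σ _ _ (hLN _ _)] at this
    by_contra hA
    rw [if_neg hA] at this
    exact this rfl
  have h2' : ∀ (j : ℕ) (hj : j < s) (h1 : 2 * j < m) (h2 : 2 * j + 1 < m),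
      Adj σ (ℓ ⟨2 * j, h1⟩) (ℓ ⟨2 * j + 1, h2⟩) := by
    intro j hj h1 h2
    have := hP2 ⟨j, hj⟩ (Finset.mem_univ _)
    rw [xval_cycleVec_s9 σ _ _ (fun h => by
      have := hLinj h
      simp [Fin.ext_iff] at this)] at this
    by_contra hA
    rw [if_neg hA] at this
    exact this rfl
  have h3' : ∀ (t : ℕ) (ht1 : 2 * s ≤ t) (ht2 : t < m - 1) (h1 : t < m) (h2 : t + 1 < m),
      Adj σ (ℓ ⟨t, h1⟩) (ℓ ⟨t + 1, h2⟩) := by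
    intro t ht1 ht2 h1 h2
    have := hP3 ⟨t, Finset.mem_Ico.mpr ⟨ht1, ht2⟩⟩ (Finset.mem_attach _ _)
    rw [xval_cycleVec_s9 σ _ _ (fun h => by
      have := hLinj h
      simp [Fin.ext_iff] at this)] at this
    by_contra hA
    rw [if_neg hA] at this
    exact this rfl
  have hm1 : m - 1 < m := by omega
  -- every non-final vertex of U has its two cycle neighbors determined
  have hfull : ∀ k : Fin m, (k : ℕ) < m - 1 → ∃ p q : Fin n, p ≠ q ∧
      Adj σ (ℓ k) p ∧ Adj σ (ℓ k) q ∧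
      (p ∈ Finset.image ℓ Finset.univ ∨ ∃ h : (k : ℕ) < 2 * s + 1, p = ns ⟨k, h⟩) ∧
      (q ∈ Finset.image ℓ Finset.univ ∨ ∃ h : (k : ℕ) < 2 * s + 1, q = ns ⟨k, h⟩) ∧
      ((ℓ ⟨m - 1, hm1⟩ = p ∨ ℓ ⟨m - 1, hm1⟩ = q) → ((k : ℕ) = m - 2 ∧ 2 * s + 1 < m)) := by
    intro k hk
    by_cases hk2 : (k : ℕ) < 2 * s
    · -- paired part of U
      rcases Nat.even_or_odd (k : ℕ) with ⟨j, hj⟩ | ⟨j, hj⟩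
      · -- k = 2j
        have hjs : j < s := by omega
        have hadj := h2' j hjs (by omega) (by omega)
        have ek : (⟨2 * j, by omega⟩ : Fin m) = k := Fin.ext (by simp; omega)
        rw [ek] at hadj
        refine ⟨ns ⟨k, by omega⟩, ℓ ⟨2 * j + 1, by omega⟩, (hLN _ _).symm,
          h1' k (by omega) k.isLt, hadj, Or.inr ⟨by omega, rfl⟩,
          Or.inl (Finset.mem_image_of_mem _ (Finset.mem_univ _)), ?_⟩
        rintro (h | h)
        · exact absurd h (hLN _ _)
        · have := hLinj h
          simp [Fin.ext_iff] at this
          omega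
      · -- k = 2j+1
        have hjs : j < s := by omega
        have hadj := adj_symm σ (h2' j hjs (by omega) (by omega))
        have ek : (⟨2 * j + 1, by omega⟩ : Fin m) = k := Fin.ext (by simp; omega)
        rw [ek] at hadj
        refine ⟨ns ⟨k, by omega⟩, ℓ ⟨2 * j, by omega⟩, (hLN _ _).symm,
          h1' k (by omega) k.isLt, hadj, Or.inr ⟨by omega, rfl⟩,
          Or.inl (Finset.mem_image_of_mem _ (Finset.mem_univ _)), ?_⟩
        rintro (h | h)
        · exact absurd h (hLN _ _)
        · have := hLinj h
          simp [Fin.ext_iff] at this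
          omega
    · by_cases hk3 : (k : ℕ) = 2 * s
      · -- k = 2s, and 2s < m - 1
        have hadj := h3' (2 * s) le_rfl (by omega) (by omega) (by omega)
        have ek : (⟨2 * s, by omega⟩ : Fin m) = k := Fin.ext (by simp; omega)
        rw [ek] at hadj
        refine ⟨ns ⟨k, by omega⟩, ℓ ⟨2 * s + 1, by omega⟩, (hLN _ _).symm,
          h1' k (by omega) k.isLt, hadj, Or.inr ⟨by omega, rfl⟩,
          Or.inl (Finset.mem_image_of_mem _ (Finset.mem_univ _)), ?_⟩
        rintro (h | h)
        · exact absurd h (hLN _ _)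
        · have := hLinj h
          simp [Fin.ext_iff] at this
          omega
      · -- 2s < k < m - 1
        have hk4 : 2 * s < (k : ℕ) := by omega
        have hadj1 := adj_symm σ (h3' ((k : ℕ) - 1) (by omega) (by omega) (by omega) (by omega))
        have ek : (⟨(k : ℕ) - 1 + 1, by omega⟩ : Fin m) = k := Fin.ext (by simp; omega)
        rw [ek] at hadj1
        have hadj2 := h3' (k : ℕ) (by omega) hk (by omega) (by omega)
        have ek2 : (⟨(k : ℕ), by omega⟩ : Fin m) = k := Fin.ext rfl
        rw [ek2] at hadj2
        refine ⟨ℓ ⟨(k : ℕ) - 1, by omega⟩, ℓ ⟨(k : ℕ) + 1, by omega⟩,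
          fun h => by have := hLinj h; simp [Fin.ext_iff] at this,
          hadj1, hadj2,
          Or.inl (Finset.mem_image_of_mem _ (Finset.mem_univ _)),
          Or.inl (Finset.mem_image_of_mem _ (Finset.mem_univ _)), ?_⟩
        rintro (h | h)
        · have := hLinj h
          simp [Fin.ext_iff] at this
          omega
        · have := hLinj h
          simp [Fin.ext_iff] at this
          omega
  
  -- Part 2: the F-sum
  have key2 : (∑ i : Fin (2 * s + 1),
      xval (cycleVec n σ) (ℓ ⟨i.1, by have := i.2; omega⟩) (ns i)) = 2 * s + 1 := by
    have hall : ∀ i ∈ (Finset.univ : Finset (Fin (2 * s + 1))),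
        xval (cycleVec n σ) (ℓ ⟨i.1, by have := i.2; omega⟩) (ns i) = 1 := by
      intro i _
      rw [xval_cycleVec_s9 σ _ _ (hLN _ _), if_pos (h1' i.1 i.2 (by have := i.2; omega))]
    rw [Finset.sum_congr rfl hall]
    simp
  -- Part 1: the cut-sum
  have hzero : ∀ b : Fin m, (b : ℕ) < m - 1 →
      (∑ v ∈ (Finset.image ℓ Finset.univ)ᶜ,
        if ∃ i : Fin (2 * s + 1), ℓ b = ℓ ⟨i.1, by have := i.2; omega⟩ ∧ v = ns i then 0
        else xval (cycleVec n σ) (ℓ b) v) = 0 := by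
    intro b hb
    obtain ⟨p, q, hpq, hap, haq, hsp, hsq, -⟩ := hfull b hb
    refine Finset.sum_eq_zero ?_
    intro v hv
    rw [Finset.mem_compl] at hv
    split_ifs with hF
    · rfl
    · rw [xval_cycleVec_s9 σ _ _
        (fun h => hv (by rw [← h]; exact Finset.mem_image_of_mem _ (Finset.mem_univ _))), if_neg]
      intro hA
      rcases adj_eq_of σ hn3 hap haq hpq hA with hvp | hvq
      · rcases hsp with hU | ⟨h, hps⟩
        · exact hv (hvp ▸ hU)
        · exact hF ⟨⟨b.1, h⟩, rfl, by rw [hvp, hps]⟩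
      · rcases hsq with hU | ⟨h, hqs⟩
        · exact hv (hvq ▸ hU)
        · exact hF ⟨⟨b.1, h⟩, rfl, by rw [hvq, hqs]⟩
  have hone :
      (∑ v ∈ (Finset.image ℓ Finset.univ)ᶜ,
        if ∃ i : Fin (2 * s + 1), ℓ ⟨m - 1, hm1⟩ = ℓ ⟨i.1, by have := i.2; omega⟩ ∧ v = ns i
        then 0 else xval (cycleVec n σ) (ℓ ⟨m - 1, hm1⟩) v) = 1 := by
    have hU : ℓ ⟨m - 1, hm1⟩ ∈ Finset.image ℓ Finset.univ :=
      Finset.mem_image_of_mem _ (Finset.mem_univ _)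
    -- the known neighbor a of the last vertex of U
    obtain ⟨a, haA, haSafe, haC1, haC2⟩ :
        ∃ a : Fin n, Adj σ (ℓ ⟨m - 1, hm1⟩) a ∧
          (a ∈ Finset.image ℓ Finset.univ ∨
            ∃ i : Fin (2 * s + 1),
              ℓ ⟨m - 1, hm1⟩ = ℓ ⟨i.1, by have := i.2; omega⟩ ∧ a = ns i) ∧
          (m = 2 * s + 1 → a = ns ⟨2 * s, by omega⟩) ∧
          (2 * s + 1 < m → a = ℓ ⟨m - 2, by omega⟩) := by
      rcases eq_or_lt_of_le hsm with hm' | hm'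
      · have hadj := h1' (2 * s) (by omega) (by omega)
        have e : (⟨2 * s, by omega⟩ : Fin m) = ⟨m - 1, hm1⟩ := Fin.ext (by simp; omega)
        rw [e] at hadj
        refine ⟨ns ⟨2 * s, by omega⟩, hadj,
          Or.inr ⟨⟨2 * s, by omega⟩, ?_, rfl⟩, fun _ => rfl, fun h => by omega⟩
        congr 1
        exact Fin.ext (by simp; omega)
      · have hadj := adj_symm σ (h3' (m - 2) (by omega) (by omega) (by omega) (by omega))
        have e : (⟨m - 2 + 1, by omega⟩ : Fin m) = ⟨m - 1, hm1⟩ := Fin.ext (by simp; omega)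
        rw [e] at hadj
        exact ⟨ℓ ⟨m - 2, by omega⟩, hadj,
          Or.inl (Finset.mem_image_of_mem _ (Finset.mem_univ _)),
          fun h => by omega, fun _ => rfl⟩
    -- the other neighbor w
    obtain ⟨w, hwA, hwa⟩ : ∃ w, Adj σ (ℓ ⟨m - 1, hm1⟩) w ∧ w ≠ a := by
      rcases haA with h | h
      · exact ⟨σ ((finRotate n).symm (σ.symm (ℓ ⟨m - 1, hm1⟩))), Or.inr rfl,
          by rw [h]; exact (nbr_ne_nbl σ hn3 _).symm⟩
      · exact ⟨σ (finRotate n (σ.symm (ℓ ⟨m - 1, hm1⟩))), Or.inl rfl,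
          by rw [h]; exact nbr_ne_nbl σ hn3 _⟩
    have hwu : w ≠ ℓ ⟨m - 1, hm1⟩ := by
      intro h
      exact not_adj_self σ (by omega) _ (h ▸ hwA)
    -- w is not in U
    have hwU : w ∉ Finset.image ℓ Finset.univ := by
      intro hw
      obtain ⟨j, -, hj⟩ := Finset.mem_image.mp hw
      have hjne : (j : ℕ) ≠ m - 1 := by
        intro h
        apply hwu
        rw [← hj]
        congr 1
        exact Fin.ext h
      have hjlt : (j : ℕ) < m - 1 := by have := j.isLt; omega
      obtain ⟨p, q, hpq, hap, haq, -, -, hex⟩ := hfull j hjlt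
      have hadj : Adj σ (ℓ j) (ℓ ⟨m - 1, hm1⟩) := adj_symm σ (by rw [hj]; exact hwA)
      have hupq := adj_eq_of σ hn3 hap haq hpq hadj
      have hcase := hex hupq
      apply hwa
      rw [← hj, haC2 hcase.2]
      congr 1
      exact Fin.ext (by simp [hcase.1])
    -- the pair {last vertex, w} is not an edge of F
    have hwF : ¬ ∃ i : Fin (2 * s + 1),
        ℓ ⟨m - 1, hm1⟩ = ℓ ⟨i.1, by have := i.2; omega⟩ ∧ w = ns i := by
      rintro ⟨i, hi1, hi2⟩
      have hi := congrArg Fin.val (hLinj hi1)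
      simp at hi
      have hm' : m = 2 * s + 1 := by have := i.2; omega
      apply hwa
      rw [hi2, haC1 hm']
      congr 1
      exact Fin.ext (by simp; omega)
    have hwUc : w ∈ (Finset.image ℓ Finset.univ)ᶜ := Finset.mem_compl.mpr hwU
    rw [Finset.sum_eq_single_of_mem w hwUc ?_]
    · rw [if_neg hwF, xval_cycleVec_s9 σ _ _ (Ne.symm hwu), if_pos hwA]
    · intro v hv hvw
      rw [Finset.mem_compl] at hv
      split_ifs with hF
      · rfl
      · rw [xval_cycleVec_s9 σ _ _ (fun h => hv (by rw [← h]; exact hU)), if_neg]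
        intro hA
        rcases adj_eq_of σ hn3 haA hwA (Ne.symm hwa) hA with hva | hvw'
        · rcases haSafe with h | ⟨i, hi1, hi2⟩
          · exact hv (hva ▸ h)
          · exact hF ⟨i, hi1, by rw [hva, hi2]⟩
        · exact hvw hvw'
  have key1 : (∑ u ∈ Finset.image ℓ Finset.univ,
       ∑ v ∈ (Finset.image ℓ Finset.univ)ᶜ,
         if ∃ i : Fin (2 * s + 1),
             u = ℓ ⟨i.1, by have := i.2; omega⟩ ∧ v = ns i then 0
         else xval (cycleVec n σ) u v) = 1 := by
    rw [Finset.sum_image (fun a _ b _ h => hLinj h)]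
    calc (∑ k : Fin m, ∑ v ∈ (Finset.image ℓ Finset.univ)ᶜ,
          if ∃ i : Fin (2 * s + 1), ℓ k = ℓ ⟨i.1, by have := i.2; omega⟩ ∧ v = ns i then 0
          else xval (cycleVec n σ) (ℓ k) v)
        = ∑ v ∈ (Finset.image ℓ Finset.univ)ᶜ,
          (if ∃ i : Fin (2 * s + 1), ℓ ⟨m - 1, hm1⟩ = ℓ ⟨i.1, by have := i.2; omega⟩ ∧ v = ns i
           then 0 else xval (cycleVec n σ) (ℓ ⟨m - 1, hm1⟩) v) :=
          Finset.sum_eq_single_of_mem _ (Finset.mem_univ _)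
            (fun b _ hb => hzero b (by
              have h1 := b.isLt
              have h2 : (b : ℕ) ≠ m - 1 := fun h => hb (Fin.ext h)
              omega))
      _ = 1 := hone
  exact ⟨key1, key2, by rw [key1, key2]⟩
end
end

section
/- Let n ≥ 4 and let α, β, γ, δ ∈ {1, ..., n} be distinct. Let u be the degree-1 polynomial u(x) = x_{αβ} - x_{βγ} + x_{γδ} - x_{δα} on ℝ^{n(n-1)/2}. Then for every polynomial w of degree at most 1 on ℝ^{n(n-1)/2}, (1/|X|) Σ_{x∈X} u(x) w(x) = (2/(n-1)) ⟨u, w⟩, where ⟨·,·⟩ is the inner product making the monomial basis {1} ∪ {x_{ij} : 1 ≤ i < j ≤ n} orthonormal. That is, the coefficient vector of u is an eigenvector with eigenvalue 2/(n-1) of the matrix A_𝟙 of the quadratic form q_𝟙(h) = (1/|X|) Σ_{x∈X} h(x)² in the monomial basis. -/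
open Finset
noncomputable section
open scoped Classical

/-- Coefficient vector (in the monomial basis `{x_{pq}}`) of the degree-1 polynomial
`x_{ab} - x_{bc} + x_{cd} - x_{da}` for distinct vertices `a, b, c, d`. -/
def quadCoef {n : ℕ} (a b c d : Fin n) : EdgeIdx n → ℝ := fun e =>
  (if (e : Sym2 (Fin n)) = s(a, b) then 1 else 0)
    - (if (e : Sym2 (Fin n)) = s(b, c) then 1 else 0)
    + (if (e : Sym2 (Fin n)) = s(c, d) then 1 else 0)
    - (if (e : Sym2 (Fin n)) = s(d, a) then 1 else 0)

/-! ### Auxiliary development -/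

section Aux

variable {n : ℕ}

/-- A permutation carrying one injective tuple to another. -/
lemma exists_perm_map {k : ℕ} (f g : Fin k → Fin n)
    (hf : Function.Injective f) (hg : Function.Injective g) :
    ∃ π : Equiv.Perm (Fin n), ∀ i, π (f i) = g i := by
  classical
  let ef : Fin k ≃ Set.range f := Equiv.ofInjective f hf
  let eg : Fin k ≃ Set.range g := Equiv.ofInjective g hg
  let e : {x // x ∈ Set.range f} ≃ {x // x ∈ Set.range g} := ef.symm.trans eg
  refine ⟨e.extendSubtype, fun i => ?_⟩
  have hmem : f i ∈ Set.range f := ⟨i, rfl⟩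
  rw [e.extendSubtype_apply_of_mem _ hmem]
  have h1 : ef.symm ⟨f i, hmem⟩ = i := by
    apply ef.injective; apply Subtype.ext; simp [ef]
  show (eg (ef.symm ⟨f i, hmem⟩) : Fin n) = g i
  rw [h1]; rfl

lemma inj_pair {p q : Fin n} (h : p ≠ q) : Function.Injective ![p, q] := by
  intro i j hij
  fin_cases i <;> fin_cases j <;> simp_all

lemma inj_triple {p q r : Fin n} (h1 : p ≠ q) (h2 : p ≠ r) (h3 : q ≠ r) :
    Function.Injective ![p, q, r] := by
  intro i j hij
  fin_cases i <;> fin_cases j <;> simp_all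

lemma inj_quad {p q r s : Fin n} (h1 : p ≠ q) (h2 : p ≠ r) (h3 : p ≠ s)
    (h4 : q ≠ r) (h5 : q ≠ s) (h6 : r ≠ s) :
    Function.Injective ![p, q, r, s] := by
  intro i j hij
  fin_cases i <;> fin_cases j <;> simp_all

lemma exists_perm_pair {p q p' q' : Fin n} (h : p ≠ q) (h' : p' ≠ q') :
    ∃ π : Equiv.Perm (Fin n), π p = p' ∧ π q = q' := by
  obtain ⟨π, hπ⟩ := exists_perm_map ![p, q] ![p', q'] (inj_pair h) (inj_pair h')
  exact ⟨π, by simpa using hπ 0, by simpa using hπ 1⟩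

lemma exists_perm_triple {p q r p' q' r' : Fin n}
    (h1 : p ≠ q) (h2 : p ≠ r) (h3 : q ≠ r)
    (h1' : p' ≠ q') (h2' : p' ≠ r') (h3' : q' ≠ r') :
    ∃ π : Equiv.Perm (Fin n), π p = p' ∧ π q = q' ∧ π r = r' := by
  obtain ⟨π, hπ⟩ := exists_perm_map ![p, q, r] ![p', q', r']
    (inj_triple h1 h2 h3) (inj_triple h1' h2' h3')
  exact ⟨π, by simpa using hπ 0, by simpa using hπ 1, by simpa using hπ 2⟩

lemma exists_perm_quad {p q r s p' q' r' s' : Fin n}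
    (h1 : p ≠ q) (h2 : p ≠ r) (h3 : p ≠ s) (h4 : q ≠ r) (h5 : q ≠ s) (h6 : r ≠ s)
    (h1' : p' ≠ q') (h2' : p' ≠ r') (h3' : p' ≠ s') (h4' : q' ≠ r') (h5' : q' ≠ s')
    (h6' : r' ≠ s') :
    ∃ π : Equiv.Perm (Fin n), π p = p' ∧ π q = q' ∧ π r = r' ∧ π s = s' := by
  obtain ⟨π, hπ⟩ := exists_perm_map ![p, q, r, s] ![p', q', r', s']
    (inj_quad h1 h2 h3 h4 h5 h6) (inj_quad h1' h2' h3' h4' h5' h6')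
  exact ⟨π, by simpa using hπ 0, by simpa using hπ 1, by simpa using hπ 2,
    by simpa using hπ 3⟩

/-! edge utilities -/

lemma map_not_isDiag (π : Equiv.Perm (Fin n)) (e : Sym2 (Fin n)) (he : ¬ e.IsDiag) :
    ¬ (Sym2.map π e).IsDiag := by
  induction e using Sym2.ind with
  | _ p q =>
    simp only [Sym2.map_pair_eq, Sym2.isDiag_iff_proj_eq] at *
    exact fun h => he (π.injective h)

lemma map_symm_cancel (π : Equiv.Perm (Fin n)) (z : Sym2 (Fin n)) :
    Sym2.map π.symm (Sym2.map π z) = z := by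
  induction z using Sym2.ind with
  | _ p q => simp [Sym2.map_pair_eq]

lemma map_cancel_symm (π : Equiv.Perm (Fin n)) (z : Sym2 (Fin n)) :
    Sym2.map π (Sym2.map π.symm z) = z := by
  induction z using Sym2.ind with
  | _ p q => simp [Sym2.map_pair_eq]

/-- A vertex permutation acting on edges. -/
def eperm (π : Equiv.Perm (Fin n)) : Equiv.Perm (EdgeIdx n) where
  toFun e := ⟨Sym2.map π e.1, map_not_isDiag π e.1 e.2⟩
  invFun e := ⟨Sym2.map π.symm e.1, map_not_isDiag π.symm e.1 e.2⟩
  left_inv e := Subtype.ext (map_symm_cancel π e.1)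
  right_inv e := Subtype.ext (map_cancel_symm π e.1)

lemma eperm_coe (π : Equiv.Perm (Fin n)) (e : EdgeIdx n) :
    (eperm π e : Sym2 (Fin n)) = Sym2.map π e.1 := rfl

/-- The edge `{p, q}` for `p ≠ q`. -/
def ed (p q : Fin n) (h : p ≠ q) : EdgeIdx n :=
  ⟨s(p, q), by simpa [Sym2.isDiag_iff_proj_eq] using h⟩

lemma eperm_ed (π : Equiv.Perm (Fin n)) (p q : Fin n) (h : p ≠ q) :
    eperm π (ed p q h) = ed (π p) (π q) (fun hc => h (π.injective hc)) := by
  apply Subtype.ext; simp [eperm_coe, ed, Sym2.map_pair_eq]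

lemma ed_swap (p q : Fin n) (h : p ≠ q) : ed p q h = ed q p h.symm := by
  apply Subtype.ext; exact Sym2.eq_swap

lemma ed_congr {p q p' q' : Fin n} (hp : p = p') (hq : q = q')
    (h : p ≠ q) (h' : p' ≠ q') : ed p q h = ed p' q' h' := by
  subst hp; subst hq; rfl

lemma xval_ed (x : EdgeIdx n → ℝ) (p q : Fin n) (h : p ≠ q) :
    xval x p q = x (ed p q h) := by
  rw [xval, dif_neg h]; rfl

lemma mem_hamX {x : EdgeIdx n → ℝ} : x ∈ hamX n ↔ ∃ σ, cycleVec n σ = x := by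
  simp [hamX]

lemma cycleVec_comp (σ π : Equiv.Perm (Fin n)) (e : EdgeIdx n) :
    cycleVec n σ (eperm π e) = cycleVec n (σ.trans π.symm) e := by
  unfold cycleVec
  congr 1
  apply propext
  constructor
  · rintro ⟨i, hi⟩
    refine ⟨i, ?_⟩
    rw [eperm_coe] at hi
    have := congrArg (Sym2.map π.symm) hi
    rw [map_symm_cancel, Sym2.map_pair_eq] at this
    exact this
  · rintro ⟨i, hi⟩
    refine ⟨i, ?_⟩
    rw [eperm_coe, hi, Sym2.map_pair_eq]
    simp [Equiv.trans]

/-- Reindexing a sum over `hamX` by the edge-relabelling action of a vertex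
permutation. -/
lemma sum_reindex (π : Equiv.Perm (Fin n)) (F : (EdgeIdx n → ℝ) → ℝ) :
    ∑ x ∈ hamX n, F x = ∑ x ∈ hamX n, F (fun e => x (eperm π e)) := by
  have hmap : ∀ x ∈ hamX n, (fun e => x (eperm π e)) ∈ hamX n := by
    intro x hx
    obtain ⟨σ, rfl⟩ := mem_hamX.1 hx
    exact mem_hamX.2 ⟨σ.trans π.symm, funext fun e => (cycleVec_comp σ π e).symm⟩
  have hmap' : ∀ x ∈ hamX n, (fun e => x (eperm π.symm e)) ∈ hamX n := by
    intro x hx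
    obtain ⟨σ, rfl⟩ := mem_hamX.1 hx
    exact mem_hamX.2 ⟨σ.trans π.symm.symm, funext fun e => (cycleVec_comp σ π.symm e).symm⟩
  refine Finset.sum_nbij' (fun x => fun e => x (eperm π.symm e))
    (fun x => fun e => x (eperm π e)) hmap' hmap ?_ ?_ ?_
  · intro x hx; funext e
    show x ((eperm (Equiv.symm π)) ((eperm π) e)) = x e
    congr 1; exact Subtype.ext (map_symm_cancel π e.1)
  · intro x hx; funext e
    show x ((eperm π) ((eperm (Equiv.symm π)) e)) = x e
    congr 1; exact Subtype.ext (map_cancel_symm π e.1)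
  · intro x hx
    congr 1
    funext e
    show x e = x ((eperm (Equiv.symm π)) ((eperm π) e))
    congr 1; exact (Subtype.ext (map_symm_cancel π e.1)).symm

/-- first moment -/
def SS (n : ℕ) (e : EdgeIdx n) : ℝ := ∑ x ∈ hamX n, x e

/-- second moment -/
def TT (n : ℕ) (e f : EdgeIdx n) : ℝ := ∑ x ∈ hamX n, x e * x f

lemma TT_comm (e f : EdgeIdx n) : TT n e f = TT n f e := by
  unfold TT; apply Finset.sum_congr rfl; intros; ring

lemma SS_perm (π : Equiv.Perm (Fin n)) (e : EdgeIdx n) :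
    SS n (eperm π e) = SS n e :=
  (sum_reindex π (fun x => x e)).symm

lemma TT_perm (π : Equiv.Perm (Fin n)) (e f : EdgeIdx n) :
    TT n (eperm π e) (eperm π f) = TT n e f :=
  (sum_reindex π (fun x => x e * x f)).symm

lemma SS_congr {p q p' q' : Fin n} (hpq : p ≠ q) (hpq' : p' ≠ q') :
    SS n (ed p q hpq) = SS n (ed p' q' hpq') := by
  obtain ⟨π, h1, h2⟩ := exists_perm_pair hpq hpq'
  rw [← SS_perm π (ed p q hpq), eperm_ed]
  congr 1
  exact ed_congr h1 h2 _ _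

lemma TT_congr {p q r s p' q' r' s' : Fin n} (hpq : p ≠ q) (hrs : r ≠ s)
    (hpq' : p' ≠ q') (hrs' : r' ≠ s') (π : Equiv.Perm (Fin n))
    (h1 : π p = p') (h2 : π q = q') (h3 : π r = r') (h4 : π s = s') :
    TT n (ed p q hpq) (ed r s hrs) = TT n (ed p' q' hpq') (ed r' s' hrs') := by
  rw [← TT_perm π (ed p q hpq) (ed r s hrs), eperm_ed, eperm_ed]
  congr 1
  · exact ed_congr h1 h2 _ _
  · exact ed_congr h3 h4 _ _

lemma cv_sq (σ : Equiv.Perm (Fin n)) (e : EdgeIdx n) :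
    cycleVec n σ e * cycleVec n σ e = cycleVec n σ e := by
  by_cases h : ∃ i : Fin n, (e : Sym2 (Fin n)) = s(σ i, σ (finRotate n i)) <;>
    simp [cycleVec, h]

lemma TT_diag (e : EdgeIdx n) : TT n e e = SS n e := by
  apply Finset.sum_congr rfl
  intro x hx
  obtain ⟨σ, rfl⟩ := mem_hamX.1 hx
  exact cv_sq σ e

end Aux

section Aux2

variable {n : ℕ}

lemma fin_add_one_ne {m : ℕ} (h : 3 ≤ m + 1) (k : Fin (m+1)) : k + 1 ≠ k := by
  intro hc
  have h1 := congrArg Fin.val hc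
  simp [Fin.add_def] at h1
  have hk := k.isLt
  rcases Nat.lt_or_ge (k.val + 1) (m+1) with hlt | hge
  · rw [Nat.mod_eq_of_lt hlt] at h1; omega
  · have hkm : k.val = m := by omega
    rw [hkm, Nat.mod_self] at h1; omega

lemma fin_add_one_ne_sub_one {m : ℕ} (h : 3 ≤ m + 1) (k : Fin (m+1)) : k + 1 ≠ k - 1 := by
  intro hc
  have h2 : k + 1 + 1 = k := by rw [hc]; exact sub_add_cancel k 1
  have h1 := congrArg Fin.val h2
  simp [Fin.add_def] at h1
  have hk := k.isLt
  rcases Nat.lt_or_ge (k.val + 1 + 1) (m+1) with hlt | hge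
  · rw [Nat.mod_eq_of_lt hlt] at h1; omega
  · have : (k.val + 1 + 1) % (m+1) = k.val + 1 + 1 - (m+1) := by
      rw [Nat.mod_eq_sub_mod hge, Nat.mod_eq_of_lt (by omega)]
    rw [this] at h1; omega

lemma fin_sub_one_ne {m : ℕ} (h : 3 ≤ m + 1) (k : Fin (m+1)) : k - 1 ≠ k := by
  intro hc
  have h2 : k = k + 1 := by conv_lhs => rw [← sub_add_cancel k 1, hc]
  exact fin_add_one_ne h k h2.symm

/-- Each vertex of a Hamiltonian cycle has degree `2`. -/
lemma deg_two (hn : 3 ≤ n) (σ : Equiv.Perm (Fin n)) (v : Fin n) :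
    ∑ y ∈ univ.erase v, xval (cycleVec n σ) v y = 2 := by
  obtain ⟨m, rfl⟩ : ∃ m, n = m + 1 := ⟨n - 1, by omega⟩
  set k := σ.symm v with hk
  have hv : σ k = v := σ.apply_symm_apply v
  have key : ∀ y ∈ univ.erase v, xval (cycleVec (m+1) σ) v y
      = (if y = σ (k+1) then (1:ℝ) else 0) + (if y = σ (k-1) then (1:ℝ) else 0) := by
    intro y hy
    have hyv : y ≠ v := (Finset.mem_erase.1 hy).1
    rw [xval, dif_neg (Ne.symm hyv)]
    show (if ∃ i, s(v, y) = s(σ i, σ (finRotate (m+1) i)) then (1:ℝ) else 0) = _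
    have hiff : (∃ i, s(v, y) = s(σ i, σ (finRotate (m+1) i)))
        ↔ (y = σ (k+1) ∨ y = σ (k-1)) := by
      constructor
      · rintro ⟨i, hi⟩
        rw [finRotate_succ_apply, Sym2.eq_iff] at hi
        rcases hi with ⟨h1, h2⟩ | ⟨h1, h2⟩
        · left
          have : k = i := by rw [hk, h1, Equiv.symm_apply_apply]
          rw [this]; exact h2
        · right
          have hik : i + 1 = k := by rw [hk, h1, Equiv.symm_apply_apply]
          have : i = k - 1 := eq_sub_of_add_eq hik
          rw [← this]; exact h2
      · rintro (rfl | rfl)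
        · exact ⟨k, by rw [finRotate_succ_apply, hv]⟩
        · refine ⟨k - 1, ?_⟩
          rw [finRotate_succ_apply, sub_add_cancel, hv]
          exact Sym2.eq_swap
    rw [if_congr hiff rfl rfl]
    have hne : σ (k+1) ≠ σ (k-1) :=
      fun hc => fin_add_one_ne_sub_one hn k (σ.injective hc)
    by_cases h1 : y = σ (k+1) <;> by_cases h2 : y = σ (k-1) <;> simp_all
  rw [Finset.sum_congr rfl key, Finset.sum_add_distrib]
  have m1 : σ (k+1) ∈ univ.erase v := by
    simp only [Finset.mem_erase, Finset.mem_univ, and_true]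
    rw [← hv]; exact fun hc => fin_add_one_ne hn k (σ.injective hc)
  have m2 : σ (k-1) ∈ univ.erase v := by
    simp only [Finset.mem_erase, Finset.mem_univ, and_true]
    rw [← hv]; exact fun hc => fin_sub_one_ne hn k (σ.injective hc)
  rw [Finset.sum_ite_eq' _ (σ (k+1)) (fun _ => (1:ℝ)),
      Finset.sum_ite_eq' _ (σ (k-1)) (fun _ => (1:ℝ)), if_pos m1, if_pos m2]
  norm_num

lemma deg_two' (hn : 3 ≤ n) {x : EdgeIdx n → ℝ} (hx : x ∈ hamX n) (v : Fin n) :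
    ∑ y ∈ univ.erase v, xval x v y = 2 := by
  obtain ⟨σ, rfl⟩ := mem_hamX.1 hx
  exact deg_two hn σ v

lemma card_erase1 (a : Fin n) : (univ.erase a).card = n - 1 := by
  rw [Finset.card_erase_of_mem (Finset.mem_univ a), Finset.card_univ, Fintype.card_fin]

/-- `s (n-1) = 2 |X|`. -/
lemma S_count (hn : 4 ≤ n) {a b : Fin n} (hab : a ≠ b) :
    SS n (ed a b hab) * ((n : ℝ) - 1) = 2 * (hamX n).card := by
  have h1 : ∑ y ∈ univ.erase a, ∑ x ∈ hamX n, xval x a y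
      = 2 * (hamX n).card := by
    rw [Finset.sum_comm]
    rw [Finset.sum_congr rfl (fun x hx => deg_two' (by omega) hx a)]
    rw [Finset.sum_const, nsmul_eq_mul]; ring
  have h2 : ∀ y ∈ univ.erase a, ∑ x ∈ hamX n, xval x a y = SS n (ed a b hab) := by
    intro y hy
    have hay : a ≠ y := Ne.symm (Finset.mem_erase.1 hy).1
    rw [Finset.sum_congr rfl (fun x _ => xval_ed x a y hay)]
    exact SS_congr hay hab
  rw [Finset.sum_congr rfl h2, Finset.sum_const, card_erase1, nsmul_eq_mul] at h1
  rw [← h1, Nat.cast_sub (by omega), Nat.cast_one]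
  ring

/-- vertex identity at `a`:  `s + (n-2) t = 2 s`. -/
lemma V1 (hn : 4 ≤ n) {a b c : Fin n} (hab : a ≠ b) (hac : a ≠ c) (hbc : b ≠ c) :
    SS n (ed a b hab) + ((n : ℝ) - 2) * TT n (ed a b hab) (ed a c hac)
      = 2 * SS n (ed a b hab) := by
  have h1 : ∑ y ∈ univ.erase a, ∑ x ∈ hamX n, x (ed a b hab) * xval x a y
      = 2 * SS n (ed a b hab) := by
    rw [Finset.sum_comm, SS, Finset.mul_sum]
    apply Finset.sum_congr rfl
    intro x hx
    rw [← Finset.mul_sum, deg_two' (by omega) hx a]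
    ring
  have hbmem : b ∈ univ.erase a := by simp [hab.symm]
  rw [← Finset.add_sum_erase _ _ hbmem] at h1
  have hGb : ∑ x ∈ hamX n, x (ed a b hab) * xval x a b = SS n (ed a b hab) := by
    apply Finset.sum_congr rfl
    intro x hx
    obtain ⟨σ, rfl⟩ := mem_hamX.1 hx
    rw [xval_ed _ a b hab]
    exact cv_sq σ _
  have hGy : ∀ y ∈ (univ.erase a).erase b,
      ∑ x ∈ hamX n, x (ed a b hab) * xval x a y
        = TT n (ed a b hab) (ed a c hac) := by
    intro y hy
    have hyb : y ≠ b := (Finset.mem_erase.1 hy).1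
    have hya : y ≠ a := (Finset.mem_erase.1 (Finset.mem_erase.1 hy).2).1
    rw [Finset.sum_congr rfl (fun x _ => by rw [xval_ed x a y (Ne.symm hya)])]
    obtain ⟨π, hp1, hp2, hp3⟩ :=
      exists_perm_triple hab (Ne.symm hya) (Ne.symm hyb) hab hac hbc
    exact TT_congr hab (Ne.symm hya) hab hac π hp1 hp2 hp1 hp3
  rw [Finset.sum_congr rfl hGy, Finset.sum_const, Finset.card_erase_of_mem hbmem,
      card_erase1, nsmul_eq_mul, hGb] at h1
  have hcast : ((n - 1 - 1 : ℕ) : ℝ) = (n : ℝ) - 2 := by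
    rw [Nat.cast_sub (by omega), Nat.cast_sub (by omega)]
    push_cast; ring
  rw [hcast] at h1
  exact h1

/-- vertex identity at `c`:  `2 t + (n-3) r = 2 s`. -/
lemma V2 (hn : 4 ≤ n) {a b c d : Fin n}
    (hab : a ≠ b) (hac : a ≠ c) (had : a ≠ d)
    (hbc : b ≠ c) (hbd : b ≠ d) (hcd : c ≠ d) :
    2 * TT n (ed a b hab) (ed a c hac) + ((n : ℝ) - 3) * TT n (ed a b hab) (ed c d hcd)
      = 2 * SS n (ed a b hab) := by
  have h1 : ∑ y ∈ univ.erase c, ∑ x ∈ hamX n, x (ed a b hab) * xval x c y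
      = 2 * SS n (ed a b hab) := by
    rw [Finset.sum_comm, SS, Finset.mul_sum]
    apply Finset.sum_congr rfl
    intro x hx
    rw [← Finset.mul_sum, deg_two' (by omega) hx c]
    ring
  have hamem : a ∈ univ.erase c := by simp [hac]
  have hbmem : b ∈ (univ.erase c).erase a := by simp [hbc, hab.symm]
  rw [← Finset.add_sum_erase _ _ hamem, ← Finset.add_sum_erase _ _ hbmem] at h1
  -- G a
  have hGa : ∑ x ∈ hamX n, x (ed a b hab) * xval x c a
      = TT n (ed a b hab) (ed a c hac) := by
    rw [Finset.sum_congr rfl (fun x _ => by rw [xval_ed x c a (Ne.symm hac)])]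
    show TT n (ed a b hab) (ed c a (Ne.symm hac)) = _
    have hedge : ed c a (Ne.symm hac) = ed a c hac := ed_swap c a (Ne.symm hac)
    rw [hedge]
  -- G b
  have hGb : ∑ x ∈ hamX n, x (ed a b hab) * xval x c b
      = TT n (ed a b hab) (ed a c hac) := by
    rw [Finset.sum_congr rfl (fun x _ => by rw [xval_ed x c b (Ne.symm hbc)])]
    show TT n (ed a b hab) (ed c b hbc.symm) = _
    obtain ⟨π, hp1, hp2, hp3⟩ :=
      exists_perm_triple hab hac hbc (Ne.symm hab) hbc hac
    -- π : a ↦ b, b ↦ a, c ↦ c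
    have := TT_congr hab hbc.symm (Ne.symm hab) (Ne.symm hac) π hp1 hp2 hp3 hp2
    rw [this, ed_swap b a (Ne.symm hab), ed_swap c a (Ne.symm hac)]
  -- G y for y ∉ {a, b, c}
  have hGy : ∀ y ∈ ((univ.erase c).erase a).erase b,
      ∑ x ∈ hamX n, x (ed a b hab) * xval x c y
        = TT n (ed a b hab) (ed c d hcd) := by
    intro y hy
    have hyb : y ≠ b := (Finset.mem_erase.1 hy).1
    have hya : y ≠ a := (Finset.mem_erase.1 (Finset.mem_erase.1 hy).2).1
    have hyc : y ≠ c :=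
      (Finset.mem_erase.1 (Finset.mem_erase.1 (Finset.mem_erase.1 hy).2).2).1
    rw [Finset.sum_congr rfl (fun x _ => by rw [xval_ed x c y (Ne.symm hyc)])]
    obtain ⟨π, hp1, hp2, hp3, hp4⟩ :=
      exists_perm_quad hab hac (Ne.symm hya) hbc (Ne.symm hyb) (Ne.symm hyc)
        hab hac had hbc hbd hcd
    exact TT_congr hab (Ne.symm hyc) hab hcd π hp1 hp2 hp3 hp4
  rw [Finset.sum_congr rfl hGy, Finset.sum_const, Finset.card_erase_of_mem hbmem,
      Finset.card_erase_of_mem hamem, card_erase1, nsmul_eq_mul, hGa, hGb] at h1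
  have hcast : ((n - 1 - 1 - 1 : ℕ) : ℝ) = (n : ℝ) - 3 := by
    rw [Nat.cast_sub (by omega), Nat.cast_sub (by omega), Nat.cast_sub (by omega)]
    push_cast; ring
  rw [hcast] at h1
  linarith

end Aux2

section Aux3

variable {n : ℕ}

/-- `r = 2t`, in the form `T(ab,cd) = T(ab,bc) + T(ab,da)`. -/
lemma keyId (hn : 4 ≤ n) {a b c d : Fin n}
    (hab : a ≠ b) (hac : a ≠ c) (had : a ≠ d)
    (hbc : b ≠ c) (hbd : b ≠ d) (hcd : c ≠ d) :
    TT n (ed a b hab) (ed c d hcd)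
      = TT n (ed a b hab) (ed b c hbc) + TT n (ed a b hab) (ed d a (Ne.symm had)) := by
  have v1 := V1 hn hab hac hbc
  have v2 := V2 hn hab hac had hbc hbd hcd
  have h1 : TT n (ed a b hab) (ed b c hbc) = TT n (ed a b hab) (ed a c hac) := by
    obtain ⟨π, hp1, hp2, hp3⟩ := exists_perm_triple hab hac hbc (Ne.symm hab) hbc hac
    have h := TT_congr hab hbc (Ne.symm hab) hac π hp1 hp2 hp2 hp3
    rw [h, ed_swap b a (Ne.symm hab)]
  have h2 : TT n (ed a b hab) (ed d a (Ne.symm had)) = TT n (ed a b hab) (ed a c hac) := by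
    have hsw : ed d a (Ne.symm had) = ed a d had := ed_swap d a (Ne.symm had)
    rw [hsw]
    obtain ⟨π, hp1, hp2, hp3⟩ := exists_perm_triple hab had hbd hab hac hbc
    exact TT_congr hab had hab hac π hp1 hp2 hp1 hp3
  rw [h1, h2]
  have hne : (n : ℝ) - 3 ≠ 0 := by
    have : (4 : ℝ) ≤ (n : ℝ) := by exact_mod_cast hn
    linarith
  have h3 : ((n : ℝ) - 3) * TT n (ed a b hab) (ed c d hcd)
      = ((n : ℝ) - 3) * (2 * TT n (ed a b hab) (ed a c hac)) := by
    linear_combination v2 - 2 * v1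
  have h4 := mul_left_cancel₀ hne h3
  rw [h4]; ring

lemma sym2_map_swap_fix {u v : Fin n} (e : Sym2 (Fin n)) (hu : u ∉ e) (hv : v ∉ e) :
    Sym2.map (Equiv.swap u v) e = e := by
  induction e using Sym2.ind with
  | _ p q =>
    rw [Sym2.mem_iff] at hu hv
    push_neg at hu hv
    rw [Sym2.map_pair_eq,
      Equiv.swap_apply_of_ne_of_ne (Ne.symm hu.1) (Ne.symm hv.1),
      Equiv.swap_apply_of_ne_of_ne (Ne.symm hu.2) (Ne.symm hv.2)]

lemma eperm_fix {u v : Fin n} (f : EdgeIdx n) (hu : u ∉ (f : Sym2 (Fin n)))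
    (hv : v ∉ (f : Sym2 (Fin n))) :
    eperm (Equiv.swap u v) f = f :=
  Subtype.ext (sym2_map_swap_fix f.1 hu hv)

set_option maxHeartbeats 1000000 in
lemma classify {a b c d : Fin n}
    (hab : a ≠ b) (hac : a ≠ c) (had : a ≠ d)
    (hbc : b ≠ c) (hbd : b ≠ d) (hcd : c ≠ d) (f : EdgeIdx n) :
    (f : Sym2 (Fin n)) = s(a, b) ∨ (f : Sym2 (Fin n)) = s(b, c)
      ∨ (f : Sym2 (Fin n)) = s(c, d) ∨ (f : Sym2 (Fin n)) = s(d, a)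
      ∨ (b ∉ (f : Sym2 (Fin n)) ∧ d ∉ (f : Sym2 (Fin n)))
      ∨ (a ∉ (f : Sym2 (Fin n)) ∧ c ∉ (f : Sym2 (Fin n))) := by
  obtain ⟨e, he⟩ := f
  change e = s(a, b) ∨ e = s(b, c) ∨ e = s(c, d) ∨ e = s(d, a)
      ∨ (b ∉ e ∧ d ∉ e) ∨ (a ∉ e ∧ c ∉ e)
  clear he
  induction e using Sym2.ind with
  | _ p q =>
    simp only [Sym2.mem_iff, Sym2.eq_iff]
    by_cases hb : b = p ∨ b = q
    · by_cases ha : a = p ∨ a = q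
      · rcases ha with rfl | rfl <;> rcases hb with rfl | rfl <;> simp_all
      · by_cases hc : c = p ∨ c = q
        · rcases hb with rfl | rfl <;> rcases hc with rfl | rfl <;> simp_all
        · exact Or.inr (Or.inr (Or.inr (Or.inr (Or.inr ⟨ha, hc⟩))))
    · by_cases hd : d = p ∨ d = q
      · by_cases ha : a = p ∨ a = q
        · rcases hd with rfl | rfl <;> rcases ha with rfl | rfl <;> simp_all
        · by_cases hc : c = p ∨ c = q
          · rcases hc with rfl | rfl <;> rcases hd with rfl | rfl <;> simp_all
          · exact Or.inr (Or.inr (Or.inr (Or.inr (Or.inr ⟨ha, hc⟩))))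
      · exact Or.inr (Or.inr (Or.inr (Or.inr (Or.inl ⟨hb, hd⟩))))

end Aux3

section Aux4

variable {n : ℕ}

/-- The quadrilateral sum against the second moments is `s·u_f`. -/
lemma Ueq (hn : 4 ≤ n) {a b c d : Fin n}
    (hab : a ≠ b) (hac : a ≠ c) (had : a ≠ d)
    (hbc : b ≠ c) (hbd : b ≠ d) (hcd : c ≠ d) (f : EdgeIdx n) :
    TT n (ed a b hab) f - TT n (ed b c hbc) f + TT n (ed c d hcd) f
        - TT n (ed d a (Ne.symm had)) f
      = SS n (ed a b hab) * quadCoef a b c d f := by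
  rcases classify hab hac had hbc hbd hcd f with h | h | h | h | ⟨h1, h2⟩ | ⟨h1, h2⟩
  · -- f = ab
    have hf : f = ed a b hab := Subtype.ext h
    rw [hf]
    have hq : quadCoef a b c d (ed a b hab) = 1 := by
      simp [quadCoef, ed, Sym2.eq_iff, hab, hac, had, hbc, hbd, hcd,
        hab.symm, hac.symm, had.symm, hbc.symm, hbd.symm, hcd.symm]
    rw [hq]
    have k1 := keyId hn hab hac had hbc hbd hcd
    have d1 := TT_diag (n := n) (ed a b hab)
    have c2 := TT_comm (n := n) (ed a b hab) (ed b c hbc)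
    have c3 := TT_comm (n := n) (ed a b hab) (ed c d hcd)
    have c4 := TT_comm (n := n) (ed a b hab) (ed d a (Ne.symm had))
    linarith
  · -- f = bc
    have hf : f = ed b c hbc := Subtype.ext h
    rw [hf]
    have hq : quadCoef a b c d (ed b c hbc) = -1 := by
      simp [quadCoef, ed, Sym2.eq_iff, hab, hac, had, hbc, hbd, hcd,
        hab.symm, hac.symm, had.symm, hbc.symm, hbd.symm, hcd.symm]
    rw [hq]
    have k2 := keyId hn hbc hbd (Ne.symm hab) hcd (Ne.symm hac) (Ne.symm had)
    have d1 := TT_diag (n := n) (ed b c hbc)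
    have ds := SS_congr (n := n) hbc hab
    have c1 := TT_comm (n := n) (ed a b hab) (ed b c hbc)
    have c3 := TT_comm (n := n) (ed c d hcd) (ed b c hbc)
    have c4 := TT_comm (n := n) (ed d a (Ne.symm had)) (ed b c hbc)
    linarith
  · -- f = cd
    have hf : f = ed c d hcd := Subtype.ext h
    rw [hf]
    have hq : quadCoef a b c d (ed c d hcd) = 1 := by
      simp [quadCoef, ed, Sym2.eq_iff, hab, hac, had, hbc, hbd, hcd,
        hab.symm, hac.symm, had.symm, hbc.symm, hbd.symm, hcd.symm]
    rw [hq]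
    have k3 := keyId hn hcd (Ne.symm hac) (Ne.symm hbc) (Ne.symm had) (Ne.symm hbd) hab
    have d1 := TT_diag (n := n) (ed c d hcd)
    have ds := SS_congr (n := n) hcd hab
    have c1 := TT_comm (n := n) (ed a b hab) (ed c d hcd)
    have c2 := TT_comm (n := n) (ed b c hbc) (ed c d hcd)
    have c4 := TT_comm (n := n) (ed d a (Ne.symm had)) (ed c d hcd)
    linarith
  · -- f = da
    have hf : f = ed d a (Ne.symm had) := Subtype.ext h
    rw [hf]
    have hq : quadCoef a b c d (ed d a (Ne.symm had)) = -1 := by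
      simp [quadCoef, ed, Sym2.eq_iff, hab, hac, had, hbc, hbd, hcd,
        hab.symm, hac.symm, had.symm, hbc.symm, hbd.symm, hcd.symm]
    rw [hq]
    have k4 := keyId hn (Ne.symm had) (Ne.symm hbd) (Ne.symm hcd) hab hac hbc
    have d1 := TT_diag (n := n) (ed d a (Ne.symm had))
    have ds := SS_congr (n := n) (Ne.symm had) hab
    have c1 := TT_comm (n := n) (ed a b hab) (ed d a (Ne.symm had))
    have c2 := TT_comm (n := n) (ed b c hbc) (ed d a (Ne.symm had))
    have c3 := TT_comm (n := n) (ed c d hcd) (ed d a (Ne.symm had))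
    linarith
  · -- b ∉ f, d ∉ f : swap b d
    have hπa : Equiv.swap b d a = a :=
      Equiv.swap_apply_of_ne_of_ne hab had
    have hπb : Equiv.swap b d b = d := Equiv.swap_apply_left b d
    have hπd : Equiv.swap b d d = b := Equiv.swap_apply_right b d
    have hπc : Equiv.swap b d c = c :=
      Equiv.swap_apply_of_ne_of_ne (Ne.symm hbc) hcd
    have hfix : eperm (Equiv.swap b d) f = f := eperm_fix f h1 h2
    have e1 : TT n (ed a d had) f = TT n (ed a b hab) f := by
      have h := TT_perm (Equiv.swap b d) (ed a b hab) f
      rw [eperm_ed, hfix] at h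
      have hedge : ed (Equiv.swap b d a) (Equiv.swap b d b)
          (fun hc => hab ((Equiv.swap b d).injective hc)) = ed a d had :=
        ed_congr hπa hπb _ had
      rw [hedge] at h
      exact h
    have e2 : TT n (ed c d hcd) f = TT n (ed b c hbc) f := by
      have h := TT_perm (Equiv.swap b d) (ed b c hbc) f
      rw [eperm_ed, hfix] at h
      have hedge : ed (Equiv.swap b d b) (Equiv.swap b d c)
          (fun hc => hbc ((Equiv.swap b d).injective hc)) = ed d c (Ne.symm hcd) :=
        ed_congr hπb hπc _ (Ne.symm hcd)
      rw [hedge, ed_swap d c (Ne.symm hcd)] at h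
      exact h
    have q1 : ¬((f : Sym2 (Fin n)) = s(a, b)) :=
      fun hh => h1 (hh ▸ Sym2.mem_mk_right a b)
    have q2 : ¬((f : Sym2 (Fin n)) = s(b, c)) :=
      fun hh => h1 (hh ▸ Sym2.mem_mk_left b c)
    have q3 : ¬((f : Sym2 (Fin n)) = s(c, d)) :=
      fun hh => h2 (hh ▸ Sym2.mem_mk_right c d)
    have q4 : ¬((f : Sym2 (Fin n)) = s(d, a)) :=
      fun hh => h2 (hh ▸ Sym2.mem_mk_left d a)
    have hq : quadCoef a b c d f = 0 := by simp [quadCoef, q1, q2, q3, q4]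
    rw [hq]
    have hsw : ed d a (Ne.symm had) = ed a d had := ed_swap d a (Ne.symm had)
    rw [hsw]
    linarith
  · -- a ∉ f, c ∉ f : swap a c
    have hπa : Equiv.swap a c a = c := Equiv.swap_apply_left a c
    have hπc : Equiv.swap a c c = a := Equiv.swap_apply_right a c
    have hπb : Equiv.swap a c b = b :=
      Equiv.swap_apply_of_ne_of_ne (Ne.symm hab) hbc
    have hπd : Equiv.swap a c d = d :=
      Equiv.swap_apply_of_ne_of_ne (Ne.symm had) (Ne.symm hcd)
    have hfix : eperm (Equiv.swap a c) f = f := eperm_fix f h1 h2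
    have e1 : TT n (ed b c hbc) f = TT n (ed a b hab) f := by
      have h := TT_perm (Equiv.swap a c) (ed a b hab) f
      rw [eperm_ed, hfix] at h
      have hedge : ed (Equiv.swap a c a) (Equiv.swap a c b)
          (fun hc => hab ((Equiv.swap a c).injective hc)) = ed c b (Ne.symm hbc) :=
        ed_congr hπa hπb _ (Ne.symm hbc)
      rw [hedge, ed_swap c b (Ne.symm hbc)] at h
      exact h
    have e2 : TT n (ed a d had) f = TT n (ed c d hcd) f := by
      have h := TT_perm (Equiv.swap a c) (ed c d hcd) f
      rw [eperm_ed, hfix] at h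
      have hedge : ed (Equiv.swap a c c) (Equiv.swap a c d)
          (fun hc => hcd ((Equiv.swap a c).injective hc)) = ed a d had :=
        ed_congr hπc hπd _ had
      rw [hedge] at h
      exact h
    have q1 : ¬((f : Sym2 (Fin n)) = s(a, b)) :=
      fun hh => h1 (hh ▸ Sym2.mem_mk_left a b)
    have q2 : ¬((f : Sym2 (Fin n)) = s(b, c)) :=
      fun hh => h2 (hh ▸ Sym2.mem_mk_right b c)
    have q3 : ¬((f : Sym2 (Fin n)) = s(c, d)) :=
      fun hh => h2 (hh ▸ Sym2.mem_mk_left c d)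
    have q4 : ¬((f : Sym2 (Fin n)) = s(d, a)) :=
      fun hh => h1 (hh ▸ Sym2.mem_mk_right d a)
    have hq : quadCoef a b c d f = 0 := by simp [quadCoef, q1, q2, q3, q4]
    rw [hq]
    have hsw : ed d a (Ne.symm had) = ed a d had := ed_swap d a (Ne.symm had)
    rw [hsw]
    linarith

/-- Collapsing a sum against `quadCoef`. -/
lemma quad_sum {a b c d : Fin n}
    (hab : a ≠ b) (hac : a ≠ c) (had : a ≠ d)
    (hbc : b ≠ c) (hbd : b ≠ d) (hcd : c ≠ d) (g : EdgeIdx n → ℝ) :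
    ∑ e : EdgeIdx n, quadCoef a b c d e * g e
      = g (ed a b hab) - g (ed b c hbc) + g (ed c d hcd) - g (ed d a (Ne.symm had)) := by
  have key : ∀ (p q : Fin n) (h : p ≠ q),
      ∑ e : EdgeIdx n, (if (e : Sym2 (Fin n)) = s(p, q) then (1:ℝ) else 0) * g e
        = g (ed p q h) := by
    intro p q h
    have hpt : ∀ e : EdgeIdx n,
        (if (e : Sym2 (Fin n)) = s(p, q) then (1:ℝ) else 0) * g e
          = if e = ed p q h then g e else 0 := by
      intro e
      by_cases hc : (e : Sym2 (Fin n)) = s(p, q)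
      · rw [if_pos hc, if_pos (Subtype.ext hc), one_mul]
      · rw [if_neg hc, if_neg (fun hh => hc (by rw [hh]; rfl)), zero_mul]
    rw [Finset.sum_congr rfl (fun e _ => hpt e),
      Finset.sum_ite_eq' Finset.univ (ed p q h) g, if_pos (Finset.mem_univ _)]
  have hpt2 : ∀ e : EdgeIdx n, quadCoef a b c d e * g e
      = (if (e : Sym2 (Fin n)) = s(a, b) then (1:ℝ) else 0) * g e
        - (if (e : Sym2 (Fin n)) = s(b, c) then (1:ℝ) else 0) * g e
        + (if (e : Sym2 (Fin n)) = s(c, d) then (1:ℝ) else 0) * g e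
        - (if (e : Sym2 (Fin n)) = s(d, a) then (1:ℝ) else 0) * g e := by
    intro e
    simp only [quadCoef]
    ring
  rw [Finset.sum_congr rfl (fun e _ => hpt2 e)]
  rw [Finset.sum_sub_distrib, Finset.sum_add_distrib, Finset.sum_sub_distrib]
  rw [key a b hab, key b c hbc, key c d hcd, key d a (Ne.symm had)]

end Aux4

/-- **eigenvector of `A_𝟙`.**  For `n ≥ 4` and distinct vertices
`a, b, c, d`, the degree-1 polynomial `u(x) = x_{ab} - x_{bc} + x_{cd} - x_{da}`
satisfies, for every degree-≤1 polynomial `w(x) = w₀ + Σ_e w_e x_e`,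
`(1/|X|) Σ_{x∈X} u(x) w(x) = (2/(n-1)) ⟨u, w⟩`, where `⟨u,w⟩` is the inner
product of coefficient vectors in the monomial basis `{1} ∪ {x_{pq}}`
(the constant coefficient of `u` being `0`).  Thus the coefficient vector of `u`
is an eigenvector of the matrix of `q_𝟙` with eigenvalue `2/(n-1)`. -/
theorem eigenvector_of_all_ones_form
    (n : ℕ) (hn : 4 ≤ n) (a b c d : Fin n)
    (hab : a ≠ b) (hac : a ≠ c) (had : a ≠ d)
    (hbc : b ≠ c) (hbd : b ≠ d) (hcd : c ≠ d)
    (w0 : ℝ) (w : EdgeIdx n → ℝ) :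
    ((hamX n).card : ℝ)⁻¹ * ∑ x ∈ hamX n,
        (∑ e : EdgeIdx n, quadCoef a b c d e * x e) *
          (w0 + ∑ e : EdgeIdx n, w e * x e)
      = (2 / ((n : ℝ) - 1)) * ∑ e : EdgeIdx n, quadCoef a b c d e * w e := by
  classical
  set e1 := ed a b hab
  set e2 := ed b c hbc
  set e3 := ed c d hcd
  set e4 := ed d a (Ne.symm had)
  have hsum : ∑ x ∈ hamX n,
        (∑ e : EdgeIdx n, quadCoef a b c d e * x e) * (w0 + ∑ e : EdgeIdx n, w e * x e)
      = SS n e1 * ∑ e : EdgeIdx n, quadCoef a b c d e * w e := by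
    have hx : ∀ x ∈ hamX n,
        (∑ e : EdgeIdx n, quadCoef a b c d e * x e) * (w0 + ∑ e : EdgeIdx n, w e * x e)
        = w0 * (x e1 - x e2 + x e3 - x e4)
          + ∑ f : EdgeIdx n, (w f * (x e1 * x f) - w f * (x e2 * x f)
              + w f * (x e3 * x f) - w f * (x e4 * x f)) := by
      intro x _
      rw [quad_sum hab hac had hbc hbd hcd x]
      rw [mul_add, Finset.mul_sum]
      congr 1
      · ring
      · exact Finset.sum_congr rfl fun f _ => by ring
    rw [Finset.sum_congr rfl hx, Finset.sum_add_distrib]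
    have hS : ∑ x ∈ hamX n, w0 * (x e1 - x e2 + x e3 - x e4)
        = w0 * (SS n e1 - SS n e2 + SS n e3 - SS n e4) := by
      rw [← Finset.mul_sum]
      congr 1
      rw [Finset.sum_sub_distrib, Finset.sum_add_distrib, Finset.sum_sub_distrib]
      rfl
    have hS0 : SS n e1 - SS n e2 + SS n e3 - SS n e4 = 0 := by
      have h2 : SS n e2 = SS n e1 := SS_congr hbc hab
      have h3 : SS n e3 = SS n e1 := SS_congr hcd hab
      have h4 : SS n e4 = SS n e1 := SS_congr (Ne.symm had) hab
      rw [h2, h3, h4]; ring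
    have hT : ∑ x ∈ hamX n, ∑ f : EdgeIdx n, (w f * (x e1 * x f) - w f * (x e2 * x f)
              + w f * (x e3 * x f) - w f * (x e4 * x f))
        = ∑ f : EdgeIdx n, w f * (TT n e1 f - TT n e2 f + TT n e3 f - TT n e4 f) := by
      rw [Finset.sum_comm]
      apply Finset.sum_congr rfl
      intro f _
      rw [Finset.sum_sub_distrib, Finset.sum_add_distrib, Finset.sum_sub_distrib,
        ← Finset.mul_sum, ← Finset.mul_sum, ← Finset.mul_sum, ← Finset.mul_sum]
      show w f * TT n e1 f - w f * TT n e2 f + w f * TT n e3 f - w f * TT n e4 f = _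
      ring
    rw [hS, hS0, mul_zero, zero_add, hT]
    rw [Finset.sum_congr rfl (fun f _ => by rw [Ueq hn hab hac had hbc hbd hcd f])]
    rw [Finset.mul_sum]
    exact Finset.sum_congr rfl fun f _ => by ring
  rw [hsum]
  have hSc := S_count hn hab
  have hcard : (0 : ℝ) < ((hamX n).card : ℝ) := by
    have hne : (hamX n).Nonempty := ⟨cycleVec n 1, mem_hamX.2 ⟨1, rfl⟩⟩
    exact_mod_cast Finset.Nonempty.card_pos hne
  have hn1 : (n : ℝ) - 1 ≠ 0 := by
    have : (4 : ℝ) ≤ (n : ℝ) := by exact_mod_cast hn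
    linarith
  have hcard' : ((hamX n).card : ℝ) ≠ 0 := ne_of_gt hcard
  have hSS : SS n e1 = 2 * ((hamX n).card : ℝ) / ((n : ℝ) - 1) := by
    field_simp
    linarith [hSc]
  rw [hSS]
  field_simp
end
end
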